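/- arXiv:2401.00836 — 4 statements merged into one kernel-verified Lean document; each statement's English description precedes it below -/
import Mathlib

section
/- For any integer M ≥ 2 and parameters (a,b) with 0 < a < 1/M and 0 < b < 1/M, the three-dimensional heterochaos baker map f_{a,b} : [0,1]³ → [0,1]³ preserves the three-dimensional Lebesgue measure if and only if a + b = 1/M. -/
open MeasureTheory

noncomputable def tauMap (M : ℕ) (a : ℝ) (x : ℝ) : ℝ :=
  if x < M * a then Int.fract (x / a) else (x - M * a) / (1 - M * a)

noncomputable def faMap (M : ℕ) (a : ℝ) (p : ℝ × ℝ) : ℝ × ℝ :=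
  if p.1 < M * a then
    (Int.fract (p.1 / a), p.2 / M + (⌊p.1 / a⌋ : ℝ) / M)
  else
    ((p.1 - M * a) / (1 - M * a), if p.2 = 1 then 1 else Int.fract (M * p.2))

/-- The three-dimensional heterochaos baker map `f_{a,b}` on `[0,1]³`:
on `Ω_{α_k}` (i.e. `x_u < Ma`) it is `(f_a(x_u,x_c), (1-Mb) x_s)`, and on
`Ω_{β_k}` (with `k-1 = ⌊M x_c⌋`, `k = M` when `x_c = 1`) it is
`(f_a(x_u,x_c), b x_s + 1 + b (k - M - 1))`. -/
noncomputable def fabMap (M : ℕ) (a b : ℝ) (p : ℝ × ℝ × ℝ) : ℝ × ℝ × ℝ :=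
  let q := faMap M a (p.1, p.2.1)
  if p.1 < M * a then
    (q.1, q.2, (1 - M * b) * p.2.2)
  else
    (q.1, q.2, b * p.2.2 + 1 +
      b * ((if p.2.1 = 1 then (M : ℝ) else (⌊(M : ℝ) * p.2.1⌋ : ℝ) + 1) - M - 1))


open Set
open scoped NNReal ENNReal


open MeasureTheory Set
open scoped NNReal ENNReal

lemma vol_preimage_affine (c d : ℝ) (hc : 0 < c) (s : Set ℝ) :
    volume ((fun x => c * x + d) ⁻¹' s) = ENNReal.ofReal c⁻¹ * volume s := by
  have hco : (fun x : ℝ => c * x + d) = (fun x : ℝ => c * x) ∘ (fun x : ℝ => x + d / c) := by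
    funext x
    show c * x + d = c * (x + d / c)
    field_simp
  rw [hco, Set.preimage_comp, measure_preimage_add_right,
    Real.volume_preimage_mul_left hc.ne' s, abs_of_pos (inv_pos.2 hc)]

lemma map_affine (c d : ℝ) (hc : 0 < c) :
    Measure.map (fun x => c * x + d) volume = ENNReal.ofReal c⁻¹ • volume := by
  ext s hs
  rw [Measure.map_apply (by fun_prop) hs, vol_preimage_affine c d hc,
    Measure.smul_apply, smul_eq_mul]

lemma sf_smul {α : Type*} [MeasurableSpace α] (μ : Measure α) [SigmaFinite μ] (r : ℝ) :
    SigmaFinite (ENNReal.ofReal r • μ) := by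
  have h : ENNReal.ofReal r • μ = (r.toNNReal : ℝ≥0) • μ := by
    rw [ENNReal.smul_def]; rfl
  rw [h]
  infer_instance

lemma prod_smul_smul {α β : Type*} [MeasurableSpace α] [MeasurableSpace β]
    (μ : Measure α) (ν : Measure β) [SigmaFinite μ] [SigmaFinite ν] (r s : ℝ) :
    (ENNReal.ofReal r • μ).prod (ENNReal.ofReal s • ν)
      = (ENNReal.ofReal r * ENNReal.ofReal s) • (μ.prod ν) := by
  haveI := sf_smul μ r
  haveI := sf_smul ν s
  refine Measure.prod_eq fun u v hu hv => ?_
  simp only [Measure.smul_apply, Measure.prod_prod, smul_eq_mul]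
  ring

lemma map_affine2 (c2 c3 d2 d3 : ℝ) (h2 : 0 < c2) (h3 : 0 < c3) :
    Measure.map (fun p : ℝ × ℝ => (c2 * p.1 + d2, c3 * p.2 + d3)) volume
      = (ENNReal.ofReal c2⁻¹ * ENNReal.ofReal c3⁻¹) • volume := by
  have he : (fun p : ℝ × ℝ => (c2 * p.1 + d2, c3 * p.2 + d3))
      = Prod.map (fun x => c2 * x + d2) (fun x => c3 * x + d3) := rfl
  rw [he, Measure.volume_eq_prod, ← Measure.map_prod_map _ _ (by fun_prop) (by fun_prop),
    map_affine _ _ h2, map_affine _ _ h3, prod_smul_smul, ← Measure.volume_eq_prod]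

lemma measurePreserving_affine3 (c1 c2 c3 d1 d2 d3 : ℝ)
    (h1 : 0 < c1) (h2 : 0 < c2) (h3 : 0 < c3) (h : c1 * c2 * c3 = 1) :
    MeasurePreserving (fun p : ℝ × ℝ × ℝ => (c1 * p.1 + d1, c2 * p.2.1 + d2, c3 * p.2.2 + d3))
      volume volume := by
  refine ⟨by fun_prop, ?_⟩
  have he : (fun p : ℝ × ℝ × ℝ => (c1 * p.1 + d1, c2 * p.2.1 + d2, c3 * p.2.2 + d3))
      = Prod.map (fun x => c1 * x + d1) (fun q : ℝ × ℝ => (c2 * q.1 + d2, c3 * q.2 + d3)) := rfl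
  haveI := sf_smul (volume : Measure (ℝ × ℝ)) (c2⁻¹ * c3⁻¹)
  rw [he, Measure.volume_eq_prod, ← Measure.map_prod_map _ _ (by fun_prop) (by fun_prop),
    map_affine _ _ h1, map_affine2 _ _ _ _ h2 h3,
    ← ENNReal.ofReal_mul (by positivity), prod_smul_smul,
    ← ENNReal.ofReal_mul (by positivity), ← Measure.volume_eq_prod]
  have : c1⁻¹ * (c2⁻¹ * c3⁻¹) = 1 := by
    field_simp
    linarith [h]
  rw [this, ENNReal.ofReal_one, one_smul]

lemma measurable_faMap (M : ℕ) (a : ℝ) : Measurable (faMap M a) := by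
  unfold faMap
  refine Measurable.ite (measurableSet_lt (by fun_prop) measurable_const) ?_ ?_
  · refine Measurable.prod ?_ ?_
    · exact (measurable_fst.div_const a).fract
    · exact Measurable.add (measurable_snd.div_const _)
        ((measurable_from_top.comp (measurable_fst.div_const a).floor).div_const _)
  · refine Measurable.prod (by fun_prop) ?_
    exact Measurable.ite (measurableSet_eq_fun measurable_snd measurable_const)
      measurable_const ((measurable_const.mul measurable_snd).fract)

lemma measurable_fabMap (M : ℕ) (a b : ℝ) : Measurable (fabMap M a b) := by
  have hfa : Measurable fun p : ℝ × ℝ × ℝ => faMap M a (p.1, p.2.1) :=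
    (measurable_faMap M a).comp (by fun_prop : Measurable fun p : ℝ × ℝ × ℝ => (p.1, p.2.1))
  unfold fabMap
  simp only
  refine Measurable.ite (measurableSet_lt (by fun_prop) measurable_const) ?_ ?_
  · exact (hfa.fst).prodMk ((hfa.snd).prodMk (by fun_prop))
  · refine (hfa.fst).prodMk ((hfa.snd).prodMk ?_)
    refine Measurable.add (Measurable.add (by fun_prop) measurable_const) ?_
    refine Measurable.const_mul ?_ b
    refine Measurable.sub (Measurable.sub ?_ measurable_const) measurable_const
    refine Measurable.ite (measurableSet_eq_fun measurable_snd.fst measurable_const)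
      measurable_const ?_
    exact (measurable_from_top.comp (measurable_const.mul measurable_snd.fst).floor).add measurable_const

lemma measure_inter_double_partition {α : Type*} [MeasurableSpace α] (μ : Measure α)
    (C : Set α) (n : ℕ) (A B : ℕ → Set α)
    (hA : ∀ k, MeasurableSet (A k)) (hB : ∀ k, MeasurableSet (B k))
    (hAd : Set.PairwiseDisjoint ↑(Finset.range n) A)
    (hBd : Set.PairwiseDisjoint ↑(Finset.range n) B)
    (hAB : ∀ k, k < n → ∀ l, l < n → Disjoint (A k) (B l))
    (hC : C = (⋃ k ∈ Finset.range n, A k) ∪ (⋃ k ∈ Finset.range n, B k))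
    (T : Set α) (hT : MeasurableSet T) :
    μ (T ∩ C) = ∑ k ∈ Finset.range n, μ (T ∩ A k) + ∑ k ∈ Finset.range n, μ (T ∩ B k) := by
  subst hC
  rw [Set.inter_union_distrib_left]
  rw [measure_union ?disj ?meas]
  · congr 1
    · rw [show T ∩ ⋃ k ∈ Finset.range n, A k = ⋃ k ∈ Finset.range n, T ∩ A k by
        simp [Set.inter_iUnion]]
      exact measure_biUnion_finset (hAd.mono fun k => Set.inter_subset_right)
        fun k _ => hT.inter (hA k)
    · rw [show T ∩ ⋃ k ∈ Finset.range n, B k = ⋃ k ∈ Finset.range n, T ∩ B k by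
        simp [Set.inter_iUnion]]
      exact measure_biUnion_finset (hBd.mono fun k => Set.inter_subset_right)
        fun k _ => hT.inter (hB k)
  case disj =>
    refine Disjoint.mono Set.inter_subset_right Set.inter_subset_right ?_
    simp only [Set.disjoint_iUnion_left, Set.disjoint_iUnion_right, Finset.mem_range]
    intro k hk l hl
    exact hAB l hl k hk
  case meas => exact hT.inter (MeasurableSet.biUnion (Finset.range n).countable_toSet
    fun k _ => hB k)

lemma exists_strip {c x : ℝ} (hc : 0 < c) {n : ℕ} (h0 : 0 ≤ x) (hn : x < n * c) :
    ∃ k < n, (k : ℝ) * c ≤ x ∧ x < ((k : ℝ) + 1) * c := by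
  have hx0 : 0 ≤ x / c := div_nonneg h0 hc.le
  have hfl0 : (0 : ℤ) ≤ ⌊x / c⌋ := Int.floor_nonneg.2 hx0
  refine ⟨⌊x / c⌋.toNat, ?_, ?_, ?_⟩
  · have h1 : x / c < n := by rwa [div_lt_iff₀ hc]
    have h2 : ⌊x / c⌋ < (n : ℤ) := Int.floor_lt.2 (by exact_mod_cast h1)
    omega
  · have h3 : ((⌊x / c⌋.toNat : ℝ)) ≤ x / c := by
      rw [show ((⌊x / c⌋.toNat : ℝ)) = ((⌊x / c⌋ : ℤ) : ℝ) by exact_mod_cast congrArg Int.cast (Int.toNat_of_nonneg hfl0)]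
      exact Int.floor_le (x / c)
    calc ((⌊x / c⌋.toNat : ℝ)) * c ≤ (x / c) * c := by nlinarith
    _ = x := by field_simp
  · have h4 : x / c < (⌊x / c⌋.toNat : ℝ) + 1 := by
      rw [show ((⌊x / c⌋.toNat : ℝ)) = ((⌊x / c⌋ : ℤ) : ℝ) by exact_mod_cast congrArg Int.cast (Int.toNat_of_nonneg hfl0)]
      exact Int.lt_floor_add_one (x / c)
    calc x = (x / c) * c := by field_simp
    _ < ((⌊x / c⌋.toNat : ℝ) + 1) * c := by nlinarith

lemma floor_eq_nat' {r : ℝ} {k : ℕ} (h1 : (k : ℝ) ≤ r) (h2 : r < (k : ℝ) + 1) :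
    (⌊r⌋ : ℝ) = (k : ℝ) ∧ Int.fract r = r - k := by
  have hf : ⌊r⌋ = (k : ℤ) := by
    rw [Int.floor_eq_iff]
    constructor <;> push_cast <;> assumption
  constructor
  · rw [hf]; push_cast; rfl
  · rw [Int.fract, hf]; push_cast; rfl

def PaSet (a : ℝ) (k : ℕ) : Set (ℝ × ℝ × ℝ) :=
  Ico ((k : ℝ) * a) (((k : ℝ) + 1) * a) ×ˢ Ico (0 : ℝ) 1 ×ˢ Ico (0 : ℝ) 1

def PbSet (M : ℕ) (a : ℝ) (k : ℕ) : Set (ℝ × ℝ × ℝ) :=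
  Ico ((M : ℝ) * a) 1 ×ˢ Ico ((k : ℝ) * (M : ℝ)⁻¹) (((k : ℝ) + 1) * (M : ℝ)⁻¹) ×ˢ Ico (0 : ℝ) 1

def QaSet (M : ℕ) (b : ℝ) (k : ℕ) : Set (ℝ × ℝ × ℝ) :=
  Ico (0 : ℝ) 1 ×ˢ Ico ((k : ℝ) * (M : ℝ)⁻¹) (((k : ℝ) + 1) * (M : ℝ)⁻¹) ×ˢ
    Ico (0 : ℝ) (1 - M * b)

def QbSet (M : ℕ) (b : ℝ) (k : ℕ) : Set (ℝ × ℝ × ℝ) :=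
  Ico (0 : ℝ) 1 ×ˢ Ico (0 : ℝ) 1 ×ˢ
    Ico ((1 - M * b) + (k : ℝ) * b) ((1 - M * b) + ((k : ℝ) + 1) * b)

noncomputable def gaMap (M : ℕ) (a b : ℝ) (k : ℕ) : ℝ × ℝ × ℝ → ℝ × ℝ × ℝ := fun p =>
  (a⁻¹ * p.1 + -(k : ℝ), (M : ℝ)⁻¹ * p.2.1 + (k : ℝ) * (M : ℝ)⁻¹,
    (1 - (M : ℝ) * b) * p.2.2 + 0)

noncomputable def gbMap (M : ℕ) (a b : ℝ) (k : ℕ) : ℝ × ℝ × ℝ → ℝ × ℝ × ℝ := fun p =>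
  ((1 - (M : ℝ) * a)⁻¹ * p.1 + -((M : ℝ) * a) * (1 - (M : ℝ) * a)⁻¹,
    (M : ℝ) * p.2.1 + -(k : ℝ), b * p.2.2 + (1 + b * ((k : ℝ) - (M : ℝ))))

section Pieces

variable {M : ℕ} {a b : ℝ} {k : ℕ}

lemma fab_eq_ga (hk : k < M) (ha0 : 0 < a) {p : ℝ × ℝ × ℝ} (hp : p ∈ PaSet a k) :
    fabMap M a b p = gaMap M a b k p := by
  obtain ⟨⟨hx1, hx2⟩, -⟩ := hp
  have hkM : ((k : ℝ) + 1) ≤ (M : ℝ) := by exact_mod_cast Nat.succ_le_of_lt hk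
  have hcond : p.1 < M * a := lt_of_lt_of_le hx2 (by nlinarith)
  have hr1 : (k : ℝ) ≤ p.1 / a := (le_div_iff₀ ha0).2 hx1
  have hr2 : p.1 / a < (k : ℝ) + 1 := (div_lt_iff₀ ha0).2 hx2
  obtain ⟨hfl, hfr⟩ := floor_eq_nat' hr1 hr2
  have hq : faMap M a (p.1, p.2.1) = (p.1 / a - (k : ℝ), p.2.1 / M + (k : ℝ) / M) := by
    show (if p.1 < M * a then _ else _) = _
    rw [if_pos hcond]
    rw [Prod.ext_iff]
    exact ⟨hfr, by rw [hfl]⟩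
  have hfab : fabMap M a b p
      = ((faMap M a (p.1, p.2.1)).1, (faMap M a (p.1, p.2.1)).2, (1 - M * b) * p.2.2) := by
    show (if p.1 < M * a then _ else _) = _
    rw [if_pos hcond]
  rw [hfab, hq, gaMap]
  refine Prod.ext ?_ (Prod.ext ?_ ?_) <;> simp <;> ring

lemma fab_eq_gb (hk : k < M) (hM0 : 0 < (M : ℝ)) {p : ℝ × ℝ × ℝ} (hp : p ∈ PbSet M a k) :
    fabMap M a b p = gbMap M a b k p := by
  obtain ⟨⟨hx1, hx2⟩, ⟨hy1, hy2⟩, -⟩ := hp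
  have hkM : ((k : ℝ) + 1) ≤ (M : ℝ) := by exact_mod_cast Nat.succ_le_of_lt hk
  have hcond : ¬ (p.1 < M * a) := not_lt.2 hx1
  have hylt : p.2.1 < 1 := by
    have h2 : ((k : ℝ) + 1) * (M : ℝ)⁻¹ ≤ 1 := by
      have h3 := mul_le_mul_of_nonneg_right hkM (inv_nonneg.2 hM0.le)
      rwa [mul_inv_cancel₀ hM0.ne'] at h3
    exact lt_of_lt_of_le hy2 h2
  have hy : p.2.1 ≠ 1 := ne_of_lt hylt
  have hr1 : (k : ℝ) ≤ (M : ℝ) * p.2.1 := by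
    have h4 := mul_le_mul_of_nonneg_left hy1 hM0.le
    calc (k : ℝ) = (M : ℝ) * ((k : ℝ) * (M : ℝ)⁻¹) := by field_simp
    _ ≤ (M : ℝ) * p.2.1 := h4
  have hr2 : (M : ℝ) * p.2.1 < (k : ℝ) + 1 := by
    have h5 := mul_lt_mul_of_pos_left hy2 hM0
    calc (M : ℝ) * p.2.1 < (M : ℝ) * (((k : ℝ) + 1) * (M : ℝ)⁻¹) := h5
    _ = (k : ℝ) + 1 := by field_simp
  obtain ⟨hfl, hfr⟩ := floor_eq_nat' hr1 hr2
  have hq : faMap M a (p.1, p.2.1)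
      = ((p.1 - M * a) / (1 - M * a), M * p.2.1 - (k : ℝ)) := by
    show (if p.1 < M * a then _ else _) = _
    rw [if_neg hcond]
    rw [Prod.ext_iff]
    exact ⟨rfl, by rw [if_neg hy]; exact hfr⟩
  have hfab : fabMap M a b p
      = ((faMap M a (p.1, p.2.1)).1, (faMap M a (p.1, p.2.1)).2, b * p.2.2 + 1 +
          b * ((if p.2.1 = 1 then (M : ℝ) else (⌊(M : ℝ) * p.2.1⌋ : ℝ) + 1) - M - 1)) := by
    show (if p.1 < M * a then _ else _) = _
    rw [if_neg hcond]
  rw [hfab, hq, if_neg hy, hfl, gbMap]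
  refine Prod.ext ?_ (Prod.ext ?_ ?_) <;> simp <;> ring


lemma mem_Ico_affine {c d x u v u' v' : ℝ} (hc : 0 < c)
    (hu : c * u + d = u') (hv : c * v + d = v') :
    c * x + d ∈ Ico u' v' ↔ x ∈ Ico u v := by
  subst hu hv
  simp only [mem_Ico, add_le_add_iff_right, add_lt_add_iff_right,
    mul_le_mul_iff_right₀ hc, mul_lt_mul_iff_right₀ hc]

lemma ga_preimage (ha0 : 0 < a) (hM0 : 0 < (M : ℝ)) (hb1 : M * b < 1) :
    gaMap M a b k ⁻¹' QaSet M b k = PaSet a k := by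
  ext p
  simp only [gaMap, QaSet, PaSet, mem_preimage, Set.mem_prod]
  exact and_congr
    (mem_Ico_affine (by positivity) (by field_simp; try ring) (by field_simp; try ring))
    (and_congr (mem_Ico_affine (by positivity) (by field_simp; try ring) (by field_simp; try ring))
      (mem_Ico_affine (by linarith) (by field_simp; try ring) (by field_simp; try ring)))

lemma gb_preimage (hM0 : 0 < (M : ℝ)) (ha1 : (M : ℝ) * a < 1) (hb0 : 0 < b) :
    gbMap M a b k ⁻¹' QbSet M b k = PbSet M a k := by
  have h1 : (0 : ℝ) < 1 - M * a := by linarith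
  ext p
  simp only [gbMap, QbSet, PbSet, mem_preimage, Set.mem_prod]
  exact and_congr
    (mem_Ico_affine (by positivity) (by field_simp; try ring) (by field_simp; try ring))
    (and_congr (mem_Ico_affine hM0 (by field_simp; try ring) (by field_simp; try ring))
      (mem_Ico_affine hb0 (by field_simp; try ring) (by field_simp; try ring)))


lemma disjoint_shift_strips (e c : ℝ) (hc : 0 < c) {k l : ℕ} (hkl : k ≠ l) :
    Disjoint (Ico (e + (k : ℝ) * c) (e + ((k : ℝ) + 1) * c))
      (Ico (e + (l : ℝ) * c) (e + ((l : ℝ) + 1) * c)) := by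
  rw [Set.Ico_disjoint_Ico]
  rcases hkl.lt_or_gt with h | h
  · have hkl' : (k : ℝ) + 1 ≤ (l : ℝ) := by exact_mod_cast Nat.succ_le_of_lt h
    exact le_trans (min_le_left _ _) (le_trans (by nlinarith) (le_max_right _ _))
  · have hkl' : (l : ℝ) + 1 ≤ (k : ℝ) := by exact_mod_cast Nat.succ_le_of_lt h
    exact le_trans (min_le_right _ _) (le_trans (by nlinarith) (le_max_left _ _))

lemma disjoint_strips (c : ℝ) (hc : 0 < c) {k l : ℕ} (hkl : k ≠ l) :
    Disjoint (Ico ((k : ℝ) * c) (((k : ℝ) + 1) * c))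
      (Ico ((l : ℝ) * c) (((l : ℝ) + 1) * c)) := by
  have h := disjoint_shift_strips 0 c hc hkl
  simpa using h

lemma disjoint_prod3_fst {s s' t t' u u' : Set ℝ} (h : Disjoint s s') :
    Disjoint (s ×ˢ t ×ˢ u) (s' ×ˢ t' ×ˢ u') := by
  rw [Set.disjoint_left]
  rintro p ⟨h1, -⟩ ⟨h2, -⟩
  exact Set.disjoint_left.1 h h1 h2

lemma disjoint_prod3_snd {s s' t t' u u' : Set ℝ} (h : Disjoint t t') :
    Disjoint (s ×ˢ t ×ˢ u) (s' ×ˢ t' ×ˢ u') := by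
  rw [Set.disjoint_left]
  rintro p ⟨-, h1, -⟩ ⟨-, h2, -⟩
  exact Set.disjoint_left.1 h h1 h2

lemma disjoint_prod3_trd {s s' t t' u u' : Set ℝ} (h : Disjoint u u') :
    Disjoint (s ×ˢ t ×ˢ u) (s' ×ˢ t' ×ˢ u') := by
  rw [Set.disjoint_left]
  rintro p ⟨-, -, h1⟩ ⟨-, -, h2⟩
  exact Set.disjoint_left.1 h h1 h2


lemma cover_P (ha0 : 0 < a) (ha1 : (M : ℝ) * a < 1) (hM0 : 0 < (M : ℝ)) :
    (Ico (0:ℝ) 1 ×ˢ Ico (0:ℝ) 1 ×ˢ Ico (0:ℝ) 1)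
      = (⋃ k ∈ Finset.range M, PaSet a k) ∪ (⋃ k ∈ Finset.range M, PbSet M a k) := by
  ext p
  simp only [Set.mem_union, Set.mem_iUnion, Finset.mem_range, exists_prop]
  constructor
  · rintro ⟨⟨hx0, hx1⟩, ⟨hy0, hy1⟩, hz0, hz1⟩
    by_cases hxa : p.1 < M * a
    · obtain ⟨k, hk, h1, h2⟩ := exists_strip ha0 hx0 hxa
      exact Or.inl ⟨k, hk, ⟨h1, h2⟩, ⟨hy0, hy1⟩, hz0, hz1⟩
    · have hy1' : p.2.1 < M * (M : ℝ)⁻¹ := by rw [mul_inv_cancel₀ hM0.ne']; exact hy1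
      obtain ⟨k, hk, h1, h2⟩ := exists_strip (inv_pos.2 hM0) hy0 hy1'
      exact Or.inr ⟨k, hk, ⟨not_lt.1 hxa, hx1⟩, ⟨h1, h2⟩, hz0, hz1⟩
  · rintro (⟨k, hk, ⟨hx1, hx2⟩, hy, hz⟩ | ⟨k, hk, ⟨hx1, hx2⟩, ⟨hy1, hy2⟩, hz⟩)
    · have hkM : ((k : ℝ) + 1) ≤ (M : ℝ) := by exact_mod_cast Nat.succ_le_of_lt hk
      exact ⟨⟨le_trans (by positivity) hx1, by nlinarith⟩, hy, hz⟩
    · have hkM : ((k : ℝ) + 1) ≤ (M : ℝ) := by exact_mod_cast Nat.succ_le_of_lt hk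
      have hMi : (0:ℝ) < (M : ℝ)⁻¹ := inv_pos.2 hM0
      refine ⟨⟨le_trans (by positivity) hx1, hx2⟩, ⟨le_trans (by positivity) hy1, ?_⟩, hz⟩
      have h2 : ((k : ℝ) + 1) * (M : ℝ)⁻¹ ≤ 1 := by
        have h3 := mul_le_mul_of_nonneg_right hkM hMi.le
        rwa [mul_inv_cancel₀ hM0.ne'] at h3
      linarith
lemma cover_Q (hb0 : 0 < b) (hb1 : (M : ℝ) * b < 1) (hM0 : 0 < (M : ℝ)) :
    (Ico (0:ℝ) 1 ×ˢ Ico (0:ℝ) 1 ×ˢ Ico (0:ℝ) 1)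
      = (⋃ k ∈ Finset.range M, QaSet M b k) ∪ (⋃ k ∈ Finset.range M, QbSet M b k) := by
  ext p
  simp only [Set.mem_union, Set.mem_iUnion, Finset.mem_range, exists_prop]
  constructor
  · rintro ⟨⟨hx0, hx1⟩, ⟨hy0, hy1⟩, hz0, hz1⟩
    by_cases hzb : p.2.2 < 1 - M * b
    · have hy1' : p.2.1 < M * (M : ℝ)⁻¹ := by rw [mul_inv_cancel₀ hM0.ne']; exact hy1
      obtain ⟨k, hk, h1, h2⟩ := exists_strip (inv_pos.2 hM0) hy0 hy1'
      exact Or.inl ⟨k, hk, ⟨hx0, hx1⟩, ⟨h1, h2⟩, hz0, hzb⟩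
    · have h0 : 0 ≤ p.2.2 - (1 - M * b) := by linarith [not_lt.1 hzb]
      have h1 : p.2.2 - (1 - M * b) < M * b := by linarith
      obtain ⟨k, hk, hk1, hk2⟩ := exists_strip hb0 h0 h1
      exact Or.inr ⟨k, hk, ⟨hx0, hx1⟩, ⟨hy0, hy1⟩, by linarith, by linarith⟩
  · rintro (⟨k, hk, hx, ⟨hy1, hy2⟩, hz1, hz2⟩ | ⟨k, hk, hx, hy, hz1, hz2⟩)
    · have hkM : ((k : ℝ) + 1) ≤ (M : ℝ) := by exact_mod_cast Nat.succ_le_of_lt hk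
      have hMi : (0:ℝ) < (M : ℝ)⁻¹ := inv_pos.2 hM0
      have h2 : ((k : ℝ) + 1) * (M : ℝ)⁻¹ ≤ 1 := by
        have h3 := mul_le_mul_of_nonneg_right hkM hMi.le
        rwa [mul_inv_cancel₀ hM0.ne'] at h3
      have hMb : (0:ℝ) < (M : ℝ) * b := by positivity
      exact ⟨hx, ⟨le_trans (by positivity) hy1, by linarith⟩, hz1, by linarith⟩
    · have hkM : ((k : ℝ) + 1) ≤ (M : ℝ) := by exact_mod_cast Nat.succ_le_of_lt hk
      refine ⟨hx, hy, ?_, ?_⟩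
      · have : (0:ℝ) ≤ (k : ℝ) * b := by positivity
        linarith
      · have : ((k : ℝ) + 1) * b ≤ (M : ℝ) * b := by nlinarith
        linarith

end Pieces





lemma fabMap_def (M : ℕ) (a b : ℝ) (p : ℝ × ℝ × ℝ) :
    fabMap M a b p =
      if p.1 < M * a then
        ((faMap M a (p.1, p.2.1)).1, (faMap M a (p.1, p.2.1)).2, (1 - M * b) * p.2.2)
      else
        ((faMap M a (p.1, p.2.1)).1, (faMap M a (p.1, p.2.1)).2, b * p.2.2 + 1 +
          b * ((if p.2.1 = 1 then (M : ℝ) else (⌊(M : ℝ) * p.2.1⌋ : ℝ) + 1) - M - 1)) := rfl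

lemma zimg_mem {M : ℕ} {a b : ℝ} (hb0 : 0 < b) (_hb1 : (M : ℝ) * b < 1) (hM1 : 1 ≤ (M : ℝ))
    {p : ℝ × ℝ × ℝ} (hxa : ¬ p.1 < M * a) (hy0 : 0 ≤ p.2.1) (hy1 : p.2.1 ≤ 1)
    (hz0 : 0 ≤ p.2.2) (hz1 : p.2.2 ≤ 1) :
    (fabMap M a b p).2.2 ∈ Icc (1 - M * b) 1 := by
  rw [fabMap_def, if_neg hxa]
  simp only
  by_cases hy : p.2.1 = 1
  · rw [if_pos hy]
    constructor <;> nlinarith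
  · rw [if_neg hy]
    have hylt : p.2.1 < 1 := lt_of_le_of_ne hy1 hy
    have hf0 : (0 : ℝ) ≤ ((⌊(M : ℝ) * p.2.1⌋ : ℤ) : ℝ) := by
      exact_mod_cast Int.floor_nonneg.2 (by positivity)
    have hfM : ((⌊(M : ℝ) * p.2.1⌋ : ℤ) : ℝ) ≤ (M : ℝ) - 1 := by
      have h1 : ⌊(M : ℝ) * p.2.1⌋ < (M : ℤ) := Int.floor_lt.2 (by push_cast; nlinarith)
      have h3 : ((⌊(M : ℝ) * p.2.1⌋ : ℤ) : ℝ) + 1 ≤ (M : ℝ) := by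
        exact_mod_cast Int.add_one_le_iff.2 h1
      linarith
    constructor <;> nlinarith

lemma fab_forward (M : ℕ) (a b : ℝ) (ha0 : 0 < a) (hb0 : 0 < b) (hM0 : 0 < (M : ℝ))
    (hab : (M : ℝ) * a + (M : ℝ) * b = 1) :
    MeasurePreserving (fabMap M a b)
      (volume.restrict (Set.Icc (0 : ℝ) 1 ×ˢ Set.Icc (0 : ℝ) 1 ×ˢ Set.Icc (0 : ℝ) 1))
      (volume.restrict (Set.Icc (0 : ℝ) 1 ×ˢ Set.Icc (0 : ℝ) 1 ×ˢ Set.Icc (0 : ℝ) 1)) := by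
  have ha1 : (M : ℝ) * a < 1 := by nlinarith
  have hb1 : (M : ℝ) * b < 1 := by nlinarith
  have mpga : ∀ k : ℕ, MeasurePreserving (gaMap M a b k) volume volume := by
    intro k
    exact measurePreserving_affine3 a⁻¹ (M : ℝ)⁻¹ (1 - M * b) (-(k : ℝ)) ((k : ℝ) * (M : ℝ)⁻¹) 0
      (inv_pos.2 ha0) (inv_pos.2 hM0) (by linarith) (by field_simp; linarith)
  have h1a : (0:ℝ) < 1 - M * a := by linarith
  have h1a' : (1 - (M:ℝ) * a) ≠ 0 := ne_of_gt h1a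
  have mpgb : ∀ k : ℕ, MeasurePreserving (gbMap M a b k) volume volume := by
    intro k
    exact measurePreserving_affine3 (1 - (M : ℝ) * a)⁻¹ (M : ℝ) b
      (-((M : ℝ) * a) * (1 - (M : ℝ) * a)⁻¹) (-(k : ℝ)) (1 + b * ((k : ℝ) - (M : ℝ)))
      (inv_pos.2 h1a) hM0 hb0 (by field_simp; linarith)
  have hPam : ∀ k, MeasurableSet (PaSet a k) := fun k =>
    measurableSet_Ico.prod (measurableSet_Ico.prod measurableSet_Ico)
  have hPbm : ∀ k, MeasurableSet (PbSet M a k) := fun k =>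
    measurableSet_Ico.prod (measurableSet_Ico.prod measurableSet_Ico)
  have hQam : ∀ k, MeasurableSet (QaSet M b k) := fun k =>
    measurableSet_Ico.prod (measurableSet_Ico.prod measurableSet_Ico)
  have hQbm : ∀ k, MeasurableSet (QbSet M b k) := fun k =>
    measurableSet_Ico.prod (measurableSet_Ico.prod measurableSet_Ico)
  have hPad : Set.PairwiseDisjoint ↑(Finset.range M) (PaSet a) := by
    intro k _ l _ hkl
    exact disjoint_prod3_fst (disjoint_strips a ha0 hkl)
  have hPbd : Set.PairwiseDisjoint ↑(Finset.range M) (PbSet M a) := by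
    intro k _ l _ hkl
    exact disjoint_prod3_snd (disjoint_strips (M : ℝ)⁻¹ (inv_pos.2 hM0) hkl)
  have hQad : Set.PairwiseDisjoint ↑(Finset.range M) (QaSet M b) := by
    intro k _ l _ hkl
    exact disjoint_prod3_snd (disjoint_strips (M : ℝ)⁻¹ (inv_pos.2 hM0) hkl)
  have hQbd : Set.PairwiseDisjoint ↑(Finset.range M) (QbSet M b) := by
    intro k _ l _ hkl
    exact disjoint_prod3_trd (disjoint_shift_strips (1 - M * b) b hb0 hkl)
  have hPab : ∀ k, k < M → ∀ l, l < M → Disjoint (PaSet a k) (PbSet M a l) := by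
    intro k hk l _
    have hkM : ((k : ℝ) + 1) ≤ (M : ℝ) := by exact_mod_cast Nat.succ_le_of_lt hk
    refine disjoint_prod3_fst ?_
    rw [Set.Ico_disjoint_Ico]
    exact le_trans (min_le_left _ _) (le_trans (by nlinarith) (le_max_right _ _))
  have hQab : ∀ k, k < M → ∀ l, l < M → Disjoint (QaSet M b k) (QbSet M b l) := by
    intro k _ l _
    refine disjoint_prod3_trd ?_
    rw [Set.Ico_disjoint_Ico]
    refine le_trans (min_le_left _ _) (le_trans ?_ (le_max_right _ _))
    have : (0:ℝ) ≤ (l : ℝ) * b := by positivity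
    linarith
  -- a.e. identification of the closed and half-open cubes
  have hsub : (Set.Icc (0:ℝ) 1 ×ˢ Set.Icc (0:ℝ) 1 ×ˢ Set.Icc (0:ℝ) 1)
      \ (Ico (0:ℝ) 1 ×ˢ Ico (0:ℝ) 1 ×ˢ Ico (0:ℝ) 1) ⊆
      (({(1:ℝ)} : Set ℝ) ×ˢ (univ : Set (ℝ × ℝ))) ∪
        ((univ : Set ℝ) ×ˢ ({(1:ℝ)} : Set ℝ) ×ˢ (univ : Set ℝ)) ∪
        ((univ : Set ℝ) ×ˢ (univ : Set ℝ) ×ˢ ({(1:ℝ)} : Set ℝ)) := by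
    rintro p ⟨⟨⟨hx0, hx1⟩, ⟨hy0, hy1⟩, hz0, hz1⟩, hn⟩
    by_cases e1 : p.1 = 1
    · exact Or.inl (Or.inl ⟨e1, trivial⟩)
    by_cases e2 : p.2.1 = 1
    · exact Or.inl (Or.inr ⟨trivial, e2, trivial⟩)
    by_cases e3 : p.2.2 = 1
    · exact Or.inr ⟨trivial, trivial, e3⟩
    exact absurd ⟨⟨hx0, lt_of_le_of_ne hx1 e1⟩, ⟨hy0, lt_of_le_of_ne hy1 e2⟩,
      hz0, lt_of_le_of_ne hz1 e3⟩ hn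
  have hplanes : volume ((({(1:ℝ)} : Set ℝ) ×ˢ (univ : Set (ℝ × ℝ))) ∪
        ((univ : Set ℝ) ×ˢ ({(1:ℝ)} : Set ℝ) ×ˢ (univ : Set ℝ)) ∪
        ((univ : Set ℝ) ×ˢ (univ : Set ℝ) ×ˢ ({(1:ℝ)} : Set ℝ))) = 0 := by
    have hp1 : volume (({(1:ℝ)} : Set ℝ) ×ˢ (univ : Set (ℝ × ℝ))) = 0 := by
      rw [Measure.volume_eq_prod, Measure.prod_prod, Real.volume_singleton, zero_mul]
    have hp2 : volume ((univ : Set ℝ) ×ˢ ({(1:ℝ)} : Set ℝ) ×ˢ (univ : Set ℝ)) = 0 := by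
      rw [Measure.volume_eq_prod, Measure.prod_prod, Measure.volume_eq_prod,
        Measure.prod_prod, Real.volume_singleton, zero_mul, mul_zero]
    have hp3 : volume ((univ : Set ℝ) ×ˢ (univ : Set ℝ) ×ˢ ({(1:ℝ)} : Set ℝ)) = 0 := by
      rw [Measure.volume_eq_prod, Measure.prod_prod, Measure.volume_eq_prod,
        Measure.prod_prod, Real.volume_singleton, mul_zero, mul_zero]
    exact measure_union_null (measure_union_null hp1 hp2) hp3
  have hae : (Set.Icc (0:ℝ) 1 ×ˢ Set.Icc (0:ℝ) 1 ×ˢ Set.Icc (0:ℝ) 1)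
      =ᵐ[volume] (Ico (0:ℝ) 1 ×ˢ Ico (0:ℝ) 1 ×ˢ Ico (0:ℝ) 1) := by
    rw [MeasureTheory.ae_eq_set]
    constructor
    · exact measure_mono_null hsub hplanes
    · have he : (Ico (0:ℝ) 1 ×ˢ Ico (0:ℝ) 1 ×ˢ Ico (0:ℝ) 1)
          \ (Set.Icc (0:ℝ) 1 ×ˢ Set.Icc (0:ℝ) 1 ×ˢ Set.Icc (0:ℝ) 1) = ∅ := by
        rw [Set.diff_eq_empty]
        exact Set.prod_mono Ico_subset_Icc_self
          (Set.prod_mono Ico_subset_Icc_self Ico_subset_Icc_self)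
      rw [he]
      simp
  refine ⟨measurable_fabMap M a b, ?_⟩
  rw [Measure.restrict_congr_set hae]
  refine Measure.ext fun s hs => ?_
  rw [Measure.map_apply (measurable_fabMap M a b) hs,
    Measure.restrict_apply (measurable_fabMap M a b hs), Measure.restrict_apply hs]
  rw [measure_inter_double_partition volume _ M (PaSet a) (PbSet M a) hPam hPbm hPad hPbd
      hPab (cover_P ha0 ha1 hM0) _ (measurable_fabMap M a b hs),
    measure_inter_double_partition volume _ M (QaSet M b) (QbSet M b) hQam hQbm hQad hQbd
      hQab (cover_Q hb0 hb1 hM0) s hs]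
  congr 1
  · refine Finset.sum_congr rfl fun k hk => ?_
    replace hk := Finset.mem_range.1 hk
    have hset : fabMap M a b ⁻¹' s ∩ PaSet a k = gaMap M a b k ⁻¹' (s ∩ QaSet M b k) := by
      rw [Set.preimage_inter, ga_preimage ha0 hM0 hb1]
      ext p
      simp only [Set.mem_inter_iff, Set.mem_preimage]
      constructor
      · rintro ⟨h1, h2⟩
        exact ⟨by rwa [← fab_eq_ga hk ha0 h2], h2⟩
      · rintro ⟨h1, h2⟩
        exact ⟨by rwa [fab_eq_ga hk ha0 h2], h2⟩
    rw [hset, (mpga k).measure_preimage ((hs.inter (hQam k)).nullMeasurableSet)]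
  · refine Finset.sum_congr rfl fun k hk => ?_
    replace hk := Finset.mem_range.1 hk
    have hset : fabMap M a b ⁻¹' s ∩ PbSet M a k = gbMap M a b k ⁻¹' (s ∩ QbSet M b k) := by
      rw [Set.preimage_inter, gb_preimage hM0 ha1 hb0]
      ext p
      simp only [Set.mem_inter_iff, Set.mem_preimage]
      constructor
      · rintro ⟨h1, h2⟩
        exact ⟨by rwa [← fab_eq_gb hk hM0 h2], h2⟩
      · rintro ⟨h1, h2⟩
        exact ⟨by rwa [fab_eq_gb hk hM0 h2], h2⟩
    rw [hset, (mpgb k).measure_preimage ((hs.inter (hQbm k)).nullMeasurableSet)]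

lemma fab_backward (M : ℕ) (a b : ℝ) (hM : 2 ≤ M) (ha0 : 0 < a) (hb0 : 0 < b)
    (hM0 : 0 < (M : ℝ)) (ha1 : (M : ℝ) * a < 1) (hb1 : (M : ℝ) * b < 1)
    (h : MeasurePreserving (fabMap M a b)
      (volume.restrict (Set.Icc (0 : ℝ) 1 ×ˢ Set.Icc (0 : ℝ) 1 ×ˢ Set.Icc (0 : ℝ) 1))
      (volume.restrict (Set.Icc (0 : ℝ) 1 ×ˢ Set.Icc (0 : ℝ) 1 ×ˢ Set.Icc (0 : ℝ) 1))) :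
    a + b = 1 / M := by
  have hM1 : (1 : ℝ) ≤ (M : ℝ) := by exact_mod_cast Nat.one_le_of_lt hM
  set s : Set (ℝ × ℝ × ℝ) := (univ : Set ℝ) ×ˢ (univ : Set ℝ) ×ˢ Set.Icc (1 - M * b) 1
    with hsdef
  have hsm : MeasurableSet s := MeasurableSet.univ.prod
    (MeasurableSet.univ.prod measurableSet_Icc)
  have hpre := h.measure_preimage hsm.nullMeasurableSet
  rw [Measure.restrict_apply (measurable_fabMap M a b hsm), Measure.restrict_apply hsm] at hpre
  have hright : s ∩ (Set.Icc (0:ℝ) 1 ×ˢ Set.Icc (0:ℝ) 1 ×ˢ Set.Icc (0:ℝ) 1)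
      = Set.Icc (0:ℝ) 1 ×ˢ Set.Icc (0:ℝ) 1 ×ˢ Set.Icc (1 - M * b) 1 := by
    ext p
    constructor
    · rintro ⟨⟨-, -, hz1, hz2⟩, ⟨hx1, hx2⟩, ⟨hy1, hy2⟩, -, -⟩
      exact ⟨⟨hx1, hx2⟩, ⟨hy1, hy2⟩, hz1, hz2⟩
    · rintro ⟨⟨hx1, hx2⟩, ⟨hy1, hy2⟩, hz1, hz2⟩
      exact ⟨⟨trivial, trivial, hz1, hz2⟩, ⟨hx1, hx2⟩, ⟨hy1, hy2⟩, by linarith, hz2⟩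
  have hleft : fabMap M a b ⁻¹' s ∩ (Set.Icc (0:ℝ) 1 ×ˢ Set.Icc (0:ℝ) 1 ×ˢ Set.Icc (0:ℝ) 1)
      = (Set.Icc ((M:ℝ)*a) 1 ×ˢ Set.Icc (0:ℝ) 1 ×ˢ Set.Icc (0:ℝ) 1)
        ∪ (Set.Ico (0:ℝ) ((M:ℝ)*a) ×ˢ Set.Icc (0:ℝ) 1 ×ˢ ({(1:ℝ)} : Set ℝ)) := by
    ext p
    constructor
    · rintro ⟨hps, ⟨hx1, hx2⟩, ⟨hy1, hy2⟩, hz1, hz2⟩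
      obtain ⟨-, -, hzc1, hzc2⟩ := hps
      by_cases hxa : p.1 < M * a
      · have hzi : (fabMap M a b p).2.2 = (1 - M * b) * p.2.2 := by
          rw [fabMap_def, if_pos hxa]
        rw [hzi] at hzc1
        have hzeq : p.2.2 = 1 := le_antisymm hz2 (by nlinarith)
        exact Or.inr ⟨⟨hx1, hxa⟩, ⟨hy1, hy2⟩, hzeq⟩
      · exact Or.inl ⟨⟨not_lt.1 hxa, hx2⟩, ⟨hy1, hy2⟩, hz1, hz2⟩
    · rintro (⟨⟨hx1, hx2⟩, ⟨hy1, hy2⟩, hz1, hz2⟩ | ⟨⟨hx1, hx2⟩, ⟨hy1, hy2⟩, hz⟩)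
      · have hxa : ¬ p.1 < M * a := not_lt.2 hx1
        have hmem := zimg_mem (a := a) hb0 hb1 hM1 hxa hy1 hy2 hz1 hz2
        exact ⟨⟨trivial, trivial, hmem.1, hmem.2⟩,
          ⟨le_trans (by positivity) hx1, hx2⟩, ⟨hy1, hy2⟩, hz1, hz2⟩
      · have hz1' : p.2.2 = 1 := hz
        have hzi : (fabMap M a b p).2.2 = (1 - M * b) * p.2.2 := by
          rw [fabMap_def, if_pos hx2]
        refine ⟨⟨trivial, trivial, ?_, ?_⟩, ⟨hx1, by linarith⟩, ⟨hy1, hy2⟩,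
          by rw [hz1']; norm_num, by rw [hz1']⟩
        · rw [hzi, hz1', mul_one]
        · rw [hzi, hz1', mul_one]; nlinarith
  rw [hleft, hright] at hpre
  have hE : volume (Set.Ico (0:ℝ) ((M:ℝ)*a) ×ˢ Set.Icc (0:ℝ) 1 ×ˢ ({(1:ℝ)} : Set ℝ)) = 0 := by
    rw [Measure.volume_eq_prod, Measure.prod_prod, Measure.volume_eq_prod,
      Measure.prod_prod, Real.volume_singleton, mul_zero, mul_zero]
  have hlv : volume ((Set.Icc ((M:ℝ)*a) 1 ×ˢ Set.Icc (0:ℝ) 1 ×ˢ Set.Icc (0:ℝ) 1)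
      ∪ (Set.Ico (0:ℝ) ((M:ℝ)*a) ×ˢ Set.Icc (0:ℝ) 1 ×ˢ ({(1:ℝ)} : Set ℝ)))
      = volume (Set.Icc ((M:ℝ)*a) 1 ×ˢ Set.Icc (0:ℝ) 1 ×ˢ Set.Icc (0:ℝ) 1) := by
    refine le_antisymm ?_ (measure_mono Set.subset_union_left)
    calc volume _ ≤ volume (Set.Icc ((M:ℝ)*a) 1 ×ˢ Set.Icc (0:ℝ) 1 ×ˢ Set.Icc (0:ℝ) 1)
        + volume (Set.Ico (0:ℝ) ((M:ℝ)*a) ×ˢ Set.Icc (0:ℝ) 1 ×ˢ ({(1:ℝ)} : Set ℝ)) :=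
      measure_union_le _ _
    _ = _ := by rw [hE, add_zero]
  rw [hlv] at hpre
  have hv1 : volume (Set.Icc ((M:ℝ)*a) 1 ×ˢ Set.Icc (0:ℝ) 1 ×ˢ Set.Icc (0:ℝ) 1)
      = ENNReal.ofReal (1 - M * a) := by
    rw [Measure.volume_eq_prod, Measure.prod_prod, Measure.volume_eq_prod,
      Measure.prod_prod, Real.volume_Icc, Real.volume_Icc]
    norm_num
  have hv2 : volume (Set.Icc (0:ℝ) 1 ×ˢ Set.Icc (0:ℝ) 1 ×ˢ Set.Icc (1 - M * b) 1)
      = ENNReal.ofReal (M * b) := by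
    rw [Measure.volume_eq_prod, Measure.prod_prod, Measure.volume_eq_prod,
      Measure.prod_prod, Real.volume_Icc, Real.volume_Icc]
    norm_num
  rw [hv1, hv2] at hpre
  have hreal : 1 - (M:ℝ) * a = (M:ℝ) * b :=
    (ENNReal.ofReal_eq_ofReal_iff (by linarith) (by positivity)).1 hpre
  rw [eq_div_iff hM0.ne']
  linarith

/-- for any integer `M ≥ 2` and `(a,b) ∈ (0,1/M)²`, the three-dimensional
heterochaos baker map `f_{a,b}` preserves Lebesgue measure on `[0,1]³` iff `a + b = 1/M`. -/
theorem fabMap_measurePreserving_iff (M : ℕ) (hM : 2 ≤ M) (a b : ℝ)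
    (ha : a ∈ Set.Ioo (0 : ℝ) (1 / M)) (hb : b ∈ Set.Ioo (0 : ℝ) (1 / M)) :
    MeasurePreserving (fabMap M a b)
      (volume.restrict (Set.Icc (0 : ℝ) 1 ×ˢ Set.Icc (0 : ℝ) 1 ×ˢ Set.Icc (0 : ℝ) 1))
      (volume.restrict (Set.Icc (0 : ℝ) 1 ×ˢ Set.Icc (0 : ℝ) 1 ×ˢ Set.Icc (0 : ℝ) 1))
      ↔ a + b = 1 / M := by
  obtain ⟨ha0, haM⟩ := ha
  obtain ⟨hb0, hbM⟩ := hb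
  have hM0 : (0 : ℝ) < (M : ℝ) := by exact_mod_cast Nat.pos_of_ne_zero (by omega)
  have ha1 : (M : ℝ) * a < 1 := by rw [mul_comm]; exact (lt_div_iff₀ hM0).1 haM
  have hb1 : (M : ℝ) * b < 1 := by rw [mul_comm]; exact (lt_div_iff₀ hM0).1 hbM
  constructor
  · exact fab_backward M a b hM ha0 hb0 hM0 ha1 hb1
  · intro hab
    have hab' : (M : ℝ) * a + (M : ℝ) * b = 1 := by
      have h2 := (eq_div_iff hM0.ne').1 hab
      linarith [h2]
    exact fab_forward M a b ha0 hb0 hM0 hab'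
end

section
/- Let σ be the shift on the two-sided Dyck shift Σ_D on 2M symbols. If ν is an ergodic shift-invariant Borel probability measure on Σ_D, then exactly one of the following holds: ν(A_0) = 1, ν(A_α) = 1, or ν(A_β) = 1, where A_0, A_α, A_β are the three pairwise disjoint shift-invariant Borel sets defined via the height functions H_i. -/
open MeasureTheory Filter

/-- Alphabet of `2M` symbols: `Sum.inl k` is the left bracket `α_{k+1}`,
`Sum.inr k` is the right bracket `β_{k+1}`. -/
abbrev DyckAlphabet (M : ℕ) := Fin M ⊕ Fin M

/-- Stack-based legality check for a word of brackets: processing left to right,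
left brackets are pushed; a right bracket either matches the top left bracket, or is
read with an empty stack (an unmatched right bracket, which is legal). The word reduces
to `0` in the Dyck monoid iff this returns `false`. -/
def dyckValid (M : ℕ) : List (DyckAlphabet M) → List (Fin M) → Bool
  | [], _ => true
  | (Sum.inl i) :: rest, st => dyckValid M rest (i :: st)
  | (Sum.inr j) :: rest, st =>
    match st with
    | [] => dyckValid M rest []
    | i :: s => if i = j then dyckValid M rest s else false

/-- The finite subword `ω_j ω_{j+1} ⋯ ω_{j+n-1}` of a two-sided sequence. -/
def dyckWord (M : ℕ) (ω : ℤ → DyckAlphabet M) (j : ℤ) (n : ℕ) : List (DyckAlphabet M) :=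
  (List.range n).map fun t => ω (j + t)

/-- The two-sided Dyck shift `Σ_D`: all bi-infinite sequences every finite subword of
which reduces to a nonzero element of the Dyck monoid. -/
def SigmaD (M : ℕ) : Set (ℤ → DyckAlphabet M) :=
  {ω | ∀ (j : ℤ) (n : ℕ), dyckValid M (dyckWord M ω j n) [] = true}

/-- `+1` on left brackets `α_k`, `-1` on right brackets `β_k`. -/
def dyckSgn (M : ℕ) : DyckAlphabet M → ℤ
  | Sum.inl _ => 1
  | Sum.inr _ => -1

/-- The height functions `H_i`. -/
def Hfun (M : ℕ) (ω : ℤ → DyckAlphabet M) (i : ℤ) : ℤ :=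
  if 0 ≤ i then ∑ j ∈ Finset.range i.toNat, dyckSgn M (ω j)
  else -∑ j ∈ Finset.range (-i).toNat, dyckSgn M (ω (i + j))

/-- The set `A_0`. -/
def Azero (M : ℕ) : Set (ℤ → DyckAlphabet M) :=
  ⋂ i : ℤ,
    ((⋃ j : ℕ, {ω | Hfun M ω (i + (j + 1)) = Hfun M ω i}) ∩
      (⋃ j : ℕ, {ω | Hfun M ω (i - (j + 1)) = Hfun M ω i}))

/-- The set `A_α`: `H_i → ∞` as `i → ∞` and `H_i → -∞` as `i → -∞`. -/
def Aalpha (M : ℕ) : Set (ℤ → DyckAlphabet M) :=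
  {ω | Tendsto (fun i : ℤ => Hfun M ω i) atTop atTop ∧
       Tendsto (fun i : ℤ => Hfun M ω i) atBot atBot}

/-- The set `A_β`: `H_i → -∞` as `i → ∞` and `H_i → ∞` as `i → -∞`. -/
def Abeta (M : ℕ) : Set (ℤ → DyckAlphabet M) :=
  {ω | Tendsto (fun i : ℤ => Hfun M ω i) atTop atBot ∧
       Tendsto (fun i : ℤ => Hfun M ω i) atBot atTop}

/-- The left shift on two-sided sequences. -/
def dyckShift {α : Type*} (ω : ℤ → α) : ℤ → α := fun i => ω (i + 1)

set_option linter.unusedSectionVars false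
set_option maxHeartbeats 1000000
open Topology



namespace DyckAux

open scoped Classical

/-- running minimum of a walk -/
def mW (g : ℕ → ℤ) : ℕ → ℤ
  | 0 => g 0
  | N+1 => min (mW g N) (g (N+1))

lemma mW_le (g : ℕ → ℤ) : ∀ {N j : ℕ}, j ≤ N → mW g N ≤ g j := by
  intro N
  induction N with
  | zero => intro j hj; interval_cases j; simp [mW]
  | succ N ih =>
    intro j hj
    rcases Nat.lt_succ_iff_lt_or_eq.1 (Nat.lt_succ_of_le hj) with h | h
    · exact le_trans (min_le_left _ _) (ih (by omega))
    · subst h; exact min_le_right _ _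

lemma mW_le_self (g : ℕ → ℤ) (N : ℕ) : mW g N ≤ g N := mW_le g le_rfl

lemma mW_mem (g : ℕ → ℤ) : ∀ N, ∃ j ≤ N, g j = mW g N := by
  intro N
  induction N with
  | zero => exact ⟨0, le_rfl, rfl⟩
  | succ N ihN =>
    rcases ihN with ⟨j, hj, hje⟩
    by_cases hc : mW g N ≤ g (N+1)
    · exact ⟨j, by omega, by rw [hje]; simp [mW]; omega⟩
    · exact ⟨N+1, le_rfl, by simp [mW]; omega⟩

/-- set of indices `i < N` whose level is a strict minimum of everything strictly to the right
up to `N` -/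
noncomputable def FSet (g : ℕ → ℤ) (N : ℕ) : Finset ℕ :=
  (Finset.range N).filter (fun i => ∀ j ∈ Finset.Icc (i+1) N, g i < g j)

/-- set of strict-minimum-record times in `[1, N]` -/
noncomputable def RSet (g : ℕ → ℤ) (N : ℕ) : Finset ℕ :=
  (Finset.Icc 1 N).filter (fun k => ∀ j ∈ Finset.range k, g k < g j)

variable {g : ℕ → ℤ} (hg : ∀ n, g (n+1) = g n + 1 ∨ g (n+1) = g n - 1)

include hg

lemma FSet_image : ∀ N, (FSet g N).image g = Finset.Ico (mW g N) (g N) := by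
  intro N
  induction N with
  | zero => simp [FSet, mW]
  | succ N ih =>
    rcases hg N with h | h
    · -- step up
      have hstep : FSet g (N+1) = insert N (FSet g N) := by
        ext i
        simp only [FSet, Finset.mem_filter, Finset.mem_range, Finset.mem_insert,
          Finset.mem_Icc]
        constructor
        · rintro ⟨hi, hall⟩
          rcases Nat.lt_succ_iff_lt_or_eq.1 hi with hi' | hi'
          · exact Or.inr ⟨hi', fun j hj => hall j ⟨hj.1, le_trans hj.2 (Nat.le_succ N)⟩⟩
          · exact Or.inl hi'
        · rintro (hh | ⟨hi, hall⟩)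
          · subst hh
            refine ⟨Nat.lt_succ_self _, fun j hj => ?_⟩
            have : j = i + 1 := le_antisymm hj.2 hj.1
            subst this; omega
          · refine ⟨Nat.lt_succ_of_lt hi, fun j hj => ?_⟩
            rcases Nat.lt_succ_iff_lt_or_eq.1 (Nat.lt_succ_of_le hj.2) with h2 | h2
            · exact hall j ⟨hj.1, by omega⟩
            · subst h2
              have hN : g i < g N := by
                rcases Nat.lt_or_ge i N with hiN | hiN
                · exact hall N ⟨by omega, le_rfl⟩
                · have : i = N := by omega
                  subst this; omega
              omega
      have hmin : mW g (N+1) = mW g N := by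
        have := mW_le_self g N
        simp [mW, h]; omega
      rw [hstep, Finset.image_insert, ih, hmin, h]
      ext l
      simp only [Finset.mem_insert, Finset.mem_Ico]
      have := mW_le_self g N
      omega
    · -- step down
      have hstep : FSet g (N+1) = (FSet g N).filter (fun i => g i < g (N+1)) := by
        ext i
        simp only [FSet, Finset.mem_filter, Finset.mem_range, Finset.mem_Icc]
        constructor
        · rintro ⟨hi, hall⟩
          have hiN : i < N ∨ i = N := Nat.lt_succ_iff_lt_or_eq.1 hi
          have hgN1 : g i < g (N+1) := hall (N+1) ⟨by omega, le_rfl⟩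
          rcases hiN with hiN | hiN
          · exact ⟨⟨hiN, fun j hj => hall j ⟨hj.1, le_trans hj.2 (Nat.le_succ N)⟩⟩, hgN1⟩
          · subst hiN; omega
        · rintro ⟨⟨hi, hall⟩, hlt⟩
          refine ⟨Nat.lt_succ_of_lt hi, fun j hj => ?_⟩
          rcases Nat.lt_succ_iff_lt_or_eq.1 (Nat.lt_succ_of_le hj.2) with h2 | h2
          · exact hall j ⟨hj.1, by omega⟩
          · subst h2; exact hlt
      have himg : ((FSet g N).filter (fun i => g i < g (N+1))).image g
          = ((FSet g N).image g).filter (fun l => l < g (N+1)) :=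
        (Finset.filter_image (p := fun l => l < g (N+1))).symm
      rw [hstep, himg, ih]
      have hm := mW_le_self g N
      have hmin : mW g (N+1) = min (mW g N) (g N - 1) := by simp [mW, h]
      ext l
      simp only [Finset.mem_filter, Finset.mem_Ico, h, hmin]
      omega

omit hg in
lemma FSet_inj (N : ℕ) : Set.InjOn g (FSet g N) := by
  intro i hi j hj hij
  by_contra hne
  wlog hlt : i < j generalizing i j
  · exact this hj hi hij.symm (Ne.symm hne) (by omega)
  simp only [FSet, Finset.coe_filter, Finset.mem_range, Set.mem_setOf_eq] at hi hj
  have := hi.2 j (Finset.mem_Icc.2 ⟨by omega, by omega⟩)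
  omega

lemma FSet_card (N : ℕ) : ((FSet g N).card : ℤ) = g N - mW g N := by
  have h1 : (FSet g N).card = ((FSet g N).image g).card :=
    (Finset.card_image_of_injOn (FSet_inj N)).symm
  rw [h1, FSet_image hg, Int.card_Ico]
  have := mW_le_self g N
  omega

lemma RSet_card : ∀ N, ((RSet g N).card : ℤ) = g 0 - mW g N := by
  intro N
  induction N with
  | zero => simp [RSet, mW]
  | succ N ih =>
    by_cases hrec : g (N+1) < mW g N
    · -- new record
      have hstep : RSet g (N+1) = insert (N+1) (RSet g N) := by
        ext k
        simp only [RSet, Finset.mem_filter, Finset.mem_Icc, Finset.mem_insert,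
          Finset.mem_range]
        constructor
        · rintro ⟨⟨hk1, hk2⟩, hall⟩
          rcases Nat.lt_succ_iff_lt_or_eq.1 (Nat.lt_succ_of_le hk2) with h2 | h2
          · exact Or.inr ⟨⟨hk1, by omega⟩, hall⟩
          · exact Or.inl h2
        · rintro (rfl | ⟨⟨hk1, hk2⟩, hall⟩)
          · exact ⟨⟨by omega, le_rfl⟩, fun j hj =>
              lt_of_lt_of_le hrec (mW_le g (by omega))⟩
          · exact ⟨⟨hk1, by omega⟩, hall⟩
      have hnot : (N+1) ∉ RSet g N := by
        simp [RSet]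
      rw [hstep, Finset.card_insert_of_notMem hnot]
      have hmin : mW g (N+1) = mW g N - 1 := by
        have h1 := mW_le_self g N
        rcases hg N with h | h <;> simp [mW, h] <;> omega
      push_cast
      omega
    · -- no new record
      have hstep : RSet g (N+1) = RSet g N := by
        ext k
        simp only [RSet, Finset.mem_filter, Finset.mem_Icc]
        constructor
        · rintro ⟨⟨hk1, hk2⟩, hall⟩
          refine ⟨⟨hk1, ?_⟩, hall⟩
          rcases Nat.lt_succ_iff_lt_or_eq.1 (Nat.lt_succ_of_le hk2) with h2 | h2
          · omega
          · subst h2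
            exfalso
            rcases mW_mem g N with ⟨j, hj, hje⟩
            have := hall j (Finset.mem_range.2 (by omega))
            omega
        · rintro ⟨⟨hk1, hk2⟩, hall⟩
          exact ⟨⟨hk1, by omega⟩, hall⟩
      have hmin : mW g (N+1) = mW g N := by
        simp [mW]; omega
      rw [hstep, hmin, ih]

end DyckAux

namespace DyckAux

variable {g : ℕ → ℤ}

/-- unit-step walk avoiding 0 keeps a constant sign -/
lemma sign_dichotomy (hg : ∀ n, g (n+1) = g n + 1 ∨ g (n+1) = g n - 1)
    (h0 : g 0 = 0) (h : ∀ n, g (n+1) ≠ 0) :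
    (∀ n, 1 ≤ g (n+1)) ∨ (∀ n, g (n+1) ≤ -1) := by
  rcases hg 0 with h1 | h1
  · left
    intro n
    induction n with
    | zero => omega
    | succ n ih => have := hg (n+1); have := h (n+1); omega
  · right
    intro n
    induction n with
    | zero => omega
    | succ n ih => have := hg (n+1); have := h (n+1); omega

/-- if there are infinitely many times `n` after which the walk stays strictly above `g n`,
then the walk tends to infinity -/
lemma tendsto_of_freq_future_min
    (hfreq : ∀ N, ∃ n, N ≤ n ∧ ∀ m, n < m → g n < g m) :
    Tendsto g atTop atTop := by
  obtain ⟨n₀, -, hn₀⟩ := hfreq 0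
  have key : ∀ k : ℕ, ∃ n, (∀ m, n < m → g n < g m) ∧ (g n₀ + k ≤ g n) := by
    intro k
    induction k with
    | zero => exact ⟨n₀, hn₀, by omega⟩
    | succ k ih =>
      rcases ih with ⟨n, hn, hgn⟩
      rcases hfreq (n+1) with ⟨n', hn'1, hn'2⟩
      have : g n < g n' := hn n' (by omega)
      exact ⟨n', hn'2, by push_cast; omega⟩
  rw [tendsto_atTop_atTop]
  intro b
  rcases key ((b - g n₀).toNat) with ⟨n, hn, hgn⟩
  have h2 : (((b - g n₀).toNat : ℤ)) = max (b - g n₀) 0 := by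
    rcases le_or_gt (b - g n₀) 0 with h | h
    · simp [Int.toNat_of_nonpos h]; omega
    · rw [Int.toNat_of_nonneg (le_of_lt h)]; omega
  refine ⟨n, fun m hm => ?_⟩
  rcases eq_or_lt_of_le hm with rfl | hlt
  · omega
  · have := hn m hlt; omega

end DyckAux

namespace DyckAux

section Abstract

variable {X : Type*} [MeasurableSpace X]

/-- Birkhoff sums of `f` along `φ` -/
def Sn (φ : X → X) (f : X → ℤ) (n : ℕ) (x : X) : ℤ :=
  ∑ i ∈ Finset.range n, f (φ^[i] x)

/-- points whose forward walk stays `≥ 1` forever -/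
def Eplus (φ : X → X) (f : X → ℤ) : Set X := {x | ∀ n : ℕ, 1 ≤ Sn φ f (n+1) x}

/-- finite-horizon version -/
def EplusN (φ : X → X) (f : X → ℤ) (k : ℕ) : Set X := {x | ∀ n < k, 1 ≤ Sn φ f (n+1) x}

variable {φ ψ : X → X} {f : X → ℤ}

lemma Sn_zero (x : X) : Sn φ f 0 x = 0 := by simp [Sn]

lemma Sn_succ (n : ℕ) (x : X) : Sn φ f (n+1) x = Sn φ f n x + f (φ^[n] x) :=
  Finset.sum_range_succ _ _

lemma Sn_one (x : X) : Sn φ f 1 x = f x := by simp [Sn]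

lemma Sn_shift (n k : ℕ) (x : X) :
    Sn φ f k (φ^[n] x) = Sn φ f (n+k) x - Sn φ f n x := by
  induction k with
  | zero => simp [Sn_zero]
  | succ k ih =>
    rw [Sn_succ, ih, ← Function.iterate_add_apply]
    have h2 : Sn φ f (n + (k+1)) x = Sn φ f (n+k) x + f (φ^[n+k] x) := by
      rw [show n + (k+1) = (n+k)+1 by ring, Sn_succ]
    have h3 : k + n = n + k := by ring
    rw [h3]
    omega

lemma Sn_steps (hf : ∀ x, f x = 1 ∨ f x = -1) (x : X) (n : ℕ) :
    Sn φ f (n+1) x = Sn φ f n x + 1 ∨ Sn φ f (n+1) x = Sn φ f n x - 1 := by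
  rw [Sn_succ]
  rcases hf (φ^[n] x) with h | h <;> omega

lemma measurable_Sn (hφm : Measurable φ) (hfm : Measurable f) (n : ℕ) :
    Measurable (Sn φ f n) :=
  Finset.measurable_sum _ fun i _ => hfm.comp (hφm.iterate i)

lemma measurable_Eplus (hφm : Measurable φ) (hfm : Measurable f) :
    MeasurableSet (Eplus φ f) := by
  have : Eplus φ f = ⋂ n : ℕ, {x | 1 ≤ Sn φ f (n+1) x} := by
    ext x; simp [Eplus]
  rw [this]
  exact MeasurableSet.iInter fun n =>
    measurableSet_le measurable_const (measurable_Sn hφm hfm (n+1))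

lemma measurable_EplusN (hφm : Measurable φ) (hfm : Measurable f) (k : ℕ) :
    MeasurableSet (EplusN φ f k) := by
  have : EplusN φ f k = ⋂ n : ℕ, ⋂ _ : n < k, {x | 1 ≤ Sn φ f (n+1) x} := by
    ext x; simp [EplusN]
  rw [this]
  exact MeasurableSet.iInter fun n => MeasurableSet.iInter fun _ =>
    measurableSet_le measurable_const (measurable_Sn hφm hfm (n+1))

lemma EplusN_antitone : Antitone (EplusN φ f) := by
  intro a b hab x hx n hn
  exact hx n (lt_of_lt_of_le hn hab)

lemma iInter_EplusN : ⋂ k, EplusN φ f k = Eplus φ f := by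
  ext x
  simp only [Set.mem_iInter, EplusN, Eplus, Set.mem_setOf_eq]
  exact ⟨fun h n => h (n+1) n (Nat.lt_succ_self n), fun h k n _ => h n⟩

section Inverse

variable (h1 : ∀ x, ψ (φ x) = x) (h2 : ∀ x, φ (ψ x) = x)

include h1 in
lemma iter_inv (x : X) : ∀ j k : ℕ, j ≤ k → ψ^[j] (φ^[k] x) = φ^[k-j] x := by
  intro j
  induction j with
  | zero => intro k _; simp
  | succ j ih =>
    intro k hk
    rw [Function.iterate_succ_apply', ih k (by omega)]
    have hkj : k - j = (k - (j+1)) + 1 := by omega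
    rw [hkj, Function.iterate_succ_apply', h1]

variable (ν : Measure X)

include h1 h2 in
lemma measurePreserving_inv (hψm : Measurable ψ) (hφ : MeasurePreserving φ ν ν) :
    MeasurePreserving ψ ν ν := by
  refine ⟨hψm, ?_⟩
  ext s hs
  rw [Measure.map_apply hψm hs]
  have key : φ ⁻¹' (ψ ⁻¹' s) = s := by
    ext x; simp [h1 x]
  calc ν (ψ ⁻¹' s) = ν (φ ⁻¹' (ψ ⁻¹' s)) := (hφ.measure_preimage (hψm hs).nullMeasurableSet).symm
  _ = ν s := by rw [key]

include h1 h2 in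
lemma ergodic_inv (hψm : Measurable ψ) (herg : Ergodic φ ν) : Ergodic ψ ν := by
  refine ⟨measurePreserving_inv h1 h2 ν hψm herg.toMeasurePreserving, ⟨?_⟩⟩
  intro s hs hinvs
  refine herg.toPreErgodic.aeconst_set hs ?_
  have h3 : φ ⁻¹' (ψ ⁻¹' s) = s := by ext x; simp [h1 x]
  rw [hinvs] at h3
  exact h3

end Inverse

section Ergodic

variable (ν : Measure X) [IsProbabilityMeasure ν]

/-- a.e. point visits a positive measure set at arbitrarily large forward times -/
lemma ae_freq_visits (herg : Ergodic φ ν) {E : Set X} (hE : MeasurableSet E)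
    (hne : ν E ≠ 0) : ∀ᵐ x ∂ν, ∀ N : ℕ, ∃ n, N ≤ n ∧ φ^[n] x ∈ E := by
  have hφm : Measurable φ := herg.toMeasurePreserving.measurable
  set U : Set X := ⋃ n : ℕ, (φ^[n]) ⁻¹' E with hU
  have hUm : MeasurableSet U := MeasurableSet.iUnion fun n => (hφm.iterate n) hE
  have hsub : φ ⁻¹' U ⊆ U := by
    rintro x hx
    simp only [hU, Set.mem_iUnion, Set.mem_preimage] at hx ⊢
    rcases hx with ⟨n, hn⟩
    exact ⟨n+1, by rwa [Function.iterate_succ_apply]⟩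
  have := herg.ae_empty_or_univ_of_preimage_ae_le hUm.nullMeasurableSet
      (HasSubset.Subset.eventuallyLE hsub)
  rcases this with h | h
  · exfalso
    apply hne
    have hU0 : ν U = 0 := by
      calc ν U = ν (∅ : Set X) := measure_congr h
      _ = 0 := measure_empty
    have hEU : E ⊆ U := by
      intro x hx
      simp only [hU, Set.mem_iUnion, Set.mem_preimage]
      exact ⟨0, by simpa using hx⟩
    exact le_antisymm (le_trans (measure_mono hEU) hU0.le) zero_le
  · -- U =ᵐ univ
    have hU1 : ∀ N : ℕ, ν ((φ^[N]) ⁻¹' U) = 1 := by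
      intro N
      have : ν U = 1 := by
        calc ν U = ν (Set.univ : Set X) := measure_congr h
        _ = 1 := measure_univ
      rw [(herg.toMeasurePreserving.iterate N).measure_preimage hUm.nullMeasurableSet, this]
    have hsets : ∀ N : ℕ, ∀ᵐ x ∂ν, x ∈ (φ^[N]) ⁻¹' U := by
      intro N
      have hm : MeasurableSet ((φ^[N]) ⁻¹' U) := (hφm.iterate N) hUm
      rw [ae_iff]
      have : {x | ¬ x ∈ (φ^[N]) ⁻¹' U} = ((φ^[N]) ⁻¹' U)ᶜ := rfl
      rw [this, measure_compl hm (measure_ne_top _ _), hU1 N, measure_univ]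
      simp
    have := ae_all_iff.2 hsets
    filter_upwards [this] with x hx N
    have := hx N
    simp only [Set.mem_preimage, hU, Set.mem_iUnion] at this
    rcases this with ⟨n, hn⟩
    rw [← Function.iterate_add_apply] at hn
    exact ⟨n + N, by omega, hn⟩

/-- positive measure of `Eplus` forces the walk to diverge a.e. -/
lemma ae_tendsto_of_Eplus_pos (herg : Ergodic φ ν) (hfm : Measurable f)
    (hne : ν (Eplus φ f) ≠ 0) :
    ∀ᵐ x ∂ν, Tendsto (fun n => Sn φ f n x) atTop atTop := by
  have hφm : Measurable φ := herg.toMeasurePreserving.measurable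
  filter_upwards [ae_freq_visits ν herg (measurable_Eplus hφm hfm) hne] with x hx
  apply tendsto_of_freq_future_min
  intro N
  rcases hx N with ⟨n, hn, hmem⟩
  refine ⟨n, hn, fun m hm => ?_⟩
  have := hmem (m - n - 1)
  have harg : n + (m - n - 1 + 1) = m := by omega
  rw [Sn_shift, harg] at this
  omega

end Ergodic

end Abstract

end DyckAux

namespace DyckAux

section Key

variable {X : Type*} [MeasurableSpace X] {φ ψ : X → X} {f : X → ℤ}

/-- membership of a forward iterate in a finite-horizon escape set, in terms of the walk -/
lemma mem_EplusN_iterate_iff (i k : ℕ) (x : X) :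
    φ^[i] x ∈ EplusN φ f k ↔ ∀ j, i < j → j ≤ i + k → Sn φ f i x < Sn φ f j x := by
  constructor
  · intro h j hj1 hj2
    have := h (j - i - 1) (by omega)
    rw [Sn_shift, show i + (j - i - 1 + 1) = j by omega] at this
    omega
  · intro h n hn
    rw [Sn_shift]
    have := h (i + (n+1)) (by omega) (by omega)
    omega

variable (h1 : ∀ x, ψ (φ x) = x)

include h1 in
/-- backward sums of the dual cocycle at a forward iterate -/
lemma Sn_dual_iterate (k : ℕ) (x : X) :
    ∀ j ≤ k, Sn ψ (fun y => - f (ψ y)) j (φ^[k] x) = Sn φ f (k-j) x - Sn φ f k x := by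
  intro j
  induction j with
  | zero => intro _; simp [Sn_zero]
  | succ j ih =>
    intro hj
    rw [Sn_succ, ih (by omega), iter_inv h1 x j k (by omega)]
    obtain ⟨l, hl⟩ : ∃ l, k - j = l + 1 := ⟨k - j - 1, by omega⟩
    have hψφ : ψ (φ^[k-j] x) = φ^[l] x := by
      rw [hl, Function.iterate_succ_apply', h1]
    rw [hψφ]
    have hstep : Sn φ f (k-j) x = Sn φ f l x + f (φ^[l] x) := by
      rw [hl, Sn_succ]
    have hkl : k - (j+1) = l := by omega
    rw [hkl]
    omega

include h1 in
lemma mem_FplusN_iterate_iff (k : ℕ) (x : X) :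
    φ^[k] x ∈ EplusN ψ (fun y => - f (ψ y)) k ↔
      ∀ j, j < k → Sn φ f k x < Sn φ f j x := by
  constructor
  · intro h j hj
    have := h (k - j - 1) (by omega)
    rw [Sn_dual_iterate h1 k x (k-j-1+1) (by omega),
      show k - (k-j-1+1) = j by omega] at this
    omega
  · intro h n hn
    rw [Sn_dual_iterate h1 k x (n+1) (by omega)]
    have := h (k - (n+1)) (by omega)
    omega

variable (h2 : ∀ x, φ (ψ x) = x)
variable (ν : Measure X) [IsProbabilityMeasure ν]

include h1 h2 in
theorem key_identity (hφm : Measurable φ) (hψm : Measurable ψ)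
    (hφ : MeasurePreserving φ ν ν) (hfm : Measurable f)
    (hf : ∀ x, f x = 1 ∨ f x = -1) :
    (ν (Eplus φ f)).toReal - (ν (Eplus ψ (fun y => - f (ψ y)))).toReal
      = ∫ x, (f x : ℝ) ∂ν := by
  classical
  set g' : X → ℤ := fun y => - f (ψ y) with hg'
  have hg'm : Measurable g' := (hfm.comp hψm).neg
  set c : ℝ := ∫ x, (f x : ℝ) ∂ν with hc
  -- integrability of f
  have hfsm : Measurable (fun x => (f x : ℝ)) := (measurable_of_countable (fun z : ℤ => (z : ℝ))).comp hfm
  have hIf : Integrable (fun x => (f x : ℝ)) ν := by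
    refine Integrable.mono' (integrable_const 1) hfsm.aestronglyMeasurable ?_
    filter_upwards with x
    rcases hf x with h | h <;> simp [h]
  -- the measurable equivalence
  have hEmb : MeasurableEmbedding φ :=
    MeasurableEquiv.measurableEmbedding ⟨⟨φ, ψ, h1, h2⟩, hφm, hψm⟩
  -- integral of f ∘ φ^[i]
  have hIter : ∀ i : ℕ, ∫ x, (f (φ^[i] x) : ℝ) ∂ν = c := by
    intro i
    induction i with
    | zero => simp [hc]
    | succ i ih =>
      calc ∫ x, (f (φ^[i+1] x) : ℝ) ∂ν = ∫ x, (f (φ^[i] (φ x)) : ℝ) ∂ν := by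
            simp_rw [Function.iterate_succ_apply]
      _ = ∫ y, (f (φ^[i] y) : ℝ) ∂ν := hφ.integral_comp hEmb (fun y => (f (φ^[i] y) : ℝ))
      _ = c := ih
  have hIterInt : ∀ i : ℕ, Integrable (fun x => (f (φ^[i] x) : ℝ)) ν := by
    intro i
    refine Integrable.mono' (integrable_const 1)
      ((measurable_of_countable (fun z : ℤ => (z : ℝ))).comp
        (hfm.comp (hφm.iterate i))).aestronglyMeasurable ?_
    filter_upwards with x
    rcases hf (φ^[i] x) with h | h <;> simp [h]
  -- integral of S_N
  have hSInt : ∀ N : ℕ, Integrable (fun x => (Sn φ f N x : ℝ)) ν := by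
    intro N
    have : (fun x => (Sn φ f N x : ℝ)) =
        fun x => ∑ i ∈ Finset.range N, (f (φ^[i] x) : ℝ) := by
      funext x; simp [Sn]
    rw [this]
    exact integrable_finset_sum _ fun i _ => hIterInt i
  have hSN : ∀ N : ℕ, ∫ x, (Sn φ f N x : ℝ) ∂ν = N * c := by
    intro N
    have : (fun x => (Sn φ f N x : ℝ)) =
        fun x => ∑ i ∈ Finset.range N, (f (φ^[i] x) : ℝ) := by
      funext x; simp [Sn]
    rw [this, integral_finset_sum _ fun i _ => hIterInt i]
    simp [hIter]
  -- the events and their measures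
  set A : ℕ → Set X := fun k => EplusN φ f k with hA
  set B : ℕ → Set X := fun k => EplusN ψ g' k with hB
  have hAm : ∀ k, MeasurableSet (A k) := fun k => measurable_EplusN hφm hfm k
  have hBm : ∀ k, MeasurableSet (B k) := fun k => measurable_EplusN hψm hg'm k
  set e : ℕ → ℝ := fun k => (ν (A k)).toReal with he
  set r : ℕ → ℝ := fun k => (ν (B k)).toReal with hr
  -- step: the sum identity for each N
  have hsum : ∀ N : ℕ, ∑ j ∈ Finset.range N, (e (j+1) - r (j+1)) = N * c := by
    intro N
    have hFint : ∀ i ∈ Finset.range N,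
        Integrable (((φ^[i]) ⁻¹' (A (N - i))).indicator (fun _ => (1:ℝ))) ν := by
      intro i _
      exact (integrable_indicator_iff ((hφm.iterate i) (hAm (N-i)))).2
        (integrableOn_const (measure_ne_top _ _))
    have hGint : ∀ k ∈ Finset.Icc 1 N,
        Integrable (((φ^[k]) ⁻¹' (B k)).indicator (fun _ => (1:ℝ))) ν := by
      intro k _
      exact (integrable_indicator_iff ((hφm.iterate k) (hBm k))).2
        (integrableOn_const (measure_ne_top _ _))
    -- pathwise identity
    have hpath : ∀ x : X,
        (∑ i ∈ Finset.range N, ((φ^[i]) ⁻¹' (A (N - i))).indicator (fun _ => (1:ℝ)) x)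
        - (∑ k ∈ Finset.Icc 1 N, ((φ^[k]) ⁻¹' (B k)).indicator (fun _ => (1:ℝ)) x)
        = (Sn φ f N x : ℝ) := by
      intro x
      set g : ℕ → ℤ := fun n => Sn φ f n x with hgdef
      have hgsteps : ∀ n, g (n+1) = g n + 1 ∨ g (n+1) = g n - 1 := Sn_steps hf x
      have hg0 : g 0 = 0 := Sn_zero x
      -- first sum = card of FSet
      have hF : (∑ i ∈ Finset.range N, ((φ^[i]) ⁻¹' (A (N - i))).indicator
          (fun _ => (1:ℝ)) x) = ((FSet g N).card : ℝ) := by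
        rw [Finset.sum_indicator_eq_sum_filter]
        rw [Finset.sum_const, nsmul_eq_mul, mul_one]
        have hset : Finset.filter (fun i => x ∈ (φ^[i]) ⁻¹' (A (N - i)))
            (Finset.range N) = FSet g N := by
          ext i
          simp only [FSet, Finset.mem_filter, Finset.mem_range, Set.mem_preimage, hA,
            Finset.mem_Icc]
          constructor
          · rintro ⟨hi, h⟩
            rw [mem_EplusN_iterate_iff i (N-i) x] at h
            exact ⟨hi, fun j hj => h j (by omega) (by omega)⟩
          · rintro ⟨hi, h⟩
            refine ⟨hi, ?_⟩
            rw [mem_EplusN_iterate_iff i (N-i) x]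
            intro j hj1 hj2
            exact h j ⟨by omega, by omega⟩
        rw [hset]
      have hG : (∑ k ∈ Finset.Icc 1 N, ((φ^[k]) ⁻¹' (B k)).indicator
          (fun _ => (1:ℝ)) x) = ((RSet g N).card : ℝ) := by
        rw [Finset.sum_indicator_eq_sum_filter]
        rw [Finset.sum_const, nsmul_eq_mul, mul_one]
        have hset : Finset.filter (fun k => x ∈ (φ^[k]) ⁻¹' (B k))
            (Finset.Icc 1 N) = RSet g N := by
          ext k
          simp only [RSet, Finset.mem_filter, Finset.mem_Icc, Set.mem_preimage, hB,
            Finset.mem_range]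
          constructor
          · rintro ⟨hk, h⟩
            rw [mem_FplusN_iterate_iff h1 k x] at h
            exact ⟨hk, fun j hj => h j hj⟩
          · rintro ⟨hk, h⟩
            refine ⟨hk, ?_⟩
            rw [mem_FplusN_iterate_iff h1 k x]
            exact fun j hj => h j hj
        rw [hset]
      rw [hF, hG]
      have h1' := FSet_card hgsteps N
      have h2' := RSet_card hgsteps N
      have h3 : ((FSet g N).card : ℤ) - ((RSet g N).card : ℤ) = g N := by omega
      exact_mod_cast h3
    -- integrate
    have hint : ∫ x, ((∑ i ∈ Finset.range N, ((φ^[i]) ⁻¹' (A (N - i))).indicator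
          (fun _ => (1:ℝ)) x)
        - (∑ k ∈ Finset.Icc 1 N, ((φ^[k]) ⁻¹' (B k)).indicator (fun _ => (1:ℝ)) x)) ∂ν
        = N * c := by
      rw [show (fun x => ((∑ i ∈ Finset.range N, ((φ^[i]) ⁻¹' (A (N - i))).indicator
          (fun _ => (1:ℝ)) x)
        - (∑ k ∈ Finset.Icc 1 N, ((φ^[k]) ⁻¹' (B k)).indicator (fun _ => (1:ℝ)) x)))
        = (fun x => (Sn φ f N x : ℝ)) from funext hpath]
      exact hSN N
    rw [integral_sub (integrable_finset_sum _ hFint) (integrable_finset_sum _ hGint),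
      integral_finset_sum _ hFint, integral_finset_sum _ hGint] at hint
    have hmeasA : ∀ i, ∫ x, ((φ^[i]) ⁻¹' (A (N-i))).indicator (fun _ => (1:ℝ)) x ∂ν
        = e (N-i) := by
      intro i
      rw [integral_indicator_const (1:ℝ) ((hφm.iterate i) (hAm (N-i))), measureReal_def,
        (hφ.iterate i).measure_preimage (hAm (N-i)).nullMeasurableSet,
        smul_eq_mul, mul_one]
    have hmeasB : ∀ k, ∫ x, ((φ^[k]) ⁻¹' (B k)).indicator (fun _ => (1:ℝ)) x ∂ν
        = r k := by
      intro k
      rw [integral_indicator_const (1:ℝ) ((hφm.iterate k) (hBm k)), measureReal_def,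
        (hφ.iterate k).measure_preimage (hBm k).nullMeasurableSet,
        smul_eq_mul, mul_one]
    simp_rw [hmeasA, hmeasB] at hint
    -- reindex the two sums
    have hre1 : ∑ i ∈ Finset.range N, e (N - i) = ∑ j ∈ Finset.range N, e (j+1) := by
      rw [← Finset.sum_range_reflect]
      apply Finset.sum_congr rfl
      intro i hi
      simp only [Finset.mem_range] at hi
      congr 1
      omega
    have hre2 : ∑ k ∈ Finset.Icc 1 N, r k = ∑ j ∈ Finset.range N, r (j+1) := by
      rw [← Finset.Ico_add_one_right_eq_Icc, Finset.sum_Ico_eq_sum_range]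
      apply Finset.sum_congr (by simp)
      intro i _
      congr 1
      omega
    rw [hre1, hre2] at hint
    rw [Finset.sum_sub_distrib]
    exact hint
  -- limits
  have hlimA : Tendsto e atTop (𝓝 ((ν (Eplus φ f)).toReal)) := by
    have h1' : Tendsto (fun k => ν (A k)) atTop (𝓝 (ν (⋂ k, A k))) :=
      tendsto_measure_iInter_atTop (fun k => (hAm k).nullMeasurableSet)
        EplusN_antitone ⟨0, measure_ne_top _ _⟩
    rw [iInter_EplusN] at h1'
    exact (ENNReal.tendsto_toReal (measure_ne_top _ _)).comp h1'
  have hlimB : Tendsto r atTop (𝓝 ((ν (Eplus ψ g')).toReal)) := by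
    have h1' : Tendsto (fun k => ν (B k)) atTop (𝓝 (ν (⋂ k, B k))) :=
      tendsto_measure_iInter_atTop (fun k => (hBm k).nullMeasurableSet)
        EplusN_antitone ⟨0, measure_ne_top _ _⟩
    rw [iInter_EplusN] at h1'
    exact (ENNReal.tendsto_toReal (measure_ne_top _ _)).comp h1'
  set L : ℝ := (ν (Eplus φ f)).toReal - (ν (Eplus ψ g')).toReal with hL
  have hu : Tendsto (fun j => e (j+1) - r (j+1)) atTop (𝓝 L) := by
    exact Tendsto.sub (hlimA.comp (tendsto_add_atTop_nat 1))
      (hlimB.comp (tendsto_add_atTop_nat 1))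
  have hces := hu.cesaro
  have hconst : (fun N : ℕ => (N : ℝ)⁻¹ * ∑ j ∈ Finset.range N, (e (j+1) - r (j+1)))
      =ᶠ[atTop] fun _ => c := by
    filter_upwards [eventually_ge_atTop 1] with N hN
    rw [hsum N]
    have hN0 : (N : ℝ) ≠ 0 := by positivity
    field_simp
  have : Tendsto (fun _ : ℕ => c) atTop (𝓝 L) := hces.congr' hconst
  exact (tendsto_nhds_unique tendsto_const_nhds this).symm

end Key

end DyckAux

namespace DyckAux

/-- pathwise: a two-sided walk diverging to `+∞` in both directions has a least argmin -/
lemma exists_least_argmin (W : ℤ → ℤ)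
    (hp : Tendsto (fun n : ℕ => W n) atTop atTop)
    (hm : Tendsto (fun n : ℕ => W (-(n:ℤ))) atTop atTop) :
    ∃ k : ℤ, (∀ j : ℤ, W k ≤ W j) ∧ ∀ i : ℤ, i < k → ∃ j : ℤ, W j < W i := by
  obtain ⟨R1, hR1⟩ := (tendsto_atTop_atTop.1 hp) (W 0 + 1)
  obtain ⟨R2, hR2⟩ := (tendsto_atTop_atTop.1 hm) (W 0 + 1)
  classical
  set T : Finset ℤ := Finset.Icc (-(R2:ℤ)) (R1:ℤ) with hT
  have h0T : (0:ℤ) ∈ T := by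
    simp only [hT, Finset.mem_Icc]
    omega
  have hTne : T.Nonempty := ⟨0, h0T⟩
  have hImne : (T.image W).Nonempty := hTne.image W
  set m : ℤ := (T.image W).min' hImne with hm'
  have hmle : ∀ j ∈ T, m ≤ W j := fun j hj =>
    Finset.min'_le _ _ (Finset.mem_image_of_mem W hj)
  have hm0 : m ≤ W 0 := hmle 0 h0T
  have hout : ∀ j : ℤ, j ∉ T → W 0 + 1 ≤ W j := by
    intro j hj
    simp only [hT, Finset.mem_Icc, not_and_or, not_le] at hj
    rcases hj with hj | hj
    · have : R2 ≤ (-j).toNat := by omega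
      have := hR2 (-j).toNat this
      rwa [show -(((-j).toNat : ℕ) : ℤ) = j by omega] at this
    · have : R1 ≤ j.toNat := by omega
      have := hR1 j.toNat this
      rwa [show ((j.toNat : ℕ) : ℤ) = j by omega] at this
  have hglobal : ∀ j : ℤ, m ≤ W j := by
    intro j
    by_cases hj : j ∈ T
    · exact hmle j hj
    · have := hout j hj; omega
  set S : Finset ℤ := T.filter (fun i => W i = m) with hS
  have hSne : S.Nonempty := by
    obtain ⟨l, hl, hlW⟩ := Finset.mem_image.1 ((T.image W).min'_mem hImne)
    exact ⟨l, Finset.mem_filter.2 ⟨hl, hlW⟩⟩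
  set k : ℤ := S.min' hSne with hk
  have hkS : k ∈ S := S.min'_mem hSne
  have hkW : W k = m := (Finset.mem_filter.1 hkS).2
  refine ⟨k, fun j => by rw [hkW]; exact hglobal j, ?_⟩
  intro i hik
  rcases lt_or_eq_of_le (hglobal i) with hlt | heq
  · exact ⟨k, by omega⟩
  · exfalso
    have hiT : i ∈ T := by
      by_contra hiT
      have := hout i hiT
      omega
    have hiS : i ∈ S := Finset.mem_filter.2 ⟨hiT, heq.symm⟩
    have := S.min'_le i hiS
    omega

section ArgminMeasure

variable {X : Type*} [MeasurableSpace X] {φ ψ : X → X} {f : X → ℤ}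
variable (ν : Measure X) [IsProbabilityMeasure ν]

/-- the two-sided walk -/
def Wfun (φ ψ : X → X) (f : X → ℤ) (x : X) (i : ℤ) : ℤ :=
  if 0 ≤ i then Sn φ f i.toNat x else Sn ψ (fun y => - f (ψ y)) (-i).toNat x

lemma Sn_dual_shift (h1 : ∀ x, ψ (φ x) = x) (n : ℕ) (x : X) :
    Sn ψ (fun y => - f (ψ y)) (n+1) (φ x) = - f x + Sn ψ (fun y => - f (ψ y)) n x := by
  unfold Sn
  rw [Finset.sum_range_succ']
  have h0 : (fun y => - f (ψ y)) (ψ^[0] (φ x)) = - f x := by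
    simp [h1 x]
  have hi : ∀ i, ψ^[i+1] (φ x) = ψ^[i] x := by
    intro i
    rw [Function.iterate_succ_apply, h1]
  simp_rw [hi, h0]
  ring

lemma Wfun_shift (h1 : ∀ x, ψ (φ x) = x) (x : X) (i : ℤ) :
    Wfun φ ψ f (φ x) i = Wfun φ ψ f x (i+1) - f x := by
  rcases le_or_gt 0 i with hi | hi
  · have h0i1 : (0:ℤ) ≤ i + 1 := by omega
    simp only [Wfun, if_pos hi, if_pos h0i1]
    have : Sn φ f i.toNat (φ^[1] x) = Sn φ f (1 + i.toNat) x - Sn φ f 1 x := Sn_shift 1 i.toNat x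
    rw [Function.iterate_one] at this
    rw [this, Sn_one, show (i+1).toNat = 1 + i.toNat by omega]
  · rcases eq_or_lt_of_le (show i ≤ -1 by omega) with heq | hlt
    · have : i + 1 = 0 := by omega
      simp only [Wfun, if_neg (by omega : ¬ (0:ℤ) ≤ i), this, if_pos le_rfl]
      rw [show (-i).toNat = 1 by omega]
      have := Sn_dual_shift (f := f) h1 0 x
      rw [this]
      simp [Sn_zero]
    · have hneg : ¬ (0:ℤ) ≤ i := by omega
      have hneg1 : ¬ (0:ℤ) ≤ i + 1 := by omega
      simp only [Wfun, if_neg hneg, if_neg hneg1]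
      have hn : (-i).toNat = (-(i+1)).toNat + 1 := by omega
      rw [hn, Sn_dual_shift h1]
      omega

lemma measurable_Wfun (hφm : Measurable φ) (hψm : Measurable ψ) (hfm : Measurable f)
    (i : ℤ) : Measurable (fun x => Wfun φ ψ f x i) := by
  unfold Wfun
  split_ifs with h
  · exact measurable_Sn hφm hfm _
  · exact measurable_Sn hψm ((hfm.comp hψm).neg) _

theorem not_ae_both_up (hφm : Measurable φ) (hψm : Measurable ψ)
    (hφ : MeasurePreserving φ ν ν) (h1 : ∀ x, ψ (φ x) = x)
    (hfm : Measurable f)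
    (hup : ∀ᵐ x ∂ν, Tendsto (fun n => Sn φ f n x) atTop atTop)
    (hdown : ∀ᵐ x ∂ν, Tendsto (fun n => Sn ψ (fun y => - f (ψ y)) n x) atTop atTop) :
    False := by
  classical
  set W : X → ℤ → ℤ := Wfun φ ψ f with hW
  set A : ℤ → Set X := fun k =>
    {x | (∀ j : ℤ, W x k ≤ W x j) ∧ ∀ i : ℤ, i < k → ∃ j : ℤ, W x j < W x i} with hA
  have hAm : ∀ k, MeasurableSet (A k) := by
    intro k
    have h1m : MeasurableSet {x : X | ∀ j : ℤ, W x k ≤ W x j} := by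
      rw [show {x : X | ∀ j : ℤ, W x k ≤ W x j} = ⋂ j : ℤ, {x | W x k ≤ W x j} by
        ext x; simp]
      exact MeasurableSet.iInter fun j =>
        measurableSet_le (measurable_Wfun hφm hψm hfm k) (measurable_Wfun hφm hψm hfm j)
    have h2m : MeasurableSet {x : X | ∀ i : ℤ, i < k → ∃ j : ℤ, W x j < W x i} := by
      rw [show {x : X | ∀ i : ℤ, i < k → ∃ j : ℤ, W x j < W x i}
        = ⋂ i : ℤ, ⋂ _ : i < k, ⋃ j : ℤ, {x | W x j < W x i} by ext x; simp]
      exact MeasurableSet.iInter fun i => MeasurableSet.iInter fun _ =>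
        MeasurableSet.iUnion fun j =>
          measurableSet_lt (measurable_Wfun hφm hψm hfm j) (measurable_Wfun hφm hψm hfm i)
    exact h1m.inter h2m
  -- equivariance
  have hshift : ∀ k : ℤ, φ ⁻¹' (A k) = A (k+1) := by
    intro k
    ext x
    simp only [hA, Set.mem_preimage, Set.mem_setOf_eq]
    have hWs : ∀ i : ℤ, W (φ x) i = W x (i+1) - f x := fun i => Wfun_shift h1 x i
    constructor
    · rintro ⟨hmin, hleast⟩
      constructor
      · intro j
        have := hmin (j - 1)
        rw [hWs k, hWs (j-1), show j - 1 + 1 = j by omega] at this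
        omega
      · intro i hi
        obtain ⟨j, hj⟩ := hleast (i - 1) (by omega)
        rw [hWs j, hWs (i-1), show i - 1 + 1 = i by omega] at hj
        exact ⟨j + 1, by omega⟩
    · rintro ⟨hmin, hleast⟩
      constructor
      · intro j
        rw [hWs k, hWs j]
        have := hmin (j + 1)
        omega
      · intro i hi
        obtain ⟨j, hj⟩ := hleast (i + 1) (by omega)
        refine ⟨j - 1, ?_⟩
        rw [hWs (j-1), hWs i, show j - 1 + 1 = j by omega]
        omega
  have hmeq : ∀ k : ℤ, ν (A k) = ν (A 0) := by
    have hstep : ∀ k : ℤ, ν (A (k+1)) = ν (A k) := by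
      intro k
      rw [← hshift k]
      exact hφ.measure_preimage (hAm k).nullMeasurableSet
    intro k
    induction k using Int.induction_on with
    | zero => rfl
    | succ n ih => rw [hstep, ih]
    | pred n ih => rw [← ih, ← hstep (-(n:ℤ) - 1)]; norm_num
  -- a.e. covering
  have hcover : ∀ᵐ x ∂ν, x ∈ ⋃ k : ℤ, A k := by
    filter_upwards [hup, hdown] with x hx1 hx2
    have hp : Tendsto (fun n : ℕ => W x n) atTop atTop := by
      apply hx1.congr
      intro n
      simp only [hW, Wfun, if_pos (by positivity : (0:ℤ) ≤ (n:ℤ))]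
      rw [Int.toNat_natCast]
    have hmm : Tendsto (fun n : ℕ => W x (-(n:ℤ))) atTop atTop := by
      apply hx2.congr
      intro n
      rcases Nat.eq_zero_or_pos n with rfl | hn
      · simp [hW, Wfun, Sn_zero]
      · simp only [hW, Wfun, if_neg (by omega : ¬ (0:ℤ) ≤ -(n:ℤ))]
        rw [show -(-(n:ℤ)) = (n:ℤ) by ring, Int.toNat_natCast]
    obtain ⟨k, hk1, hk2⟩ := exists_least_argmin (W x) hp hmm
    exact Set.mem_iUnion.2 ⟨k, hk1, hk2⟩
  have hdisj : Pairwise (Function.onFun Disjoint A) := by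
    intro k k' hkk'
    wlog hlt : k < k' generalizing k k'
    · exact (this hkk'.symm (by omega)).symm
    rw [Function.onFun, Set.disjoint_left]
    rintro x ⟨hmin, -⟩ ⟨-, hleast⟩
    obtain ⟨j, hj⟩ := hleast k hlt
    have := hmin j
    omega
  have hfull : ν (⋃ k : ℤ, A k) = 1 := by
    have hcm : MeasurableSet (⋃ k : ℤ, A k) := MeasurableSet.iUnion hAm
    rw [← measure_univ (μ := ν)]
    apply measure_congr
    rw [Filter.eventuallyEq_set]
    filter_upwards [hcover] with x hx
    simp [hx]
  rw [measure_iUnion hdisj hAm] at hfull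
  simp_rw [hmeq] at hfull
  by_cases h0 : ν (A 0) = 0
  · rw [h0] at hfull
    simp at hfull
  · rw [ENNReal.tsum_const_eq_top_of_ne_zero h0] at hfull
    exact (by simp : (⊤ : ENNReal) ≠ 1) hfull

end ArgminMeasure

end DyckAux

namespace DyckAux

section WExtra

variable {X : Type*} [MeasurableSpace X] {φ ψ : X → X} {f : X → ℤ}

lemma Wfun_zero (x : X) : Wfun φ ψ f x 0 = 0 := by simp [Wfun, Sn_zero]

lemma Wfun_natCast (n : ℕ) (x : X) : Wfun φ ψ f x (n : ℤ) = Sn φ f n x := by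
  simp only [Wfun, if_pos (by positivity : (0:ℤ) ≤ (n:ℤ)), Int.toNat_natCast]

lemma Wfun_negCast (n : ℕ) (x : X) :
    Wfun φ ψ f x (-(n : ℤ)) = Sn ψ (fun y => - f (ψ y)) n x := by
  rcases Nat.eq_zero_or_pos n with rfl | hn
  · simp [Wfun, Sn_zero]
  · simp only [Wfun, if_neg (by omega : ¬ (0:ℤ) ≤ -(n:ℤ)), neg_neg, Int.toNat_natCast]

variable (h1 : ∀ x, ψ (φ x) = x) (h2 : ∀ x, φ (ψ x) = x)

include h1 in
lemma Wfun_iterate (x : X) : ∀ (k : ℕ) (j : ℤ),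
    Wfun φ ψ f (φ^[k] x) j = Wfun φ ψ f x (j + k) - Wfun φ ψ f x (k : ℤ) := by
  intro k
  induction k with
  | zero => intro j; simp [Wfun_zero]
  | succ k ih =>
    intro j
    rw [Function.iterate_succ_apply', Wfun_shift h1, ih (j+1)]
    have hf' : f (φ^[k] x) = Wfun φ ψ f x ((k:ℤ)+1) - Wfun φ ψ f x (k:ℤ) := by
      rw [show ((k:ℤ)+1) = ((k+1 : ℕ) : ℤ) by push_cast; ring, Wfun_natCast, Wfun_natCast,
        Sn_succ]
      ring
    rw [hf']
    have harg : j + 1 + (k:ℤ) = j + ((k+1:ℕ):ℤ) := by push_cast; ring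
    rw [harg, show ((k+1:ℕ):ℤ) = (k:ℤ)+1 by push_cast; ring]
    ring

include h1 h2 in
lemma iterate_comp_inv (x : X) : ∀ k : ℕ, φ^[k] (ψ^[k] x) = x := by
  intro k
  induction k with
  | zero => simp
  | succ k ih =>
    rw [Function.iterate_succ_apply' (f := ψ), Function.iterate_succ_apply (f := φ), h2, ih]

include h1 h2 in
lemma Wfun_iterate_inv (x : X) (k : ℕ) (j : ℤ) :
    Wfun φ ψ f (ψ^[k] x) j = Wfun φ ψ f x (j - k) - Wfun φ ψ f x (-(k : ℤ)) := by
  set x' := ψ^[k] x with hx'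
  have hA : ∀ m : ℤ, Wfun φ ψ f x m = Wfun φ ψ f x' (m + k) - Wfun φ ψ f x' (k:ℤ) := by
    intro m
    rw [← Wfun_iterate h1 x' k m, hx', iterate_comp_inv h1 h2 x k]
  have hB : Wfun φ ψ f x' (k:ℤ) = - Wfun φ ψ f x (-(k:ℤ)) := by
    have := hA (-(k:ℤ))
    rw [show -(k:ℤ) + (k:ℤ) = 0 by ring, Wfun_zero] at this
    omega
  have := hA (j - k)
  rw [show j - (k:ℤ) + (k:ℤ) = j by ring] at this
  omega

end WExtra

end DyckAux

namespace DyckAux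

section Bridges

/-- ℤ-indexed tendsto from ℕ-indexed, atTop/atTop -/
lemma tendstoZ_top_top {w : ℤ → ℤ} (h : Tendsto (fun n : ℕ => w n) atTop atTop) :
    Tendsto w atTop atTop := by
  rw [tendsto_atTop_atTop] at h ⊢
  intro b
  obtain ⟨N, hN⟩ := h b
  refine ⟨(N : ℤ), fun i hi => ?_⟩
  have h2 := hN i.toNat (by omega)
  rwa [show ((i.toNat : ℕ) : ℤ) = i by omega] at h2

lemma tendstoZ_top_bot {w : ℤ → ℤ} (h : Tendsto (fun n : ℕ => w n) atTop atBot) :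
    Tendsto w atTop atBot := by
  rw [tendsto_atTop_atBot] at h ⊢
  intro b
  obtain ⟨N, hN⟩ := h b
  refine ⟨(N : ℤ), fun i hi => ?_⟩
  have h2 := hN i.toNat (by omega)
  rwa [show ((i.toNat : ℕ) : ℤ) = i by omega] at h2

lemma tendstoZ_bot_bot {w : ℤ → ℤ} (h : Tendsto (fun n : ℕ => w (-(n:ℤ))) atTop atBot) :
    Tendsto w atBot atBot := by
  rw [tendsto_atTop_atBot] at h
  rw [tendsto_atBot_atBot]
  intro b
  obtain ⟨N, hN⟩ := h b
  refine ⟨-(N : ℤ), fun i hi => ?_⟩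
  have h2 := hN (-i).toNat (by omega)
  rwa [show -(((-i).toNat : ℕ) : ℤ) = i by omega] at h2

lemma tendstoZ_bot_top {w : ℤ → ℤ} (h : Tendsto (fun n : ℕ => w (-(n:ℤ))) atTop atTop) :
    Tendsto w atBot atTop := by
  rw [tendsto_atTop_atTop] at h
  rw [tendsto_atBot_atTop]
  intro b
  obtain ⟨N, hN⟩ := h b
  refine ⟨-(N : ℤ), fun i hi => ?_⟩
  have h2 := hN (-i).toNat (by omega)
  rwa [show -(((-i).toNat : ℕ) : ℤ) = i by omega] at h2

lemma tendsto_neg_bot {u : ℕ → ℤ} (h : Tendsto (fun n => - u n) atTop atTop) :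
    Tendsto u atTop atBot := by
  rw [tendsto_atTop_atTop] at h
  rw [tendsto_atTop_atBot]
  intro b
  obtain ⟨N, hN⟩ := h (-b)
  exact ⟨N, fun n hn => by have := hN n hn; omega⟩

lemma meas_one_of_ae {X : Type*} [MeasurableSpace X] (ν : Measure X)
    [IsProbabilityMeasure ν] {S : Set X} (hS : MeasurableSet S)
    (h : ∀ᵐ x ∂ν, x ∈ S) : ν S = 1 := by
  have h0 : ν Sᶜ = 0 := by
    rw [ae_iff] at h
    exact h
  have := measure_compl hS (measure_ne_top ν S)
  rw [h0, measure_univ] at this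
  have hle : ν S ≤ 1 := prob_le_one
  have h2 : (1:ENNReal) - ν S = 0 := this.symm
  rw [tsub_eq_zero_iff_le] at h2
  exact le_antisymm hle h2

lemma ae_of_meas_one {X : Type*} [MeasurableSpace X] (ν : Measure X)
    [IsProbabilityMeasure ν] {S : Set X} (hS : MeasurableSet S)
    (h : ν S = 1) : ∀ᵐ x ∂ν, x ∈ S := by
  rw [ae_iff]
  have : {x | ¬ x ∈ S} = Sᶜ := rfl
  rw [this, measure_compl hS (measure_ne_top ν S), h, measure_univ]
  simp

lemma ae_nmem_of_meas_zero {X : Type*} [MeasurableSpace X] (ν : Measure X)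
    {S : Set X} (h : ν S = 0) : ∀ᵐ x ∂ν, x ∉ S := by
  rw [ae_iff]
  exact measure_mono_null (fun x hx => not_not.1 hx) h

end Bridges

end DyckAux
namespace DyckAux

section Dyck

variable {M : ℕ}

/-- the right shift, inverse to `dyckShift` -/
def shiftR {α : Type*} (ω : ℤ → α) : ℤ → α := fun i => ω (i - 1)

lemma shiftR_dyckShift {α : Type*} (ω : ℤ → α) : shiftR (dyckShift ω) = ω :=
  funext fun i => by simp [shiftR, dyckShift]

lemma dyckShift_shiftR {α : Type*} (ω : ℤ → α) : dyckShift (shiftR ω) = ω :=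
  funext fun i => by simp [shiftR, dyckShift]

lemma measurable_dyckShift : Measurable (dyckShift (α := DyckAlphabet M)) :=
  measurable_pi_lambda _ fun i => measurable_pi_apply (i + 1)

lemma measurable_shiftR : Measurable (shiftR (α := DyckAlphabet M)) :=
  measurable_pi_lambda _ fun i => measurable_pi_apply (i - 1)

/-- the one-step increment observable -/
def fsgn (M : ℕ) : (ℤ → DyckAlphabet M) → ℤ := fun ω => dyckSgn M (ω 0)

lemma measurable_dyckSgn : Measurable (dyckSgn M) := by
  have : dyckSgn M = Sum.elim (fun _ : Fin M => (1:ℤ)) (fun _ : Fin M => (-1:ℤ)) := by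
    funext a; rcases a with a | a <;> rfl
  rw [this]
  exact Measurable.sumElim measurable_const measurable_const

lemma measurable_fsgn : Measurable (fsgn M) :=
  measurable_dyckSgn.comp (measurable_pi_apply 0)

lemma fsgn_pm (ω : ℤ → DyckAlphabet M) : fsgn M ω = 1 ∨ fsgn M ω = -1 := by
  unfold fsgn
  rcases ω 0 with a | a
  · left; rfl
  · right; rfl

lemma iterate_dyckShift {α : Type*} (k : ℕ) (ω : ℤ → α) :
    dyckShift^[k] ω = fun i => ω (i + k) := by
  induction k with
  | zero => funext i; simp
  | succ k ih =>
    rw [Function.iterate_succ_apply', ih]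
    funext i
    show ω (i + 1 + (k:ℤ)) = ω (i + ((k:ℕ)+1 : ℕ))
    congr 1
    push_cast
    ring

lemma iterate_shiftR {α : Type*} (k : ℕ) (ω : ℤ → α) :
    shiftR^[k] ω = fun i => ω (i - k) := by
  induction k with
  | zero => funext i; simp
  | succ k ih =>
    rw [Function.iterate_succ_apply', ih]
    funext i
    show ω (i - 1 - (k:ℤ)) = ω (i - ((k:ℕ)+1 : ℕ))
    congr 1
    push_cast
    ring

/-- `Hfun` is the two-sided walk of the abstract development -/
lemma Hfun_eq (ω : ℤ → DyckAlphabet M) (i : ℤ) :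
    Hfun M ω i = Wfun dyckShift shiftR (fsgn M) ω i := by
  rcases le_or_gt 0 i with hi | hi
  · simp only [Hfun, if_pos hi, Wfun, if_pos hi, Sn]
    apply Finset.sum_congr rfl
    intro j _
    rw [iterate_dyckShift]
    show dyckSgn M (ω j) = dyckSgn M ((fun t : ℤ => ω (t + j)) 0)
    simp
  · have hneg : ¬ (0:ℤ) ≤ i := by omega
    simp only [Hfun, if_neg hneg, Wfun, if_neg hneg, Sn]
    set n : ℕ := (-i).toNat with hn
    have hni : ((n : ℕ) : ℤ) = -i := by omega
    have hterm : ∀ j : ℕ, (fun y => - fsgn M (shiftR y)) (shiftR^[j] ω)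
        = - dyckSgn M (ω (-(j:ℤ)-1)) := by
      intro j
      show - fsgn M (shiftR (shiftR^[j] ω)) = _
      rw [← Function.iterate_succ_apply' shiftR j ω, iterate_shiftR]
      show - dyckSgn M (ω (0 - ((j+1 : ℕ) : ℤ))) = - dyckSgn M (ω (-(j:ℤ)-1))
      congr 2
      push_cast
      ring
    have hreflect : ∑ j ∈ Finset.range n, dyckSgn M (ω (i + (j:ℤ)))
        = ∑ j ∈ Finset.range n, dyckSgn M (ω (i + ((n - 1 - j : ℕ) : ℤ))) :=
      (Finset.sum_range_reflect (fun t => dyckSgn M (ω (i + (t:ℤ)))) n).symm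
    calc - ∑ j ∈ Finset.range n, dyckSgn M (ω (i + j))
        = - ∑ j ∈ Finset.range n, dyckSgn M (ω (i + ((n - 1 - j : ℕ) : ℤ))) := by
          rw [hreflect]
      _ = ∑ j ∈ Finset.range n, - dyckSgn M (ω (-(j:ℤ)-1)) := by
          rw [← Finset.sum_neg_distrib]
          apply Finset.sum_congr rfl
          intro j hj
          simp only [Finset.mem_range] at hj
          have harg : i + ((n - 1 - j : ℕ) : ℤ) = -(j:ℤ)-1 := by omega
          rw [harg]
      _ = ∑ j ∈ Finset.range n, (fun y => - fsgn M (shiftR y)) (shiftR^[j] ω) := by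
          apply Finset.sum_congr rfl
          intro j _
          rw [hterm j]

lemma measurable_Hfun (i : ℤ) : Measurable (fun ω => Hfun M ω i) := by
  simp only [Hfun_eq]
  exact measurable_Wfun measurable_dyckShift measurable_shiftR measurable_fsgn i

lemma measurableSet_eqH (a b : ℤ) :
    MeasurableSet {ω : ℤ → DyckAlphabet M | Hfun M ω a = Hfun M ω b} := by
  have : {ω : ℤ → DyckAlphabet M | Hfun M ω a = Hfun M ω b}
      = (fun ω => Hfun M ω a - Hfun M ω b) ⁻¹' {0} := by
    ext ω; simp [sub_eq_zero]
  rw [this]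
  exact ((measurable_Hfun a).sub (measurable_Hfun b)) (measurableSet_singleton 0)

lemma measurableSet_Azero : MeasurableSet (Azero M) := by
  unfold Azero
  exact MeasurableSet.iInter fun i =>
    (MeasurableSet.iUnion fun j => measurableSet_eqH _ _).inter
      (MeasurableSet.iUnion fun j => measurableSet_eqH _ _)

lemma measurableSet_leH (b : ℤ) (i : ℤ) :
    MeasurableSet {ω : ℤ → DyckAlphabet M | b ≤ Hfun M ω i} :=
  measurableSet_le measurable_const (measurable_Hfun i)

lemma measurableSet_geH (b : ℤ) (i : ℤ) :
    MeasurableSet {ω : ℤ → DyckAlphabet M | Hfun M ω i ≤ b} :=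
  measurableSet_le (measurable_Hfun i) measurable_const

lemma measurableSet_Aalpha : MeasurableSet (Aalpha M) := by
  have h1 : {ω : ℤ → DyckAlphabet M | Tendsto (fun i : ℤ => Hfun M ω i) atTop atTop}
      = ⋂ b : ℤ, ⋃ N : ℤ, ⋂ i : ℤ, ⋂ (_ : N ≤ i), {ω | b ≤ Hfun M ω i} := by
    ext ω
    simp only [Set.mem_setOf_eq, Set.mem_iInter, Set.mem_iUnion, tendsto_atTop_atTop,
      ge_iff_le]
    all_goals tauto
  have h2 : {ω : ℤ → DyckAlphabet M | Tendsto (fun i : ℤ => Hfun M ω i) atBot atBot}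
      = ⋂ b : ℤ, ⋃ N : ℤ, ⋂ i : ℤ, ⋂ (_ : i ≤ N), {ω | Hfun M ω i ≤ b} := by
    ext ω
    simp only [Set.mem_setOf_eq, Set.mem_iInter, Set.mem_iUnion, tendsto_atBot_atBot]
    all_goals tauto
  have hsplit : Aalpha M
      = {ω : ℤ → DyckAlphabet M | Tendsto (fun i : ℤ => Hfun M ω i) atTop atTop}
        ∩ {ω : ℤ → DyckAlphabet M | Tendsto (fun i : ℤ => Hfun M ω i) atBot atBot} := rfl
  rw [hsplit, h1, h2]
  exact (MeasurableSet.iInter fun b => MeasurableSet.iUnion fun N =>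
      MeasurableSet.iInter fun i => MeasurableSet.iInter fun _ => measurableSet_leH b i).inter
    (MeasurableSet.iInter fun b => MeasurableSet.iUnion fun N =>
      MeasurableSet.iInter fun i => MeasurableSet.iInter fun _ => measurableSet_geH b i)

lemma measurableSet_Abeta : MeasurableSet (Abeta M) := by
  have h1 : {ω : ℤ → DyckAlphabet M | Tendsto (fun i : ℤ => Hfun M ω i) atTop atBot}
      = ⋂ b : ℤ, ⋃ N : ℤ, ⋂ i : ℤ, ⋂ (_ : N ≤ i), {ω | Hfun M ω i ≤ b} := by
    ext ω
    simp only [Set.mem_setOf_eq, Set.mem_iInter, Set.mem_iUnion, tendsto_atTop_atBot,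
      ge_iff_le]
    all_goals tauto
  have h2 : {ω : ℤ → DyckAlphabet M | Tendsto (fun i : ℤ => Hfun M ω i) atBot atTop}
      = ⋂ b : ℤ, ⋃ N : ℤ, ⋂ i : ℤ, ⋂ (_ : i ≤ N), {ω | b ≤ Hfun M ω i} := by
    ext ω
    simp only [Set.mem_setOf_eq, Set.mem_iInter, Set.mem_iUnion, tendsto_atBot_atTop]
    all_goals tauto
  have hsplit : Abeta M
      = {ω : ℤ → DyckAlphabet M | Tendsto (fun i : ℤ => Hfun M ω i) atTop atBot}
        ∩ {ω : ℤ → DyckAlphabet M | Tendsto (fun i : ℤ => Hfun M ω i) atBot atTop} := rfl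
  rw [hsplit, h1, h2]
  exact (MeasurableSet.iInter fun b => MeasurableSet.iUnion fun N =>
      MeasurableSet.iInter fun i => MeasurableSet.iInter fun _ => measurableSet_geH b i).inter
    (MeasurableSet.iInter fun b => MeasurableSet.iUnion fun N =>
      MeasurableSet.iInter fun i => MeasurableSet.iInter fun _ => measurableSet_leH b i)

lemma Hfun_zero (ω : ℤ → DyckAlphabet M) : Hfun M ω 0 = 0 := by
  simp [Hfun]

/-- an element of `Azero` has zeros of `H` at arbitrarily large indices -/
lemma azero_frequently {ω : ℤ → DyckAlphabet M} (hω : ω ∈ Azero M) :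
    ∀ N : ℤ, ∃ i : ℤ, N ≤ i ∧ Hfun M ω i = 0 := by
  have hstep : ∀ i : ℤ, Hfun M ω i = 0 → ∃ i' : ℤ, i < i' ∧ Hfun M ω i' = 0 := by
    intro i hi
    have := (Set.mem_iInter.1 hω i).1
    obtain ⟨j, hj⟩ := Set.mem_iUnion.1 this
    exact ⟨i + (j + 1), by omega, by rw [hj, hi]⟩
  have hkey : ∀ n : ℕ, ∃ i : ℤ, (n : ℤ) ≤ i ∧ Hfun M ω i = 0 := by
    intro n
    induction n with
    | zero => exact ⟨0, le_rfl, Hfun_zero ω⟩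
    | succ n ih =>
      obtain ⟨i, hi, hHi⟩ := ih
      obtain ⟨i', hi', hHi'⟩ := hstep i hHi
      exact ⟨i', by omega, hHi'⟩
  intro N
  obtain ⟨i, hi, hHi⟩ := hkey N.toNat
  exact ⟨i, by omega, hHi⟩

lemma azero_inter_aalpha : Azero M ∩ Aalpha M = ∅ := by
  ext ω
  simp only [Set.mem_inter_iff, Set.mem_empty_iff_false, iff_false, not_and]
  intro hz ha
  obtain ⟨N, hN⟩ := (tendsto_atTop_atTop.1 ha.1) 1
  obtain ⟨i, hi, hHi⟩ := azero_frequently hz N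
  have := hN i hi
  omega

lemma azero_inter_abeta : Azero M ∩ Abeta M = ∅ := by
  ext ω
  simp only [Set.mem_inter_iff, Set.mem_empty_iff_false, iff_false, not_and]
  intro hz hb
  obtain ⟨N, hN⟩ := (tendsto_atTop_atBot.1 hb.1) (-1)
  obtain ⟨i, hi, hHi⟩ := azero_frequently hz N
  have := hN i hi
  omega

lemma aalpha_inter_abeta : Aalpha M ∩ Abeta M = ∅ := by
  ext ω
  simp only [Set.mem_inter_iff, Set.mem_empty_iff_false, iff_false, not_and]
  intro ha hb
  obtain ⟨N1, hN1⟩ := (tendsto_atTop_atTop.1 ha.1) 1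
  obtain ⟨N2, hN2⟩ := (tendsto_atTop_atBot.1 hb.1) (-1)
  have g1 := hN1 (max N1 N2) (le_max_left _ _)
  have g2 := hN2 (max N1 N2) (le_max_right _ _)
  omega

end Dyck

end DyckAux

namespace DyckAux

lemma Sn_neg' {X : Type*} (φ : X → X) (g : X → ℤ) (n : ℕ) (x : X) :
    Sn φ (fun y => - g y) n x = - Sn φ g n x := by
  unfold Sn
  rw [← Finset.sum_neg_distrib]

end DyckAux

open DyckAux

/-- any ergodic shift-invariant Borel probability measure on the two-sided
Dyck shift gives full measure to exactly one of `A_0`, `A_α`, `A_β`. -/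
theorem ergodic_trichotomy_dyck (M : ℕ) (hM : 2 ≤ M)
    (ν : Measure (ℤ → DyckAlphabet M)) [IsProbabilityMeasure ν]
    (herg : Ergodic (dyckShift (α := DyckAlphabet M)) ν)
    (hD : ν (SigmaD M) = 1) :
    (ν (Azero M) = 1 ∧ ν (Aalpha M) ≠ 1 ∧ ν (Abeta M) ≠ 1) ∨
    (ν (Azero M) ≠ 1 ∧ ν (Aalpha M) = 1 ∧ ν (Abeta M) ≠ 1) ∨
    (ν (Azero M) ≠ 1 ∧ ν (Aalpha M) ≠ 1 ∧ ν (Abeta M) = 1) := by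
  classical
  have h1 : ∀ ω : ℤ → DyckAlphabet M, shiftR (dyckShift ω) = ω := shiftR_dyckShift
  have h2 : ∀ ω : ℤ → DyckAlphabet M, dyckShift (shiftR ω) = ω := dyckShift_shiftR
  have hφm : Measurable (dyckShift (α := DyckAlphabet M)) := measurable_dyckShift
  have hψm : Measurable (shiftR (α := DyckAlphabet M)) := measurable_shiftR
  have hfm : Measurable (fsgn M) := measurable_fsgn
  have hf : ∀ ω, fsgn M ω = 1 ∨ fsgn M ω = -1 := fsgn_pm
  have hφ : MeasurePreserving (dyckShift (α := DyckAlphabet M)) ν ν :=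
    herg.toMeasurePreserving
  have hψmp : MeasurePreserving (shiftR (α := DyckAlphabet M)) ν ν :=
    measurePreserving_inv h1 h2 ν hψm hφ
  have hψerg : Ergodic (shiftR (α := DyckAlphabet M)) ν := ergodic_inv h1 h2 ν hψm herg
  set c : ℝ := ∫ x, (fsgn M x : ℝ) ∂ν with hc
  set P1 : Set (ℤ → DyckAlphabet M) := Eplus dyckShift (fsgn M) with hP1
  set P2 : Set (ℤ → DyckAlphabet M) := Eplus dyckShift (fun y => - fsgn M y) with hP2
  set P3 : Set (ℤ → DyckAlphabet M) := Eplus shiftR (fun y => fsgn M (shiftR y)) with hP3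
  set P4 : Set (ℤ → DyckAlphabet M) := Eplus shiftR (fun y => - fsgn M (shiftR y)) with hP4
  have id1 : (ν P1).toReal - (ν P4).toReal = c :=
    key_identity h1 h2 ν hφm hψm hφ hfm hf
  have id2 : (ν P3).toReal - (ν P2).toReal = c := by
    have h := key_identity (φ := shiftR) (ψ := dyckShift)
      (f := fun y => fsgn M (shiftR y)) h2 h1 ν hψm hφm hψmp
      (hfm.comp hψm) (fun x => hf (shiftR x))
    have hfeq : (fun y : ℤ → DyckAlphabet M => - fsgn M (shiftR (dyckShift y)))
        = (fun y => - fsgn M y) := funext fun y => by rw [h1]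
    rw [hfeq] at h
    have hint : ∫ x, (fsgn M (shiftR x) : ℝ) ∂ν = c :=
      hψmp.integral_comp
        (MeasurableEquiv.measurableEmbedding ⟨⟨shiftR, dyckShift, h2, h1⟩, hψm, hφm⟩)
        (fun y => (fsgn M y : ℝ))
    rw [hint] at h
    exact h
  -- divergence wrappers
  have hT1 : ν P1 ≠ 0 →
      ∀ᵐ x ∂ν, Tendsto (fun n => Sn dyckShift (fsgn M) n x) atTop atTop :=
    fun h => ae_tendsto_of_Eplus_pos ν herg hfm h
  have hT2 : ν P2 ≠ 0 →
      ∀ᵐ x ∂ν, Tendsto (fun n => Sn dyckShift (fun y => - fsgn M y) n x) atTop atTop :=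
    fun h => ae_tendsto_of_Eplus_pos ν herg hfm.neg h
  have hT3 : ν P3 ≠ 0 →
      ∀ᵐ x ∂ν, Tendsto (fun n => Sn shiftR (fun y => fsgn M (shiftR y)) n x) atTop atTop :=
    fun h => ae_tendsto_of_Eplus_pos ν hψerg (hfm.comp hψm) h
  have hT4 : ν P4 ≠ 0 →
      ∀ᵐ x ∂ν, Tendsto (fun n => Sn shiftR (fun y => - fsgn M (shiftR y)) n x) atTop atTop :=
    fun h => ae_tendsto_of_Eplus_pos ν hψerg (hfm.comp hψm).neg h
  -- bridges
  have hWn : ∀ (x : ℤ → DyckAlphabet M) (n : ℕ),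
      Hfun M x (n : ℤ) = Sn dyckShift (fsgn M) n x := by
    intro x n
    rw [Hfun_eq, Wfun_natCast]
  have hWneg : ∀ (x : ℤ → DyckAlphabet M) (n : ℕ),
      Hfun M x (-(n : ℤ)) = Sn shiftR (fun y => - fsgn M (shiftR y)) n x := by
    intro x n
    rw [Hfun_eq, Wfun_negCast]
  -- disjointness helper
  have hkill : ∀ A B : Set (ℤ → DyckAlphabet M),
      MeasurableSet B → ν B = 1 → A ∩ B = ∅ → ν A ≠ 1 := by
    intro A B hB hB1 hAB
    have hsub : A ⊆ Bᶜ := by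
      intro x hx hx'
      have hmem : x ∈ A ∩ B := ⟨hx, hx'⟩
      rw [hAB] at hmem
      exact hmem
    have hle : ν A ≤ ν Bᶜ := measure_mono hsub
    rw [measure_compl hB (measure_ne_top _ _), hB1, measure_univ] at hle
    simp only [tsub_self, le_zero_iff] at hle
    rw [hle]
    exact zero_ne_one
  rcases lt_trichotomy c 0 with hcneg | hczero | hcpos
  · -- c < 0 : A_β has full measure
    have hP2ne : ν P2 ≠ 0 := by
      intro h0
      rw [h0] at id2
      simp only [ENNReal.toReal_zero, tsub_zero] at id2
      have := ENNReal.toReal_nonneg (a := ν P3)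
      -- id2 : (ν P3).toReal - 0 = c
      nlinarith [id2]
    have hP4ne : ν P4 ≠ 0 := by
      intro h0
      rw [h0] at id1
      simp only [ENNReal.toReal_zero] at id1
      have := ENNReal.toReal_nonneg (a := ν P1)
      nlinarith [id1]
    have hAb : ν (Abeta M) = 1 := by
      apply meas_one_of_ae ν measurableSet_Abeta
      filter_upwards [hT2 hP2ne, hT4 hP4ne] with x hx2 hx4
      constructor
      · apply tendstoZ_top_bot
        apply tendsto_neg_bot
        apply hx2.congr
        intro n
        rw [Sn_neg']
        rw [← hWn x n]
      · apply tendstoZ_bot_top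
        apply hx4.congr
        intro n
        exact (hWneg x n).symm
    refine Or.inr (Or.inr ⟨?_, ?_, hAb⟩)
    · exact hkill _ _ measurableSet_Abeta hAb (azero_inter_abeta)
    · exact hkill _ _ measurableSet_Abeta hAb (aalpha_inter_abeta)
  · -- c = 0 : A_0 has full measure
    have hfin : ∀ S : Set (ℤ → DyckAlphabet M), (ν S).toReal = 0 → ν S = 0 := by
      intro S hS
      rcases (ENNReal.toReal_eq_zero_iff _).1 hS with h | h
      · exact h
      · exact absurd h (measure_ne_top _ _)
    have hP1zero : ν P1 = 0 := by
      by_contra h0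
      have h4 : ν P4 ≠ 0 := by
        intro h4'
        apply h0
        apply hfin
        rw [h4'] at id1
        simp only [ENNReal.toReal_zero] at id1
        linarith [id1]
      exact not_ae_both_up ν hφm hψm hφ h1 hfm (hT1 h0) (hT4 h4)
    have hP4zero : ν P4 = 0 := by
      apply hfin
      rw [hP1zero] at id1
      simp only [ENNReal.toReal_zero] at id1
      linarith [id1]
    have hP2zero : ν P2 = 0 := by
      by_contra h0
      have h3 : ν P3 ≠ 0 := by
        intro h3'
        apply h0
        apply hfin
        rw [h3'] at id2
        simp only [ENNReal.toReal_zero] at id2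
        linarith [id2]
      refine not_ae_both_up ν hφm hψm hφ h1 hfm.neg (hT2 h0) ?_
      filter_upwards [hT3 h3] with x hx
      have hfunx : (fun n => Sn shiftR (fun y => - - fsgn M (shiftR y)) n x)
          = fun n => Sn shiftR (fun y => fsgn M (shiftR y)) n x := by
        funext n
        congr 1
        funext y
        rw [neg_neg]
      show Tendsto (fun n => Sn shiftR (fun y => - - fsgn M (shiftR y)) n x) atTop atTop
      rw [hfunx]
      exact hx
    have hP3zero : ν P3 = 0 := by
      apply hfin
      rw [hP2zero] at id2
      simp only [ENNReal.toReal_zero, tsub_zero] at id2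
      linarith [id2]
    -- recurrence set
    set Gret : Set (ℤ → DyckAlphabet M) :=
      {x | (∃ n : ℕ, Sn dyckShift (fsgn M) (n+1) x = 0) ∧
           (∃ n : ℕ, Sn shiftR (fun y => - fsgn M (shiftR y)) (n+1) x = 0)} with hGret
    have hGm : MeasurableSet Gret := by
      have ha : MeasurableSet {x : ℤ → DyckAlphabet M |
          ∃ n : ℕ, Sn dyckShift (fsgn M) (n+1) x = 0} := by
        rw [show {x : ℤ → DyckAlphabet M | ∃ n : ℕ, Sn dyckShift (fsgn M) (n+1) x = 0}
          = ⋃ n : ℕ, (fun x => Sn dyckShift (fsgn M) (n+1) x) ⁻¹' {0} by ext x; simp]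
        exact MeasurableSet.iUnion fun n =>
          (measurable_Sn hφm hfm (n+1)) (measurableSet_singleton 0)
      have hb : MeasurableSet {x : ℤ → DyckAlphabet M |
          ∃ n : ℕ, Sn shiftR (fun y => - fsgn M (shiftR y)) (n+1) x = 0} := by
        rw [show {x : ℤ → DyckAlphabet M |
            ∃ n : ℕ, Sn shiftR (fun y => - fsgn M (shiftR y)) (n+1) x = 0}
          = ⋃ n : ℕ, (fun x => Sn shiftR (fun y => - fsgn M (shiftR y)) (n+1) x) ⁻¹' {0} by
            ext x; simp]
        exact MeasurableSet.iUnion fun n =>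
          (measurable_Sn hψm (hfm.comp hψm).neg (n+1)) (measurableSet_singleton 0)
      exact ha.inter hb
    have hG1 : ν Gret = 1 := by
      apply meas_one_of_ae ν hGm
      filter_upwards [ae_nmem_of_meas_zero ν hP1zero, ae_nmem_of_meas_zero ν hP2zero,
        ae_nmem_of_meas_zero ν hP3zero, ae_nmem_of_meas_zero ν hP4zero]
        with x h1x h2x h3x h4x
      constructor
      · by_contra hno
        push_neg at hno
        rcases sign_dichotomy (g := fun n => Sn dyckShift (fsgn M) n x)
          (Sn_steps (φ := dyckShift) hf x) (Sn_zero x) hno with hL | hR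
        · exact h1x hL
        · apply h2x
          intro n
          rw [Sn_neg']
          have := hR n
          omega
      · by_contra hno
        push_neg at hno
        rcases sign_dichotomy (g := fun n => Sn shiftR (fun y => - fsgn M (shiftR y)) n x)
          (Sn_steps (φ := shiftR) (f := fun y => - fsgn M (shiftR y))
            (fun y => by
              show - fsgn M (shiftR y) = 1 ∨ - fsgn M (shiftR y) = -1
              rcases hf (shiftR y) with h | h <;> omega) x)
            (Sn_zero x) hno with hL | hR
        · exact h4x hL
        · apply h3x
          intro n
          have hneg : Sn shiftR (fun y => - fsgn M (shiftR y)) (n+1) x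
              = - Sn shiftR (fun y => fsgn M (shiftR y)) (n+1) x :=
            Sn_neg' shiftR (fun y => fsgn M (shiftR y)) (n+1) x
          have := hR n
          omega
    have hshifts : ∀ᵐ x ∂ν, ∀ k : ℕ,
        dyckShift^[k] x ∈ Gret ∧ shiftR^[k] x ∈ Gret := by
      rw [ae_all_iff]
      intro k
      have ha : ∀ᵐ x ∂ν, x ∈ (dyckShift^[k]) ⁻¹' Gret := by
        apply ae_of_meas_one ν ((hφm.iterate k) hGm)
        rw [(hφ.iterate k).measure_preimage hGm.nullMeasurableSet, hG1]
      have hb : ∀ᵐ x ∂ν, x ∈ (shiftR^[k]) ⁻¹' Gret := by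
        apply ae_of_meas_one ν ((hψm.iterate k) hGm)
        rw [(hψmp.iterate k).measure_preimage hGm.nullMeasurableSet, hG1]
      filter_upwards [ha, hb] with x hxa hxb
      exact ⟨hxa, hxb⟩
    have hAz : ν (Azero M) = 1 := by
      apply meas_one_of_ae ν measurableSet_Azero
      filter_upwards [hshifts] with x hx
      apply Set.mem_iInter.2
      intro i
      rcases le_or_gt 0 i with hi | hi
      · set k : ℕ := i.toNat with hk
        have hik : (k : ℤ) = i := by omega
        obtain ⟨⟨n1, hn1⟩, n2, hn2⟩ := (hx k).1
        constructor
        · apply Set.mem_iUnion.2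
          refine ⟨n1, ?_⟩
          rw [← Wfun_natCast (n1+1) (dyckShift^[k] x), Wfun_iterate h1 x k _] at hn1
          have harg : ((n1+1 : ℕ) : ℤ) + (k : ℤ) = i + ((n1 : ℤ) + 1) := by push_cast; omega
          rw [harg, hik] at hn1
          show Hfun M x (i + ((n1 : ℤ) + 1)) = Hfun M x i
          rw [Hfun_eq, Hfun_eq]
          omega
        · apply Set.mem_iUnion.2
          refine ⟨n2, ?_⟩
          rw [← Wfun_negCast (n2+1) (dyckShift^[k] x), Wfun_iterate h1 x k _] at hn2
          have harg : -((n2+1 : ℕ) : ℤ) + (k : ℤ) = i - ((n2 : ℤ) + 1) := by push_cast; omega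
          rw [harg, hik] at hn2
          show Hfun M x (i - ((n2 : ℤ) + 1)) = Hfun M x i
          rw [Hfun_eq, Hfun_eq]
          omega
      · set k : ℕ := (-i).toNat with hk
        have hik : -(k : ℤ) = i := by omega
        obtain ⟨⟨n1, hn1⟩, n2, hn2⟩ := (hx k).2
        constructor
        · apply Set.mem_iUnion.2
          refine ⟨n1, ?_⟩
          rw [← Wfun_natCast (n1+1) (shiftR^[k] x), Wfun_iterate_inv h1 h2 x k _] at hn1
          have harg : ((n1+1 : ℕ) : ℤ) - (k : ℤ) = i + ((n1 : ℤ) + 1) := by push_cast; omega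
          rw [harg, hik] at hn1
          show Hfun M x (i + ((n1 : ℤ) + 1)) = Hfun M x i
          rw [Hfun_eq, Hfun_eq]
          omega
        · apply Set.mem_iUnion.2
          refine ⟨n2, ?_⟩
          rw [← Wfun_negCast (n2+1) (shiftR^[k] x), Wfun_iterate_inv h1 h2 x k _] at hn2
          have harg : -((n2+1 : ℕ) : ℤ) - (k : ℤ) = i - ((n2 : ℤ) + 1) := by push_cast; omega
          rw [harg, hik] at hn2
          show Hfun M x (i - ((n2 : ℤ) + 1)) = Hfun M x i
          rw [Hfun_eq, Hfun_eq]
          omega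
    refine Or.inl ⟨hAz, ?_, ?_⟩
    · exact hkill _ _ measurableSet_Azero hAz (by rw [Set.inter_comm]; exact azero_inter_aalpha)
    · exact hkill _ _ measurableSet_Azero hAz (by rw [Set.inter_comm]; exact azero_inter_abeta)
  · -- c > 0 : A_α has full measure
    have hP1ne : ν P1 ≠ 0 := by
      intro h0
      rw [h0] at id1
      simp only [ENNReal.toReal_zero] at id1
      have := ENNReal.toReal_nonneg (a := ν P4)
      nlinarith [id1]
    have hP3ne : ν P3 ≠ 0 := by
      intro h0
      rw [h0] at id2
      simp only [ENNReal.toReal_zero] at id2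
      have := ENNReal.toReal_nonneg (a := ν P2)
      nlinarith [id2]
    have hAa : ν (Aalpha M) = 1 := by
      apply meas_one_of_ae ν measurableSet_Aalpha
      filter_upwards [hT1 hP1ne, hT3 hP3ne] with x hx1 hx3
      constructor
      · apply tendstoZ_top_top
        apply hx1.congr
        intro n
        exact (hWn x n).symm
      · apply tendstoZ_bot_bot
        apply tendsto_neg_bot
        apply hx3.congr
        intro n
        rw [hWneg x n, Sn_neg' shiftR (fun y => fsgn M (shiftR y)), neg_neg]
    refine Or.inr (Or.inl ⟨?_, hAa, ?_⟩)
    · exact hkill _ _ measurableSet_Aalpha hAa azero_inter_aalpha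
    · exact hkill _ _ measurableSet_Aalpha hAa
        (by rw [Set.inter_comm]; exact aalpha_inter_abeta)
end

section
/- The map ψ_α, defined on φ_α(B_α) by reconstructing the closing bracket index via the matching time s_α(i,ζ) = max{j < i+1 : H_{α,j}(ζ) = H_{α,i+1}(ζ)}, is a continuous inverse of φ_α : B_α → φ_α(B_α); in particular φ_α is a homeomorphism of B_α onto its image, and φ_α ∘ σ|_{B_α} = σ_α ∘ φ_α. -/
open Filter

/-- The alphabet `{α_1, …, α_M, β}` of the full shift `Σ_α`. -/
abbrev AlphaAlphabet (M : ℕ) := Fin M ⊕ Unit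

/-- `B_α ⊂ Σ_D`: sequences in which every right bracket is matched (closed) on the left. -/
def Balpha (M : ℕ) : Set (ℤ → DyckAlphabet M) :=
  SigmaD M ∩
    ⋂ i : ℤ, ⋃ k : Fin M,
      ({ω | ω i = Sum.inl k} ∪
        ({ω | ω i = Sum.inr k} ∩ ⋃ j : ℕ, {ω | Hfun M ω (i - j) = Hfun M ω (i + 1)}))

/-- `φ_α : B_α → Σ_α`, replacing each `β_k` by the single symbol `β`. -/
def phiAlpha (M : ℕ) (ω : ℤ → DyckAlphabet M) : ℤ → AlphaAlphabet M := fun i =>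
  match ω i with
  | Sum.inl k => Sum.inl k
  | Sum.inr _ => Sum.inr ()

/-- `+1` on `α_k`, `-1` on `β`. -/
def alphaSgn (M : ℕ) : AlphaAlphabet M → ℤ
  | Sum.inl _ => 1
  | Sum.inr _ => -1

/-- The height functions `H_{α,i}` on `Σ_α`. -/
def HfunAlpha (M : ℕ) (ζ : ℤ → AlphaAlphabet M) (i : ℤ) : ℤ :=
  if 0 ≤ i then ∑ j ∈ Finset.range i.toNat, alphaSgn M (ζ j)
  else -∑ j ∈ Finset.range (-i).toNat, alphaSgn M (ζ (i + j))

-- The matching time `s_α(i,ζ) = max {j < i+1 : H_{α,j}(ζ) = H_{α,i+1}(ζ)}`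
-- (junk value `0` if no greatest such `j` exists).
open Classical in
noncomputable def sAlpha (M : ℕ) (ζ : ℤ → AlphaAlphabet M) (i : ℤ) : ℤ :=
  if h : ∃ j, (j < i + 1 ∧ HfunAlpha M ζ j = HfunAlpha M ζ (i + 1)) ∧
      ∀ j', j' < i + 1 → HfunAlpha M ζ j' = HfunAlpha M ζ (i + 1) → j' ≤ j
  then h.choose else 0

/-- `ψ_α`, reconstructing the index of each closing bracket from the matching time. -/
noncomputable def psiAlpha (M : ℕ) [NeZero M] (ζ : ℤ → AlphaAlphabet M) :
    ℤ → DyckAlphabet M := fun i =>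
  match ζ i with
  | Sum.inl k => Sum.inl k
  | Sum.inr _ =>
    match ζ (sAlpha M ζ i) with
    | Sum.inl k => Sum.inr k
    | Sum.inr _ => Sum.inr 0

section Aux

/-! ### Stack machine lemmas -/

def runD (M : ℕ) : List (DyckAlphabet M) → List (Fin M) → Option (List (Fin M))
  | [], st => some st
  | (Sum.inl i) :: rest, st => runD M rest (i :: st)
  | (Sum.inr j) :: rest, st =>
    match st with
    | [] => runD M rest []
    | i :: s => if i = j then runD M rest s else none

lemma dyckValid_isSome {M : ℕ} (w : List (DyckAlphabet M)) (st : List (Fin M))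
    (h : dyckValid M w st = true) : (runD M w st).isSome := by
  induction w generalizing st with
  | nil => simp [runD]
  | cons a rest ih =>
    match a with
    | Sum.inl i => exact ih (i :: st) h
    | Sum.inr j =>
      match st with
      | [] => exact ih [] h
      | c :: s =>
        by_cases hc : c = j
        · simpa [runD, dyckValid, hc] using ih s (by simpa [dyckValid, hc] using h)
        · simp [dyckValid, hc] at h

lemma runD_append {M : ℕ} (w₁ w₂ : List (DyckAlphabet M)) (st : List (Fin M)) :
    runD M (w₁ ++ w₂) st = (runD M w₁ st).bind (fun s => runD M w₂ s) := by
  induction w₁ generalizing st with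
  | nil => simp [runD]
  | cons a rest ih =>
    match a with
    | Sum.inl i => simpa [runD] using ih (i :: st)
    | Sum.inr j =>
      match st with
      | [] => simpa [runD] using ih []
      | c :: s =>
        by_cases hc : c = j <;> simp [runD, hc, ih]

lemma runD_tail {M : ℕ} (w : List (DyckAlphabet M)) (st tl : List (Fin M))
    (h : ∀ m : ℕ, 0 ≤ (st.length : ℤ) + ((w.take m).map (dyckSgn M)).sum) :
    runD M w (st ++ tl) = (runD M w st).map (· ++ tl) := by
  induction w generalizing st with
  | nil => simp [runD]
  | cons a rest ih =>
    match a with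
    | Sum.inl i =>
      show runD M rest (i :: st ++ tl) = _
      rw [show (i :: st ++ tl) = (i :: st) ++ tl from rfl, ih (i :: st)]
      · rfl
      · intro m
        have := h (m + 1)
        simpa [List.take_succ_cons, dyckSgn, add_comm, add_assoc, add_left_comm] using this
    | Sum.inr j =>
      have h1 := h 1
      match st with
      | [] => simp [dyckSgn] at h1
      | c :: s =>
        by_cases hc : c = j
        · have hih := ih s (fun m => by
            have := h (m + 1)
            simp [List.take_succ_cons, dyckSgn] at this ⊢
            omega)
          simp [runD, hc, hih]
        · simp [runD, hc]

lemma runD_length {M : ℕ} (w : List (DyckAlphabet M)) (st st' : List (Fin M))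
    (h : runD M w st = some st')
    (hp : ∀ m : ℕ, 0 ≤ (st.length : ℤ) + ((w.take m).map (dyckSgn M)).sum) :
    (st'.length : ℤ) = st.length + (w.map (dyckSgn M)).sum := by
  induction w generalizing st with
  | nil => simp [runD] at h; simp [h]
  | cons a rest ih =>
    match a with
    | Sum.inl i =>
      have := ih (i :: st) h (fun m => by
        have := hp (m + 1)
        simpa [List.take_succ_cons, dyckSgn, add_comm, add_assoc, add_left_comm] using this)
      simp [dyckSgn] at this ⊢
      omega
    | Sum.inr j =>
      have h1 := hp 1
      match st with
      | [] => simp [dyckSgn] at h1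
      | c :: s =>
        by_cases hc : c = j
        · have := ih s (by simpa [runD, hc] using h) (fun m => by
            have := hp (m + 1)
            simp [List.take_succ_cons, dyckSgn] at this ⊢
            omega)
          simp [dyckSgn] at this ⊢
          omega
        · simp [runD, hc] at h

/-! ### Height function lemmas -/

def Hgen {X : Type*} (g : X → ℤ) (ω : ℤ → X) (i : ℤ) : ℤ :=
  if 0 ≤ i then ∑ j ∈ Finset.range i.toNat, g (ω j)
  else -∑ j ∈ Finset.range (-i).toNat, g (ω (i + j))

lemma Hgen_step {X : Type*} (g : X → ℤ) (ω : ℤ → X) (i : ℤ) :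
    Hgen g ω (i + 1) = Hgen g ω i + g (ω i) := by
  rcases le_or_gt 0 i with hi | hi
  · have h1 : (0:ℤ) ≤ i + 1 := by omega
    have h2 : (i + 1).toNat = i.toNat + 1 := by omega
    simp only [Hgen, if_pos hi, if_pos h1, h2, Finset.sum_range_succ]
    congr 2
    exact congrArg ω (Int.toNat_of_nonneg hi)
  · have h1 : ¬ (0:ℤ) ≤ i := by omega
    rcases eq_or_lt_of_le (by omega : i + 1 ≤ 0) with h0 | h0
    · have hi1 : i = -1 := by omega
      subst hi1
      simp [Hgen]
    · have h2 : ¬ (0:ℤ) ≤ i + 1 := by omega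
      have h3 : (-i).toNat = (-(i+1)).toNat + 1 := by omega
      simp only [Hgen, if_neg h1, if_neg h2, h3, Finset.sum_range_succ']
      have : ∀ j ∈ Finset.range (-(i+1)).toNat, g (ω (i + ↑(j + 1))) = g (ω (i + 1 + ↑j)) := by
        intro j _
        congr 1
        push_cast
        ring_nf
      rw [Finset.sum_congr rfl this]
      push_cast
      ring_nf

lemma Hgen_add {X : Type*} (g : X → ℤ) (ω : ℤ → X) (s : ℤ) (n : ℕ) :
    Hgen g ω (s + n) = Hgen g ω s + ∑ t ∈ Finset.range n, g (ω (s + t)) := by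
  induction n with
  | zero => simp
  | succ n ih =>
    have : (s + (↑(n + 1) : ℤ)) = (s + n) + 1 := by push_cast; ring
    rw [this, Hgen_step, ih, Finset.sum_range_succ, add_assoc]

lemma Hgen_eq_iff {X : Type*} (g : X → ℤ) (ω : ℤ → X) (j b : ℤ) (hj : j ≤ b) :
    Hgen g ω j = Hgen g ω b ↔ ∑ t ∈ Finset.range (b - j).toNat, g (ω (j + t)) = 0 := by
  have hb : j + ((b - j).toNat : ℤ) = b := by omega
  have h2 : Hgen g ω b = Hgen g ω j + ∑ t ∈ Finset.range (b - j).toNat, g (ω (j + t)) := by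
    conv_lhs => rw [← hb]
    rw [Hgen_add]
  rw [h2]
  omega

lemma discrete_ivt {f : ℤ → ℤ} (hstep : ∀ t, f (t + 1) ≤ f t + 1) (a c : ℤ) :
    ∀ n : ℕ, f a < c → c < f (a + n) → ∃ m : ℕ, m ≤ n ∧ f (a + m) = c := by
  intro n
  induction n with
  | zero => intro h1 h2; simp at h2; omega
  | succ n ih =>
    intro h1 h2
    rcases lt_trichotomy (f (a + n)) c with h | h | h
    · exfalso
      have := hstep (a + n)
      have he : a + (↑(n + 1) : ℤ) = (a + n) + 1 := by push_cast; ring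
      rw [he] at h2
      omega
    · exact ⟨n, by omega, h⟩
    · obtain ⟨m, hm, hfm⟩ := ih h1 h
      exact ⟨m, by omega, hfm⟩

lemma Hfun_eq (M : ℕ) (ω : ℤ → DyckAlphabet M) : Hfun M ω = Hgen (dyckSgn M) ω := rfl

lemma HfunAlpha_eq (M : ℕ) (ζ : ℤ → AlphaAlphabet M) : HfunAlpha M ζ = Hgen (alphaSgn M) ζ := rfl

/-! ### Dyck word lemmas -/

lemma dyckWord_eq (M : ℕ) (ω : ℤ → DyckAlphabet M) (j : ℤ) (n : ℕ) :
    dyckWord M ω j n = (List.range n).map (fun t : ℕ => ω (j + (t : ℤ))) := by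
  unfold dyckWord
  have : ∀ l : List ℕ, List.map (fun t : ℤ => ω (j + t)) (List.flatMap (α := ℕ) (fun a : ℕ => [(a : ℤ)]) l)
      = List.map (fun t : ℕ => ω (j + (t : ℤ))) l := by
    intro l; induction l with
    | nil => simp
    | cons a l ih => simp [ih]
  exact this (List.range n)

lemma dyckWord_snoc (M : ℕ) (ω : ℤ → DyckAlphabet M) (j : ℤ) (n : ℕ) :
    dyckWord M ω j (n + 1) = dyckWord M ω j n ++ [ω (j + n)] := by
  rw [dyckWord_eq, dyckWord_eq, List.range_succ]
  simp

lemma dyckWord_cons (M : ℕ) (ω : ℤ → DyckAlphabet M) (j : ℤ) (n : ℕ) :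
    dyckWord M ω j (n + 1) = ω j :: dyckWord M ω (j + 1) n := by
  rw [dyckWord_eq, dyckWord_eq, List.range_succ_eq_map, List.map_cons, List.map_map]
  congr 1
  · norm_num
  · apply List.map_congr_left
    intro t _
    simp only [Function.comp_apply]
    congr 1
    push_cast
    ring

lemma dyckWord_take (M : ℕ) (ω : ℤ → DyckAlphabet M) (j : ℤ) (n m : ℕ) :
    (dyckWord M ω j n).take m = dyckWord M ω j (min m n) := by
  rw [dyckWord_eq, dyckWord_eq, ← List.map_take, List.take_range]

lemma list_sum_range (f : ℕ → ℤ) (n : ℕ) :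
    (((List.range n).map f)).sum = ∑ t ∈ Finset.range n, f t := by
  induction n with
  | zero => simp
  | succ n ih => simp [List.range_succ, Finset.sum_range_succ, ih]

lemma dyckWord_sum (M : ℕ) (ω : ℤ → DyckAlphabet M) (j : ℤ) (n : ℕ) :
    ((dyckWord M ω j n).map (dyckSgn M)).sum = Hfun M ω (j + n) - Hfun M ω j := by
  rw [Hfun_eq, Hgen_add, dyckWord_eq, List.map_map]
  rw [show (dyckSgn M ∘ fun t : ℕ => ω (j + (t:ℤ))) = fun t : ℕ => dyckSgn M (ω (j + (t:ℤ))) from rfl,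
    list_sum_range (fun t => dyckSgn M (ω (j + t))) n]
  ring

/-! ### The matching lemma -/

lemma dyck_matching {M : ℕ} {ω : ℤ → DyckAlphabet M} (hω : ω ∈ Balpha M) {i : ℤ} {k : Fin M}
    (hik : ω i = Sum.inr k) :
    ∃ s : ℤ, s < i ∧ ω s = Sum.inl k ∧ Hfun M ω s = Hfun M ω (i + 1) ∧
      ∀ j, j < i + 1 → Hfun M ω j = Hfun M ω (i + 1) → j ≤ s := by
  obtain ⟨hσ, hB⟩ := hω
  have hB' : ∃ k' : Fin M, ω i = Sum.inl k' ∨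
      (ω i = Sum.inr k' ∧ ∃ j : ℕ, Hfun M ω (i - j) = Hfun M ω (i + 1)) := by
    have := hB
    simp only [Set.mem_iInter, Set.mem_iUnion, Set.mem_union, Set.mem_inter_iff,
      Set.mem_setOf_eq] at this
    exact this i
  have hstep : ∀ t, Hfun M ω (t + 1) = Hfun M ω t + dyckSgn M (ω t) := by
    intro t
    rw [Hfun_eq]
    exact Hgen_step _ _ t
  have hsgn1 : ∀ t, dyckSgn M (ω t) ≤ 1 := by
    intro t; rcases ω t with k' | k' <;> simp [dyckSgn]
  have hstep' : ∀ t, Hfun M ω (t + 1) ≤ Hfun M ω t + 1 := by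
    intro t; rw [hstep]; have := hsgn1 t; omega
  have hHi : Hfun M ω (i + 1) = Hfun M ω i - 1 := by
    rw [hstep i, hik]
    have : dyckSgn M (Sum.inr k : DyckAlphabet M) = -1 := rfl
    omega
  obtain ⟨k', hk'⟩ := hB'
  have hex : ∃ j : ℤ, j < i + 1 ∧ Hfun M ω j = Hfun M ω (i + 1) := by
    rcases hk' with h | ⟨_, j, hj⟩
    · rw [hik] at h; exact absurd h (by simp)
    · exact ⟨i - j, by omega, hj⟩
  obtain ⟨s, hsP, hsub⟩ := Int.exists_greatest_of_bdd
    ⟨i, fun z hz => Int.lt_add_one_iff.mp hz.1⟩ hex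
  have hsi : s < i := by
    rcases eq_or_lt_of_le (Int.lt_add_one_iff.mp hsP.1) with h | h
    · exfalso
      have := hsP.2
      rw [h] at this
      omega
    · exact h
  have hpos : ∀ j, s < j → j ≤ i → Hfun M ω s < Hfun M ω j := by
    intro j hj1 hj2
    by_contra hcon
    push_neg at hcon
    have hne : Hfun M ω j ≠ Hfun M ω s := by
      intro he
      have := hsub j ⟨by omega, by rw [he]; exact hsP.2⟩
      omega
    have hlt : Hfun M ω j < Hfun M ω s := lt_of_le_of_ne hcon hne
    obtain ⟨m, hm1, hm2⟩ := discrete_ivt hstep' j (Hfun M ω s) (i - j).toNat hlt (by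
      have he : j + ((i - j).toNat : ℤ) = i := by omega
      rw [he]
      have := hsP.2
      omega)
    have := hsub (j + m) ⟨by omega, by rw [hm2]; exact hsP.2⟩
    omega
  have hHs1 : Hfun M ω s < Hfun M ω (s + 1) := hpos (s + 1) (by omega) (by omega)
  obtain ⟨k₀, hk₀⟩ : ∃ k₀, ω s = Sum.inl k₀ := by
    rcases h : ω s with k₀ | k₀
    · exact ⟨k₀, rfl⟩
    · exfalso
      rw [hstep s, h] at hHs1
      simp [dyckSgn] at hHs1
  -- stack argument to show k₀ = k
  obtain ⟨n', hn'⟩ : ∃ n', (i - s).toNat = n' + 1 := ⟨(i - s).toNat - 1, by omega⟩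
  have hin : i = s + ((n' + 1 : ℕ) : ℤ) := by push_cast; omega
  have hvalid := hσ s (n' + 1 + 1)
  obtain ⟨stf, hstf⟩ := Option.isSome_iff_exists.mp (dyckValid_isSome _ _ hvalid)
  rw [dyckWord_snoc, runD_append] at hstf
  obtain ⟨st₁, hst₁, hpop⟩ := Option.bind_eq_some_iff.mp hstf
  have hpref₁ : ∀ m : ℕ,
      0 ≤ (([] : List (Fin M)).length : ℤ) + (((dyckWord M ω s (n' + 1)).take m).map (dyckSgn M)).sum := by
    intro m
    rw [dyckWord_take, dyckWord_sum]
    simp only [List.length_nil, Nat.cast_zero, zero_add]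
    rcases Nat.eq_zero_or_pos (min m (n' + 1)) with h0 | h0
    · rw [h0]
      simp
    · have := hpos (s + (min m (n' + 1) : ℕ)) (by omega) (by omega)
      omega
  have hlen : (st₁.length : ℤ) = 1 := by
    have hl := runD_length _ _ _ hst₁ hpref₁
    rw [dyckWord_sum] at hl
    rw [← hin] at hl
    have := hsP.2
    simp at hl
    omega
  have hpref₂ : ∀ m : ℕ,
      0 ≤ (([] : List (Fin M)).length : ℤ) + (((dyckWord M ω (s + 1) n').take m).map (dyckSgn M)).sum := by
    intro m
    rw [dyckWord_take, dyckWord_sum]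
    simp only [List.length_nil, Nat.cast_zero, zero_add]
    have hHs1' : Hfun M ω (s + 1) = Hfun M ω s + 1 := by
      rw [hstep s, hk₀]; simp [dyckSgn]
    rcases Nat.eq_zero_or_pos (min m n') with h0 | h0
    · rw [h0]
      simp
    · have := hpos (s + 1 + (min m n' : ℕ)) (by omega) (by omega)
      omega
  rw [dyckWord_cons, hk₀] at hst₁
  have hst₁' : runD M (dyckWord M ω (s + 1) n') ([] ++ [k₀]) = some st₁ := hst₁
  rw [runD_tail _ _ _ hpref₂] at hst₁'
  obtain ⟨st₀, hst₀, hst₀'⟩ := Option.map_eq_some_iff.mp hst₁'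
  have hst₀nil : st₀ = [] := by
    have : st₀.length + 1 = st₁.length := by rw [← hst₀']; simp
    have h0 : st₀.length = 0 := by omega
    exact List.length_eq_zero_iff.mp h0
  have hst₁k : st₁ = [k₀] := by rw [← hst₀', hst₀nil]; rfl
  have hωsn : ω (s + ((n' + 1 : ℕ) : ℤ)) = Sum.inr k := by rw [← hin]; exact hik
  rw [hst₁k, hωsn] at hpop
  have hkk : k₀ = k := by
    by_contra hne
    simp [runD, hne] at hpop
  exact ⟨s, hsi, by rw [hk₀, hkk], hsP.2, fun j h1 h2 => hsub j ⟨h1, h2⟩⟩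

/-! ### `sAlpha` lemmas -/

lemma sAlpha_eq {M : ℕ} (ζ : ℤ → AlphaAlphabet M) (i s : ℤ) (h1 : s < i + 1)
    (h2 : HfunAlpha M ζ s = HfunAlpha M ζ (i + 1))
    (h3 : ∀ j, j < i + 1 → HfunAlpha M ζ j = HfunAlpha M ζ (i + 1) → j ≤ s) :
    sAlpha M ζ i = s := by
  have hex : ∃ j, (j < i + 1 ∧ HfunAlpha M ζ j = HfunAlpha M ζ (i + 1)) ∧
      ∀ j', j' < i + 1 → HfunAlpha M ζ j' = HfunAlpha M ζ (i + 1) → j' ≤ j :=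
    ⟨s, ⟨h1, h2⟩, h3⟩
  rw [sAlpha, dif_pos hex]
  have hc := hex.choose_spec
  exact le_antisymm (h3 _ hc.1.1 hc.1.2) (hc.2 s h1 h2)

lemma sAlpha_congr {M : ℕ} (ζ ζ' : ℤ → AlphaAlphabet M) (i s : ℤ) (h1 : s < i + 1)
    (h2 : HfunAlpha M ζ s = HfunAlpha M ζ (i + 1))
    (h3 : ∀ j, j < i + 1 → HfunAlpha M ζ j = HfunAlpha M ζ (i + 1) → j ≤ s)
    (hagree : ∀ t, s ≤ t → t ≤ i → ζ' t = ζ t) :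
    sAlpha M ζ' i = s := by
  have key : ∀ j, s ≤ j → j < i + 1 →
      (HfunAlpha M ζ' j = HfunAlpha M ζ' (i + 1) ↔ HfunAlpha M ζ j = HfunAlpha M ζ (i + 1)) := by
    intro j hj1 hj2
    rw [HfunAlpha_eq, HfunAlpha_eq, Hgen_eq_iff _ _ _ _ (by omega), Hgen_eq_iff _ _ _ _ (by omega)]
    have hterm : ∀ t ∈ Finset.range (i + 1 - j).toNat,
        alphaSgn M (ζ' (j + t)) = alphaSgn M (ζ (j + t)) := by
      intro t ht
      simp only [Finset.mem_range] at ht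
      rw [hagree (j + t) (by omega) (by omega)]
    rw [Finset.sum_congr rfl hterm]
  apply sAlpha_eq
  · exact h1
  · exact (key s (le_refl s) h1).mpr h2
  · intro j hj1 hj2
    rcases le_or_gt j s with h | h
    · exact h
    · exact h3 j hj1 ((key j (by omega) hj1).mp hj2)

/-! ### `φ_α` bridges -/

lemma sgn_phi {M : ℕ} (ω : ℤ → DyckAlphabet M) (t : ℤ) :
    alphaSgn M (phiAlpha M ω t) = dyckSgn M (ω t) := by
  rcases h : ω t with k | k <;> simp [phiAlpha, alphaSgn, dyckSgn, h]

lemma HfunAlpha_phi {M : ℕ} (ω : ℤ → DyckAlphabet M) :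
    HfunAlpha M (phiAlpha M ω) = Hfun M ω := by
  funext i
  unfold HfunAlpha Hfun
  split_ifs <;> simp [sgn_phi]

lemma psi_phi {M : ℕ} [NeZero M] {ω : ℤ → DyckAlphabet M} (hω : ω ∈ Balpha M) :
    psiAlpha M (phiAlpha M ω) = ω := by
  funext i
  rcases h : ω i with k | k
  · simp [psiAlpha, phiAlpha, h]
  · obtain ⟨s, hsi, hωs, hH2, hH3⟩ := dyck_matching hω h
    have hs : sAlpha M (phiAlpha M ω) i = s := by
      apply sAlpha_eq _ i s (by omega)
      · rw [HfunAlpha_phi]; exact hH2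
      · intro j hj1 hj2
        rw [HfunAlpha_phi] at hj2
        exact hH3 j hj1 hj2
    simp [psiAlpha, phiAlpha, h, hs, hωs]

end Aux

/-- `ψ_α` is a continuous inverse of `φ_α : B_α → φ_α(B_α)`; in particular
`φ_α` is a homeomorphism of `B_α` onto its image, and `φ_α ∘ σ = σ_α ∘ φ_α` on `B_α`. -/
theorem phiAlpha_homeomorph (M : ℕ) (hM : 2 ≤ M) :
    haveI : NeZero M := ⟨by omega⟩
    Continuous (phiAlpha M) ∧
    ContinuousOn (psiAlpha M) (phiAlpha M '' Balpha M) ∧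
    (∀ ω ∈ Balpha M, psiAlpha M (phiAlpha M ω) = ω) ∧
    (∀ ζ ∈ phiAlpha M '' Balpha M, phiAlpha M (psiAlpha M ζ) = ζ) ∧
    (∃ h : Balpha M ≃ₜ (phiAlpha M '' Balpha M),
      ∀ ω : Balpha M, (h ω : ℤ → AlphaAlphabet M) = phiAlpha M ω) ∧
    (∀ ω ∈ Balpha M, phiAlpha M (dyckShift ω) = dyckShift (phiAlpha M ω)) := by
  haveI : NeZero M := ⟨by omega⟩
  -- part 1: continuity of φ_α
  have hcont1 : Continuous (phiAlpha M) := by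
    apply continuous_pi
    intro i
    have : (fun ω : ℤ → DyckAlphabet M => phiAlpha M ω i)
        = (fun x : DyckAlphabet M =>
            (match x with | Sum.inl k => Sum.inl k | Sum.inr _ => Sum.inr () : AlphaAlphabet M))
          ∘ (fun ω : ℤ → DyckAlphabet M => ω i) := rfl
    rw [this]
    exact continuous_of_discreteTopology.comp (continuous_apply i)
  -- part 3: ψ_α ∘ φ_α = id on B_α
  have hpsi : ∀ ω ∈ Balpha M, psiAlpha M (phiAlpha M ω) = ω := fun ω hω => psi_phi hω
  -- part 4
  have hphi : ∀ ζ ∈ phiAlpha M '' Balpha M, phiAlpha M (psiAlpha M ζ) = ζ := by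
    rintro ζ ⟨ω, hωB, rfl⟩
    rw [hpsi ω hωB]
  -- part 2: continuity of ψ_α on the image
  have hcont2 : ContinuousOn (psiAlpha M) (phiAlpha M '' Balpha M) := by
    rintro ζ ⟨ω, hωB, rfl⟩
    rw [continuousWithinAt_pi]
    intro i
    rw [ContinuousWithinAt, nhds_discrete, Filter.tendsto_pure]
    rcases h : ω i with k | k
    · have hζi : phiAlpha M ω i = Sum.inl k := by simp [phiAlpha, h]
      have hU : IsOpen {ζ' : ℤ → AlphaAlphabet M | ζ' i = phiAlpha M ω i} := by
        have he : {ζ' : ℤ → AlphaAlphabet M | ζ' i = phiAlpha M ω i}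
            = (fun ζ' : ℤ → AlphaAlphabet M => ζ' i) ⁻¹' {phiAlpha M ω i} := rfl
        rw [he]
        exact IsOpen.preimage (continuous_apply i) (isOpen_discrete _)
      filter_upwards [mem_nhdsWithin_of_mem_nhds
        (hU.mem_nhds (by exact rfl))] with ζ' hζ'
      simp [psiAlpha, hζ', hζi]
    · obtain ⟨s, hsi, hωs, hH2, hH3⟩ := dyck_matching hωB h
      have h2' : HfunAlpha M (phiAlpha M ω) s = HfunAlpha M (phiAlpha M ω) (i + 1) := by
        rw [HfunAlpha_phi]; exact hH2
      have h3' : ∀ j, j < i + 1 →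
          HfunAlpha M (phiAlpha M ω) j = HfunAlpha M (phiAlpha M ω) (i + 1) → j ≤ s := by
        intro j hj1 hj2
        rw [HfunAlpha_phi] at hj2
        exact hH3 j hj1 hj2
      have hs : sAlpha M (phiAlpha M ω) i = s := sAlpha_eq _ i s (by omega) h2' h3'
      have hζi : phiAlpha M ω i = Sum.inr () := by simp [phiAlpha, h]
      have hζs : phiAlpha M ω s = Sum.inl k := by simp [phiAlpha, hωs]
      have hU : IsOpen {ζ' : ℤ → AlphaAlphabet M | ∀ t ∈ Set.Icc s i, ζ' t = phiAlpha M ω t} := by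
        have he : {ζ' : ℤ → AlphaAlphabet M | ∀ t ∈ Set.Icc s i, ζ' t = phiAlpha M ω t}
            = ⋂ t ∈ Set.Icc s i, {ζ' : ℤ → AlphaAlphabet M | ζ' t = phiAlpha M ω t} := by
          ext ζ'
          simp [Set.mem_iInter]
        rw [he]
        refine (Set.finite_Icc s i).isOpen_biInter fun t _ => ?_
        have he2 : {ζ' : ℤ → AlphaAlphabet M | ζ' t = phiAlpha M ω t}
            = (fun ζ' : ℤ → AlphaAlphabet M => ζ' t) ⁻¹' {phiAlpha M ω t} := rfl
        rw [he2]
        exact IsOpen.preimage (continuous_apply t) (isOpen_discrete _)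
      have hmemU : phiAlpha M ω ∈
          {ζ' : ℤ → AlphaAlphabet M | ∀ t ∈ Set.Icc s i, ζ' t = phiAlpha M ω t} :=
        fun t _ => rfl
      filter_upwards [mem_nhdsWithin_of_mem_nhds (hU.mem_nhds hmemU)] with ζ' hζ'
      simp only [Set.mem_setOf_eq, Set.mem_Icc] at hζ'
      have hs' : sAlpha M ζ' i = s :=
        sAlpha_congr (phiAlpha M ω) ζ' i s (by omega) h2' h3'
          (fun t ht1 ht2 => hζ' t ⟨ht1, ht2⟩)
      have e1 : ζ' i = Sum.inr () := by rw [hζ' i ⟨by omega, le_refl i⟩, hζi]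
      have e2 : ζ' s = Sum.inl k := by rw [hζ' s ⟨le_refl s, by omega⟩, hζs]
      simp [psiAlpha, e1, e2, hs', hs, hζi, hζs]
  refine ⟨hcont1, hcont2, hpsi, hphi, ?_, ?_⟩
  · -- part 5: the homeomorphism
    have hmem : ∀ ζ : phiAlpha M '' Balpha M, psiAlpha M (ζ : ℤ → AlphaAlphabet M) ∈ Balpha M := by
      rintro ⟨ζ, ω, hωB, rfl⟩
      simpa [hpsi ω hωB] using hωB
    refine ⟨{
      toFun := fun ω => ⟨phiAlpha M ω, Set.mem_image_of_mem _ ω.2⟩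
      invFun := fun ζ => ⟨psiAlpha M ζ, hmem ζ⟩
      left_inv := fun ω => Subtype.ext (hpsi ω ω.2)
      right_inv := fun ζ => Subtype.ext (hphi ζ ζ.2)
      continuous_toFun := Continuous.subtype_mk (hcont1.comp continuous_subtype_val) _
      continuous_invFun := Continuous.subtype_mk
        (continuousOn_iff_continuous_restrict.mp hcont2) _ }, fun ω => rfl⟩
  · -- part 6: shift commutation
    intro ω _
    funext i
    rfl
end

section
/- Let ν be an ergodic shift-invariant probability measure on the full shift Σ_α = {α_1,...,α_M,β}^ℤ. If ν({ζ : ζ_0 = β}) < 1/2, then ν(φ_α(B_α)) = 1, where φ_α(B_α) is the image in Σ_α of the set B_α of Dyck sequences in which every right bracket is closed. -/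
open Filter

open MeasureTheory Filter Topology
open scoped ENNReal NNReal

instance {α β : Type*} [MeasurableSpace α] [MeasurableSpace β] [DiscreteMeasurableSpace α]
    [DiscreteMeasurableSpace β] : DiscreteMeasurableSpace (α ⊕ β) :=
  ⟨fun _s => measurableSet_sum_iff.2 ⟨.of_discrete, .of_discrete⟩⟩

noncomputable def maxS {X : Type*} (T : X → X) (F : X → ℝ) : ℕ → X → ℝ
  | 0 => fun _ => 0
  | n+1 => fun x => max 0 (F x + maxS T F n (T x))

lemma maxS_succ {X : Type*} (T : X → X) (F : X → ℝ) (n : ℕ) (x : X) :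
    maxS T F (n+1) x = max 0 (F x + maxS T F n (T x)) := rfl

lemma maxS_nonneg {X : Type*} (T : X → X) (F : X → ℝ) (n : ℕ) (x : X) :
    0 ≤ maxS T F n x := by
  cases n with
  | zero => simp [maxS]
  | succ n => simp [maxS]

lemma maxS_eq_sum {X : Type*} (T : X → X) (F : X → ℝ) (n : ℕ) (x : X) :
    ∃ k, maxS T F n x = ∑ j ∈ Finset.range k, F (T^[j] x) := by
  induction n generalizing x with
  | zero => exact ⟨0, by simp [maxS]⟩
  | succ n ih =>
    rcases le_or_gt (F x + maxS T F n (T x)) 0 with h | h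
    · exact ⟨0, by simp [maxS_succ, max_eq_left h]⟩
    · obtain ⟨k, hk⟩ := ih (T x)
      refine ⟨k + 1, ?_⟩
      rw [maxS_succ, max_eq_right h.le, hk, Finset.sum_range_succ']
      simp [Function.iterate_succ_apply, add_comm]

lemma maxS_measurable {X : Type*} [MeasurableSpace X] {T : X → X} {F : X → ℝ}
    (hT : Measurable T) (hF : Measurable F) (n : ℕ) : Measurable (maxS T F n) := by
  induction n with
  | zero => exact measurable_const
  | succ n ih => exact measurable_const.max (hF.add (ih.comp hT))

lemma ergodic_sums_unbounded {X : Type*} [MeasurableSpace X]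
    (ν : Measure X) [IsProbabilityMeasure ν] {T : X → X} (hT : MeasurePreserving T ν ν)
    (hme : ∀ s, MeasurableSet s → T ⁻¹' s = s → ν s = 0 ∨ ν s = 1)
    {F : X → ℝ} (hF : Measurable F) (hb : ∀ x, |F x| ≤ 1)
    (hpos : 0 < ∫ x, F x ∂ν) :
    ν {x | ∀ m : ℕ, ∃ n : ℕ, (m : ℝ) ≤ ∑ j ∈ Finset.range n, F (T^[j] x)} = 1 := by
  set S : ℕ → X → ℝ := fun n x => ∑ j ∈ Finset.range n, F (T^[j] x) with hS
  have hSm : ∀ n, Measurable (S n) := fun n =>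
    Finset.measurable_sum _ fun j _ => hF.comp (hT.measurable.iterate j)
  have hSrec : ∀ n x, S (n+1) x = F x + S n (T x) := by
    intro n x
    rw [hS]
    simp only
    rw [Finset.sum_range_succ']
    simp [Function.iterate_succ_apply, add_comm]
  set A : ℕ → Set X := fun m => ⋃ n, {x | (m : ℝ) ≤ S n x} with hA
  have hAm : ∀ m, MeasurableSet (A m) := fun m =>
    MeasurableSet.iUnion fun n => measurableSet_le measurable_const (hSm n)
  have hAanti : Antitone A := by
    intro a b hab x hx
    simp only [hA, Set.mem_iUnion, Set.mem_setOf_eq] at hx ⊢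
    obtain ⟨n, hn⟩ := hx
    exact ⟨n, le_trans (by exact_mod_cast hab) hn⟩
  set E : Set X := ⋂ m, A m with hE
  have hgoal : {x | ∀ m : ℕ, ∃ n : ℕ, (m : ℝ) ≤ ∑ j ∈ Finset.range n, F (T^[j] x)} = E := by
    ext x; simp [hE, hA, hS, Set.mem_iInter, Set.mem_iUnion]
  rw [hgoal]
  have hEm : MeasurableSet E := MeasurableSet.iInter fun m => hAm m
  have hinv : T ⁻¹' E = E := by
    ext x
    simp only [hE, hA, Set.mem_preimage, Set.mem_iInter, Set.mem_iUnion, Set.mem_setOf_eq]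
    constructor
    · intro h m
      obtain ⟨n, hn⟩ := h (m+1)
      refine ⟨n + 1, ?_⟩
      rw [hSrec]
      have h1 : (-1 : ℝ) ≤ F x := neg_le_of_abs_le (hb x)
      push_cast at hn ⊢
      linarith
    · intro h m
      obtain ⟨n, hn⟩ := h (m + 2)
      have hn1 : n ≠ 0 := by
        rintro rfl
        simp [hS] at hn
        push_cast at hn; linarith
      obtain ⟨n, rfl⟩ := Nat.exists_eq_succ_of_ne_zero hn1
      rw [hSrec] at hn
      have h1 : F x ≤ 1 := le_of_abs_le (hb x)
      refine ⟨n, ?_⟩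
      push_cast at hn ⊢
      linarith
  rcases hme E hEm hinv with h0 | h1
  · -- derive a contradiction
    exfalso
    have hto : Tendsto (fun m => ν (A m)) atTop (𝓝 0) := by
      have := tendsto_measure_iInter_atTop (μ := ν)
        (fun m => (hAm m).nullMeasurableSet) hAanti ⟨0, measure_ne_top ν _⟩
      rw [← hE] at this
      simpa [h0, Function.comp_def] using this
    set I : ℝ := ∫ x, F x ∂ν with hI
    have h2 : (0 : ℝ≥0∞) < ENNReal.ofReal (I/2) := by
      simp only [ENNReal.ofReal_pos]; linarith
    obtain ⟨m₀, hm₀⟩ := (hto.eventually_lt_const h2).exists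
    set ε : ℝ := (ν (A m₀)).toReal with hε
    have hε2 : ε < I / 2 := by
      rw [hε]
      exact (ENNReal.lt_ofReal_iff_toReal_lt (measure_ne_top ν _)).1 hm₀
    set g : ℕ → X → ℝ := fun N x => min (m₀ : ℝ) (maxS T F N x) with hg
    have hgm : ∀ N, Measurable (g N) := fun N =>
      measurable_const.min (maxS_measurable hT.measurable hF N)
    have hgb : ∀ N x, 0 ≤ g N x ∧ g N x ≤ m₀ := fun N x =>
      ⟨le_min (by positivity) (maxS_nonneg T F N x), min_le_left _ _⟩
    have hgint : ∀ N, Integrable (g N) ν := by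
      intro N
      refine Integrable.mono' (integrable_const (m₀ : ℝ)) (hgm N).aestronglyMeasurable
        (ae_of_all _ fun x => ?_)
      rw [Real.norm_eq_abs, abs_le]
      exact ⟨by linarith [(hgb N x).1, Nat.cast_nonneg (α := ℝ) m₀], (hgb N x).2⟩
    have hFint : Integrable F ν := by
      refine Integrable.mono' (integrable_const (1 : ℝ)) hF.aestronglyMeasurable
        (ae_of_all _ fun x => ?_)
      rw [Real.norm_eq_abs]; exact hb x
    have hkey : ∀ N x, F x - 2 * Set.indicator (A m₀) (fun _ => (1:ℝ)) x
        ≤ g (N+1) x - g N (T x) := by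
      intro N x
      have hind0 : (0:ℝ) ≤ Set.indicator (A m₀) (fun _ => (1:ℝ)) x :=
        Set.indicator_nonneg (fun _ _ => zero_le_one) x
      have hb1 : F x ≤ 1 := le_of_abs_le (hb x)
      have hMnn : 0 ≤ maxS T F N (T x) := maxS_nonneg T F N (T x)
      rcases lt_or_ge (maxS T F (N+1) x) (m₀ : ℝ) with h | h
      · have h1 : g (N+1) x = maxS T F (N+1) x := min_eq_right h.le
        have h2 : g N (T x) ≤ maxS T F N (T x) := min_le_right _ _
        have h3 : F x + maxS T F N (T x) ≤ maxS T F (N+1) x := by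
          rw [maxS_succ]; exact le_max_right _ _
        nlinarith
      · have hxA : x ∈ A m₀ := by
          obtain ⟨k, hk⟩ := maxS_eq_sum T F (N+1) x
          exact Set.mem_iUnion.2 ⟨k, by simp only [Set.mem_setOf_eq, hS]; rw [← hk]; exact h⟩
        have h1 : g (N+1) x = (m₀ : ℝ) := min_eq_left h
        have h2 : g N (T x) ≤ (m₀ : ℝ) := min_le_left _ _
        rw [Set.indicator_of_mem hxA]
        linarith
    have hindint : Integrable (Set.indicator (A m₀) (fun _ => (1:ℝ))) ν :=
      (integrable_const (1:ℝ)).indicator (hAm m₀)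
    have hcomp : ∀ N, ∫ x, g N (T x) ∂ν = ∫ x, g N x ∂ν := by
      intro N
      conv_rhs => rw [← hT.map_eq]
      rw [integral_map hT.measurable.aemeasurable (hgm N).aestronglyMeasurable]
    have hindI : ∫ x, Set.indicator (A m₀) (fun _ => (1:ℝ)) x ∂ν = ε := by
      rw [integral_indicator_const (1:ℝ) (hAm m₀)]; simp [hε, Measure.real]
    have hstep : ∀ N, ∫ x, g N x ∂ν + (I - 2 * ε) ≤ ∫ x, g (N+1) x ∂ν := by
      intro N
      have hcompT : Integrable (fun x => g N (T x)) ν := by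
        have := (hT.integrable_comp (hgm N).aestronglyMeasurable).2 (hgint N)
        simpa [Function.comp_def] using this
      have hsub : Integrable (fun x => F x - 2 * Set.indicator (A m₀) (fun _ => (1:ℝ)) x) ν :=
        hFint.sub (hindint.const_mul 2)
      have hcm : Integrable (fun x => 2 * Set.indicator (A m₀) (fun _ => (1:ℝ)) x) ν :=
        hindint.const_mul 2
      have h1 : ∫ x, (g N (T x) + (F x - 2 * Set.indicator (A m₀) (fun _ => (1:ℝ)) x)) ∂ν
          ≤ ∫ x, g (N+1) x ∂ν := by
        refine integral_mono (hcompT.add hsub) (hgint (N+1)) fun x => ?_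
        have := hkey N x
        simp only
        linarith
      rw [integral_add hcompT hsub, integral_sub hFint hcm, integral_const_mul, hindI,
        hcomp N] at h1
      rw [← hI] at h1
      linarith
    have hlow : ∀ N : ℕ, (N : ℝ) * (I - 2 * ε) ≤ ∫ x, g N x ∂ν := by
      intro N
      induction N with
      | zero =>
        have : g 0 = fun _ => (0:ℝ) := by
          funext x
          simp only [hg]
          exact min_eq_right (Nat.cast_nonneg m₀)
        rw [this]
        simp
      | succ N ih =>
        have := hstep N
        push_cast
        linarith
    have hup : ∀ N : ℕ, ∫ x, g N x ∂ν ≤ m₀ := by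
      intro N
      calc ∫ x, g N x ∂ν ≤ ∫ _x, (m₀ : ℝ) ∂ν :=
            integral_mono (hgint N) (integrable_const _) fun x => (hgb N x).2
        _ = m₀ := by simp
    obtain ⟨N, hN⟩ := exists_nat_gt ((m₀ : ℝ) / (I - 2 * ε))
    have hc : 0 < I - 2 * ε := by linarith
    have := hlow N
    have := hup N
    rw [div_lt_iff₀ hc] at hN
    linarith
  · exact h1


lemma alphaSgn_cases (M : ℕ) (a : AlphaAlphabet M) : alphaSgn M a = 1 ∨ alphaSgn M a = -1 := by
  rcases a with t | u
  · exact Or.inl rfl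
  · exact Or.inr rfl

lemma HfunAlpha_zero (M : ℕ) (ζ : ℤ → AlphaAlphabet M) : HfunAlpha M ζ 0 = 0 := by
  simp [HfunAlpha]

lemma HfunAlpha_step (M : ℕ) (ζ : ℤ → AlphaAlphabet M) (i : ℤ) :
    HfunAlpha M ζ (i + 1) = HfunAlpha M ζ i + alphaSgn M (ζ i) := by
  unfold HfunAlpha
  rcases le_or_gt 0 i with hi | hi
  · rw [if_pos hi, if_pos (by omega : (0:ℤ) ≤ i + 1)]
    have h1 : (i + 1).toNat = i.toNat + 1 := by omega
    rw [h1, Finset.sum_range_succ]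
    have h2 : ((i.toNat : ℕ) : ℤ) = i := by omega
    rw [h2]
  · rcases eq_or_lt_of_le (by omega : i + 1 ≤ 0) with h0 | h0
    · -- i = -1
      have hi1 : i = -1 := by omega
      subst hi1
      rw [show (-1 : ℤ) + 1 = 0 from by norm_num, if_pos le_rfl, if_neg (by norm_num),
        show ((0:ℤ)).toNat = 0 from rfl, show (-(-1):ℤ).toNat = 1 from rfl,
        Finset.sum_range_one, Finset.sum_range_zero]
      norm_num
    · rw [if_neg (by omega), if_neg (by omega)]
      have h1 : (-i).toNat = (-(i+1)).toNat + 1 := by omega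
      rw [h1, Finset.sum_range_succ']
      have hc : ∀ j ∈ Finset.range (-(i+1)).toNat,
          alphaSgn M (ζ (i + ((j + 1 : ℕ) : ℤ))) = alphaSgn M (ζ (i + 1 + (j:ℤ))) := by
        intro j _
        congr 1
        push_cast
        ring
      rw [Finset.sum_congr rfl hc]
      rw [show i + ((0:ℕ):ℤ) = i from by norm_num]
      ring

/-- The greatest position strictly left of `i` where the height is lower than at `i`,
given a witness that some such position exists. -/
lemma exists_match (M : ℕ) (ζ : ℤ → AlphaAlphabet M) (i w : ℤ) (hw : w < i)
    (hH : HfunAlpha M ζ w < HfunAlpha M ζ i) :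
    ∃ p, p < i ∧ HfunAlpha M ζ p = HfunAlpha M ζ i - 1 ∧ (∃ t, ζ p = Sum.inl t) ∧
      (∀ z, z < i → HfunAlpha M ζ z < HfunAlpha M ζ i → z ≤ p) := by
  obtain ⟨p, ⟨hpi, hpH⟩, hgr⟩ := Int.exists_greatest_of_bdd
    (P := fun z => z < i ∧ HfunAlpha M ζ z < HfunAlpha M ζ i)
    ⟨i, fun z hz => le_of_lt hz.1⟩ ⟨w, hw, hH⟩
  have h1 : HfunAlpha M ζ i ≤ HfunAlpha M ζ (p + 1) := by
    rcases eq_or_lt_of_le (by omega : p + 1 ≤ i) with h | h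
    · rw [h]
    · by_contra hcon
      have := hgr (p + 1) ⟨h, by omega⟩
      omega
  have hs := HfunAlpha_step M ζ p
  have hsgn1 : alphaSgn M (ζ p) = 1 := by
    rcases alphaSgn_cases M (ζ p) with h | h
    · exact h
    · omega
  refine ⟨p, hpi, by omega, ?_, fun z hz hzH => hgr z ⟨hz, hzH⟩⟩
  rcases hζ : ζ p with t | u
  · exact ⟨t, rfl⟩
  · rw [hζ] at hsgn1
    simp [alphaSgn] at hsgn1

/-- The stack of unmatched left-bracket positions in the window `[l, l+n)`. -/
def stkList (M : ℕ) (ζ : ℤ → AlphaAlphabet M) (l : ℤ) : ℕ → List ℤ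
  | 0 => []
  | n+1 => match ζ (l + n) with
    | Sum.inl _ => (l + n) :: stkList M ζ l n
    | Sum.inr _ => (stkList M ζ l n).tail

/-- Characterization of the stack. -/
def GoodStk (M : ℕ) (ζ : ℤ → AlphaAlphabet M) (l : ℤ) (n : ℕ) (lst : List ℤ) : Prop :=
  lst.Chain' (· > ·) ∧ ∀ k : ℤ, k ∈ lst ↔ l ≤ k ∧ k < l + n ∧ (∃ t, ζ k = Sum.inl t) ∧
    ∀ u, k < u → u ≤ l + n → HfunAlpha M ζ k < HfunAlpha M ζ u

lemma goodstk_head (M : ℕ) (ζ : ℤ → AlphaAlphabet M) (l : ℤ) (n : ℕ) (p : ℤ) (rest : List ℤ)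
    (hg : GoodStk M ζ l n (p :: rest)) :
    p < l + n ∧ HfunAlpha M ζ p = HfunAlpha M ζ (l + n) - 1 ∧
      (∀ k ∈ rest, k < p) ∧
      (∀ z, z < l + n → HfunAlpha M ζ z < HfunAlpha M ζ (l + n) → z ≤ p) := by
  obtain ⟨hchain, hmem⟩ := hg
  have hrest : ∀ k ∈ rest, k < p := by
    have hpw := (List.isChain_iff_pairwise.1 hchain)
    intro k hk
    exact List.rel_of_pairwise_cons hpw hk
  have hp := (hmem p).1 List.mem_cons_self
  obtain ⟨hlp, hpn, hpt, hpu⟩ := hp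
  have hpH : HfunAlpha M ζ p < HfunAlpha M ζ (l + n) := hpu (l + n) hpn le_rfl
  obtain ⟨q, hqn, hqH, hqt, hqgr⟩ := exists_match M ζ (l + n) p hpn hpH
  have hpq : p ≤ q := hqgr p hpn hpH
  -- q is in the list, hence q ≤ p, hence q = p
  have hqmem : q ∈ p :: rest := by
    refine (hmem q).2 ⟨le_trans hlp hpq, hqn, hqt, fun u hu1 hu2 => ?_⟩
    rcases eq_or_lt_of_le hu2 with h | h
    · rw [h]; omega
    · have := hqgr u
      by_contra hcon
      have hq2 : u ≤ q := hqgr u h (by omega)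
      omega
  have hqp : q ≤ p := by
    rcases List.mem_cons.1 hqmem with h | h
    · omega
    · exact le_of_lt (hrest q h)
  have hqep : q = p := le_antisymm hqp hpq
  subst hqep
  exact ⟨hpn, hqH, hrest, fun z hz1 hz2 => hqgr z hz1 hz2⟩

lemma stkList_good (M : ℕ) (ζ : ℤ → AlphaAlphabet M) (l : ℤ) :
    ∀ n, GoodStk M ζ l n (stkList M ζ l n) := by
  intro n
  induction n with
  | zero =>
    constructor
    · exact List.isChain_nil
    · intro k
      simp only [stkList, List.not_mem_nil, false_iff]
      rintro ⟨h1, h2, -⟩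
      push_cast at h2
      omega
  | succ n ih =>
    obtain ⟨hchain, hmem⟩ := ih
    have hstep := HfunAlpha_step M ζ (l + n)
    rcases hζ : ζ (l + (n:ℤ)) with t | u
    · -- push case
      have hsgn : alphaSgn M (ζ (l + (n:ℤ))) = 1 := by rw [hζ]; rfl
      have hlst : stkList M ζ l (n+1) = (l + (n:ℤ)) :: stkList M ζ l n := by
        simp [stkList, hζ]
      rw [hlst]
      constructor
      · show List.IsChain _ _; rw [List.isChain_cons]
        refine ⟨fun y hy => ?_, hchain⟩
        have hymem : y ∈ stkList M ζ l n := List.mem_of_mem_head? hy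
        have := (hmem y).1 hymem
        omega
      · intro k
        rw [List.mem_cons, hmem k]
        constructor
        · rintro (rfl | ⟨h1, h2, h3, h4⟩)
          · refine ⟨by omega, by push_cast; omega, ⟨t, hζ⟩, fun u hu1 hu2 => ?_⟩
            have hu : u = l + n + 1 := by push_cast at hu2 ⊢; omega
            subst hu
            omega
          · refine ⟨h1, by push_cast at h2 ⊢; omega, h3, fun u hu1 hu2 => ?_⟩
            rcases eq_or_lt_of_le hu2 with h | h
            · have hu : u = l + n + 1 := by push_cast at h ⊢; omega
              subst hu
              have := h4 (l + n) h2 le_rfl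
              omega
            · exact h4 u hu1 (by push_cast at h ⊢; omega)
        · rintro ⟨h1, h2, h3, h4⟩
          rcases eq_or_lt_of_le (show k ≤ l + n by push_cast at h2; omega) with h | h
          · exact Or.inl h
          · refine Or.inr ⟨h1, h, h3, fun u hu1 hu2 => h4 u hu1 (by push_cast; omega)⟩
    · -- pop case
      have hsgn : alphaSgn M (ζ (l + (n:ℤ))) = -1 := by rw [hζ]; rfl
      have hlst : stkList M ζ l (n+1) = (stkList M ζ l n).tail := by
        simp [stkList, hζ]
      rcases hlist : stkList M ζ l n with _ | ⟨p, rest⟩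
      · -- empty stack
        rw [hlst, hlist]
        constructor
        · exact List.isChain_nil
        · intro k
          simp only [List.tail_nil, List.not_mem_nil, false_iff]
          rintro ⟨h1, h2, ⟨t, ht⟩, h4⟩
          have hkn : k ≠ l + n := by
            rintro rfl
            rw [hζ] at ht
            cases ht
          have hk : k < l + n := by push_cast at h2; omega
          have : k ∈ stkList M ζ l n := by
            rw [hmem k]
            exact ⟨h1, hk, ⟨t, ht⟩, fun u hu1 hu2 => h4 u hu1 (by push_cast; omega)⟩
          rw [hlist] at this
          exact absurd this List.not_mem_nil
      · -- nonempty stack: pop head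
        have hgood : GoodStk M ζ l n (p :: rest) := by rw [← hlist]; exact ⟨hchain, hmem⟩
        obtain ⟨hpn, hpH, hrest, hpgr⟩ := goodstk_head M ζ l n p rest hgood
        rw [hlst, hlist]
        simp only [List.tail_cons]
        have hchain' : rest.Chain' (· > ·) := by
          rw [hlist] at hchain
          exact hchain.tail
        constructor
        · exact hchain'
        · intro k
          constructor
          · intro hk
            have hkmem : k ∈ p :: rest := List.mem_cons_of_mem p hk
            obtain ⟨h1, h2, h3, h4⟩ := (hmem k).1 (by rw [hlist]; exact hkmem)
            have hkp : k < p := hrest k hk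
            refine ⟨h1, by push_cast; omega, h3, fun u hu1 hu2 => ?_⟩
            rcases eq_or_lt_of_le hu2 with h | h
            · have hu : u = l + n + 1 := by push_cast at h ⊢; omega
              subst hu
              have hkpH : HfunAlpha M ζ k < HfunAlpha M ζ p := h4 p hkp (by omega)
              omega
            · exact h4 u hu1 (by push_cast at h ⊢; omega)
          · rintro ⟨h1, h2, ⟨t, ht⟩, h4⟩
            have hkn : k ≠ l + n := by
              rintro rfl
              rw [hζ] at ht
              cases ht
            have hk : k < l + n := by push_cast at h2; omega
            have hkmem : k ∈ p :: rest := by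
              rw [← hlist, hmem k]
              exact ⟨h1, hk, ⟨t, ht⟩, fun u hu1 hu2 => h4 u hu1 (by push_cast; omega)⟩
            rcases List.mem_cons.1 hkmem with h | h
            · -- k = p impossible: H p = H (l+n) - 1 = H (l+n+1), but H k < H(l+n+1)
              exfalso
              subst h
              have := h4 (l + n + 1) (by omega) (by push_cast; omega)
              omega
            · exact h

lemma coe_list_eq_map (l : List ℕ) :
    (do let a ← l; pure ((a:ℤ))) = List.map (fun a : ℕ => (a:ℤ)) l := by
  simp [bind_pure_comp, List.flatMap_singleton', List.map_eq_flatMap]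

lemma dyckWord_succ (M : ℕ) (ω : ℤ → DyckAlphabet M) (j : ℤ) (n : ℕ) :
    dyckWord M ω j (n+1) = ω j :: dyckWord M ω (j+1) n := by
  unfold dyckWord
  rw [coe_list_eq_map, coe_list_eq_map, List.range_succ_eq_map, List.map_cons, List.map_cons,
    List.map_map, List.map_map, List.map_map]
  simp only [Function.comp_def, Nat.cast_zero, add_zero, Nat.cast_succ]
  congr 1
  refine List.map_congr_left fun t _ => ?_
  congr 1
  ring

lemma stk_valid (M : ℕ) (ζ : ℤ → AlphaAlphabet M) (ω : ℤ → DyckAlphabet M) (typ : ℤ → Fin M)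
    (mp : ℤ → ℤ)
    (htyp : ∀ i t, ζ i = Sum.inl t → typ i = t)
    (hωl : ∀ i t, ζ i = Sum.inl t → ω i = Sum.inl t)
    (hωr : ∀ i u, ζ i = Sum.inr u → ω i = Sum.inr (typ (mp i)))
    (hmp : ∀ i, mp i < i ∧ HfunAlpha M ζ (mp i) < HfunAlpha M ζ i ∧
      ∀ z, z < i → HfunAlpha M ζ z < HfunAlpha M ζ i → z ≤ mp i) :
    ∀ (n : ℕ) (l : ℤ) (m : ℕ),
      dyckValid M (dyckWord M ω (l + m) n) ((stkList M ζ l m).map typ) = true := by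
  intro n
  induction n with
  | zero => intro l m; simp [dyckWord, dyckValid]
  | succ n ih =>
    intro l m
    rw [dyckWord_succ]
    rcases hζ : ζ (l + (m:ℤ)) with t | u
    · -- left bracket
      rw [hωl _ t hζ]
      have hlst : stkList M ζ l (m+1) = (l + (m:ℤ)) :: stkList M ζ l m := by
        simp [stkList, hζ]
      have : dyckValid M (Sum.inl t :: dyckWord M ω (l + (m:ℤ) + 1) n)
          ((stkList M ζ l m).map typ) =
          dyckValid M (dyckWord M ω (l + (m:ℤ) + 1) n) (t :: (stkList M ζ l m).map typ) := rfl
      rw [this]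
      have h2 : t :: (stkList M ζ l m).map typ = (stkList M ζ l (m+1)).map typ := by
        rw [hlst, List.map_cons, htyp _ t hζ]
      rw [h2]
      have h3 : l + (m:ℤ) + 1 = l + ((m+1 : ℕ) : ℤ) := by push_cast; ring
      rw [h3]
      exact ih l (m+1)
    · -- right bracket
      rw [hωr _ u hζ]
      have h3 : l + (m:ℤ) + 1 = l + ((m+1 : ℕ) : ℤ) := by push_cast; ring
      rcases hlist : stkList M ζ l m with _ | ⟨p, rest⟩
      · have hlst : stkList M ζ l (m+1) = [] := by
          simp [stkList, hζ, hlist]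
        have : dyckValid M (Sum.inr (typ (mp (l + (m:ℤ)))) :: dyckWord M ω (l + (m:ℤ) + 1) n)
            (([] : List ℤ).map typ) =
            dyckValid M (dyckWord M ω (l + (m:ℤ) + 1) n) [] := rfl
        rw [this, h3]
        have := ih l (m+1)
        rwa [hlst] at this
      · -- nonempty stack
        have hgood := stkList_good M ζ l m
        rw [hlist] at hgood
        obtain ⟨hpn, hpH, hrest, hpgr⟩ := goodstk_head M ζ l m p rest hgood
        obtain ⟨hmp1, hmp2, hmp3⟩ := hmp (l + (m:ℤ))
        have hpe : p = mp (l + (m:ℤ)) := by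
          have h1 : p ≤ mp (l + (m:ℤ)) := hmp3 p hpn (by omega)
          have h2 : mp (l + (m:ℤ)) ≤ p := hpgr _ hmp1 hmp2
          omega
        have hlst : stkList M ζ l (m+1) = rest := by
          simp [stkList, hζ, hlist]
        rw [List.map_cons]
        have : dyckValid M (Sum.inr (typ (mp (l + (m:ℤ)))) :: dyckWord M ω (l + (m:ℤ) + 1) n)
            (typ p :: rest.map typ) =
            if typ p = typ (mp (l + (m:ℤ))) then
              dyckValid M (dyckWord M ω (l + (m:ℤ) + 1) n) (rest.map typ) else false := rfl
        rw [this, if_pos (by rw [hpe]), h3]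
        have := ih l (m+1)
        rwa [hlst] at this

lemma Hfun_eq_of_sgn (M : ℕ) (ω : ℤ → DyckAlphabet M) (ζ : ℤ → AlphaAlphabet M)
    (hsgn : ∀ i, dyckSgn M (ω i) = alphaSgn M (ζ i)) (i : ℤ) :
    Hfun M ω i = HfunAlpha M ζ i := by
  unfold Hfun HfunAlpha
  rcases le_or_gt 0 i with h | h
  · rw [if_pos h, if_pos h]
    exact Finset.sum_congr rfl fun j _ => hsgn j
  · rw [if_neg (by omega), if_neg (by omega)]
    congr 1
    exact Finset.sum_congr rfl fun j _ => hsgn _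

lemma mem_image_of_unbounded (M : ℕ) (hM : 2 ≤ M) (ζ : ℤ → AlphaAlphabet M)
    (hE : ∀ m : ℕ, ∃ n : ℕ, HfunAlpha M ζ (-(n:ℤ)) ≤ -(m:ℤ)) :
    ζ ∈ phiAlpha M '' Balpha M := by
  classical
  -- heights are unbounded below to the left of every position
  have hlow : ∀ i c : ℤ, ∃ k, k < i ∧ HfunAlpha M ζ k < c := by
    intro i c
    set s : ℤ := ∑ u ∈ Finset.Icc i 0, ((HfunAlpha M ζ u).natAbs : ℤ) with hs
    have hs0 : 0 ≤ s := Finset.sum_nonneg fun u _ => by positivity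
    obtain ⟨n, hn⟩ := hE (1 + c.natAbs + s.toNat)
    have hcast : ((1 + c.natAbs + s.toNat : ℕ) : ℤ) = 1 + c.natAbs + s := by
      push_cast; omega
    rw [hcast] at hn
    refine ⟨-(n:ℤ), ?_, by omega⟩
    by_contra hcon
    push_neg at hcon
    have hmem : -(n:ℤ) ∈ Finset.Icc i 0 := Finset.mem_Icc.2 ⟨hcon, by omega⟩
    have hle : ((HfunAlpha M ζ (-(n:ℤ))).natAbs : ℤ) ≤ s := by
      rw [hs]
      exact Finset.single_le_sum (f := fun u => ((HfunAlpha M ζ u).natAbs : ℤ))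
        (fun u _ => by positivity) hmem
    omega
  have hmpex : ∀ i : ℤ, ∃ p, p < i ∧ HfunAlpha M ζ p = HfunAlpha M ζ i - 1 ∧
      (∃ t, ζ p = Sum.inl t) ∧
      (∀ z, z < i → HfunAlpha M ζ z < HfunAlpha M ζ i → z ≤ p) := by
    intro i
    obtain ⟨w, h1, h2⟩ := hlow i (HfunAlpha M ζ i)
    exact exists_match M ζ i w h1 h2
  choose mp hmp1 hmp2 hmp3 hmp4 using hmpex
  set z0 : Fin M := ⟨0, by omega⟩ with hz0
  set typ : ℤ → Fin M := fun k => Sum.elim id (fun _ => z0) (ζ k) with htypdef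
  set ω : ℤ → DyckAlphabet M :=
    fun i => Sum.elim Sum.inl (fun _ => Sum.inr (typ (mp i))) (ζ i) with hωdef
  have htyp : ∀ i t, ζ i = Sum.inl t → typ i = t := by
    intro i t h; simp [htypdef, h]
  have hωl : ∀ i t, ζ i = Sum.inl t → ω i = Sum.inl t := by
    intro i t h; simp [hωdef, h]
  have hωr : ∀ i u, ζ i = Sum.inr u → ω i = Sum.inr (typ (mp i)) := by
    intro i u h; simp [hωdef, h]
  have hsgn : ∀ i, dyckSgn M (ω i) = alphaSgn M (ζ i) := by
    intro i
    rcases hζ : ζ i with t | u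
    · rw [hωl i t hζ]; rfl
    · rw [hωr i u hζ]; rfl
  have hHeq : ∀ i, Hfun M ω i = HfunAlpha M ζ i := Hfun_eq_of_sgn M ω ζ hsgn
  have hmpall : ∀ i, mp i < i ∧ HfunAlpha M ζ (mp i) < HfunAlpha M ζ i ∧
      ∀ z, z < i → HfunAlpha M ζ z < HfunAlpha M ζ i → z ≤ mp i := by
    intro i
    refine ⟨hmp1 i, ?_, hmp4 i⟩
    have := hmp2 i
    omega
  refine ⟨ω, ⟨?_, ?_⟩, ?_⟩
  · -- ω ∈ SigmaD
    intro j n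
    have := stk_valid M ζ ω typ mp htyp hωl hωr hmpall n j 0
    simpa [stkList] using this
  · -- matching condition
    rw [Set.mem_iInter]
    intro i
    rw [Set.mem_iUnion]
    rcases hζ : ζ i with t | u
    · exact ⟨t, Or.inl (hωl i t hζ)⟩
    · refine ⟨typ (mp i), Or.inr ⟨hωr i u hζ, ?_⟩⟩
      rw [Set.mem_iUnion]
      refine ⟨(i - mp i).toNat, ?_⟩
      have h1 : mp i < i := hmp1 i
      have h2 : i - ((i - mp i).toNat : ℤ) = mp i := by omega
      simp only [Set.mem_setOf_eq]
      rw [h2, hHeq, hHeq]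
      have h3 := HfunAlpha_step M ζ i
      have h4 : alphaSgn M (ζ i) = -1 := by rw [hζ]; rfl
      have h5 := hmp2 i
      omega
  · -- phiAlpha ω = ζ
    funext i
    rcases hζ : ζ i with t | u
    · simp [phiAlpha, hωl i t hζ]
    · simp [phiAlpha, hωr i u hζ, hζ]

lemma HfunAlpha_neg (M : ℕ) (ζ : ℤ → AlphaAlphabet M) (n : ℕ) :
    HfunAlpha M ζ (-(n:ℤ)) = - ∑ j ∈ Finset.range n, alphaSgn M (ζ (-(n:ℤ) + j)) := by
  cases n with
  | zero => simp [HfunAlpha]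
  | succ n =>
    unfold HfunAlpha
    rw [if_neg (by push_cast; omega)]
    have h : (-(-((n+1:ℕ):ℤ))).toNat = n + 1 := by omega
    rw [h]

open MeasureTheory in
/-- if `ν` is an ergodic shift-invariant probability measure on the full
shift `Σ_α = {α_1,…,α_M,β}^ℤ` with `ν({ζ : ζ_0 = β}) < 1/2`, then `ν(φ_α(B_α)) = 1`. -/
theorem measure_image_Balpha_eq_one (M : ℕ) (hM : 2 ≤ M)
    (ν : Measure (ℤ → AlphaAlphabet M)) [IsProbabilityMeasure ν]
    (herg : Ergodic (dyckShift (α := AlphaAlphabet M)) ν)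
    (hβ : ν {ζ | ζ 0 = Sum.inr ()} < 1 / 2) :
    ν (phiAlpha M '' Balpha M) = 1 := by
  classical
  set T' : (ℤ → AlphaAlphabet M) → (ℤ → AlphaAlphabet M) := fun ζ i => ζ (i - 1) with hT'def
  have hT'm : Measurable T' := measurable_pi_lambda _ fun i => measurable_pi_apply (i - 1)
  have hid : ∀ ζ, T' (dyckShift ζ) = ζ := by
    intro ζ; funext i; simp [hT'def, dyckShift]
  have hpre : ∀ s : Set (ℤ → AlphaAlphabet M), dyckShift ⁻¹' (T' ⁻¹' s) = s := by
    intro s; ext ζ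
    simp only [Set.mem_preimage, hid ζ]
  have hT' : MeasurePreserving T' ν ν := by
    refine ⟨hT'm, ?_⟩
    refine Measure.ext fun s hs => ?_
    rw [Measure.map_apply hT'm hs]
    have h1 := herg.toMeasurePreserving.measure_preimage
      ((hT'm hs).nullMeasurableSet)
    rw [hpre] at h1
    exact h1.symm
  have hme : ∀ s, MeasurableSet s → T' ⁻¹' s = s → ν s = 0 ∨ ν s = 1 := by
    intro s hs hinv
    have h2 := hpre s
    rw [hinv] at h2
    rcases herg.toPreErgodic.ae_empty_or_univ hs h2 with h | h
    · exact Or.inl (ae_eq_empty.mp h)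
    · right
      rw [measure_congr h, measure_univ]
  set B : Set (ℤ → AlphaAlphabet M) := {ζ | ζ (-1) = Sum.inr ()} with hBdef
  have hBm : MeasurableSet B := measurable_pi_apply (-1) (measurableSet_singleton _)
  set F : (ℤ → AlphaAlphabet M) → ℝ := fun ζ => ((alphaSgn M (ζ (-1)) : ℤ) : ℝ) with hFdef
  have hFm : Measurable F :=
    (Measurable.of_discrete (f := fun a : AlphaAlphabet M => ((alphaSgn M a : ℤ) : ℝ))).comp
      (measurable_pi_apply (-1))
  have hFb : ∀ ζ, |F ζ| ≤ 1 := by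
    intro ζ
    rcases alphaSgn_cases M (ζ (-1)) with h | h <;> simp [hFdef, h]
  have hFeq : F = fun ζ => 1 - 2 * Set.indicator B (fun _ => (1:ℝ)) ζ := by
    funext ζ
    rcases hζ : ζ (-1) with t | u
    · have hnb : ζ ∉ B := by simp [hBdef, hζ]
      simp [hFdef, hζ, Set.indicator_of_notMem hnb, alphaSgn]
    · rcases u
      have hb : ζ ∈ B := by simp [hBdef, hζ]
      simp only [hFdef, hζ, Set.indicator_of_mem hb, alphaSgn]
      norm_num
  have hBB : ν B = ν {ζ | ζ 0 = Sum.inr ()} := by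
    have h : B = T' ⁻¹' {ζ | ζ 0 = Sum.inr ()} := by
      ext ζ
      simp only [hBdef, Set.mem_setOf_eq, Set.mem_preimage, hT'def]
      norm_num
    rw [h]
    exact hT'.measure_preimage
      ((measurable_pi_apply 0 (measurableSet_singleton _)).nullMeasurableSet)
  have htr : (ν B).toReal < 1/2 := by
    have h1 : ν B < 1/2 := hBB ▸ hβ
    have h2 := ENNReal.toReal_strict_mono (by norm_num) h1
    rwa [show ((1:ℝ≥0∞)/2).toReal = 1/2 by norm_num] at h2
  haveI hfin : IsFiniteMeasure ν := ⟨by rw [measure_univ]; exact ENNReal.one_lt_top⟩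
  have hpos : 0 < ∫ ζ, F ζ ∂ν := by
    rw [hFeq, integral_sub (integrable_const 1)
      (((integrable_const (1:ℝ)).indicator hBm).const_mul 2), integral_const,
      integral_const_mul, integral_indicator_const (1:ℝ) hBm]
    simp only [Measure.real, measure_univ, ENNReal.toReal_one, one_smul, smul_eq_mul, mul_one]
    linarith
  have hE1 := ergodic_sums_unbounded ν hT' hme hFm hFb hpos
  have hiter : ∀ (j : ℕ) (ζ : ℤ → AlphaAlphabet M) (i : ℤ), (T'^[j] ζ) i = ζ (i - j) := by
    intro j
    induction j with
    | zero => intro ζ i; simp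
    | succ j ih =>
      intro ζ i
      rw [Function.iterate_succ_apply', hT'def]
      simp only
      rw [ih]
      congr 1
      push_cast
      ring
  have hsub : {x | ∀ m : ℕ, ∃ n : ℕ, (m : ℝ) ≤ ∑ j ∈ Finset.range n, F (T'^[j] x)}
      ⊆ phiAlpha M '' Balpha M := by
    intro ζ hζ
    refine mem_image_of_unbounded M hM ζ fun m => ?_
    obtain ⟨n, hn⟩ := hζ m
    refine ⟨n, ?_⟩
    have hsum : ∑ j ∈ Finset.range n, F (T'^[j] ζ)
        = ((∑ j ∈ Finset.range n, alphaSgn M (ζ (-1 - (j:ℤ))) : ℤ) : ℝ) := by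
      push_cast
      refine Finset.sum_congr rfl fun j _ => ?_
      rw [hFdef]
      simp only
      rw [hiter j ζ (-1)]
    rw [hsum] at hn
    have hn' : (m:ℤ) ≤ ∑ j ∈ Finset.range n, alphaSgn M (ζ (-1 - (j:ℤ))) := by
      exact_mod_cast hn
    have hrefl := Finset.sum_range_reflect (fun j : ℕ => alphaSgn M (ζ (-(n:ℤ) + j))) n
    have hco : ∀ j ∈ Finset.range n,
        alphaSgn M (ζ (-(n:ℤ) + ((n - 1 - j : ℕ) : ℤ))) = alphaSgn M (ζ (-1 - (j:ℤ))) := by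
      intro j hj
      have hjn := Finset.mem_range.1 hj
      congr 2
      omega
    rw [Finset.sum_congr rfl hco] at hrefl
    rw [HfunAlpha_neg M ζ n, ← hrefl]
    exact neg_le_neg hn'
  refine le_antisymm (le_trans (measure_mono (Set.subset_univ _)) measure_univ.le) ?_
  calc (1:ℝ≥0∞) = ν {x | ∀ m : ℕ, ∃ n : ℕ, (m : ℝ) ≤ ∑ j ∈ Finset.range n, F (T'^[j] x)} :=
        hE1.symm
    _ ≤ ν (phiAlpha M '' Balpha M) := measure_mono hsub
end
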